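/- arXiv:2307.14496 — 7 statements merged into one kernel-verified Lean document; each statement's English description precedes it below -/
import Mathlib

section
/- Let $A$ and $B$ be real symmetric $n\times n$ matrices. Then for all $1\le i\le n$, the $i$-th smallest eigenvalue of $A+B$ is at least the $i$-th smallest eigenvalue of $A$ plus the smallest eigenvalue of $B$. -/
open Matrix Polynomial
open scoped InnerProductSpace

namespace WeylAux
variable {n : ℕ}

lemma charpoly_conj (P Q N : Matrix (Fin n) (Fin n) ℝ) (hPQ : P * Q = 1) :
    (P * N * Q).charpoly = N.charpoly := by
  have h1 : (C : ℝ →+* ℝ[X]).mapMatrix P * (C : ℝ →+* ℝ[X]).mapMatrix Q = 1 := by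
    rw [← _root_.map_mul, hPQ, _root_.map_one]
  have hmat : charmatrix (P * N * Q)
      = (C : ℝ →+* ℝ[X]).mapMatrix P * charmatrix N * (C : ℝ →+* ℝ[X]).mapMatrix Q := by
    unfold charmatrix
    rw [mul_sub, sub_mul]
    congr 1
    · rw [mul_assoc, (scalar_commute (X : ℝ[X]) (Commute.all X) _).eq, ← mul_assoc, h1, one_mul]
    · rw [_root_.map_mul, _root_.map_mul]
  have hdet : ((C : ℝ →+* ℝ[X]).mapMatrix P).det * ((C : ℝ →+* ℝ[X]).mapMatrix Q).det = 1 := by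
    rw [← det_mul, h1, det_one]
  rw [Matrix.charpoly, Matrix.charpoly, hmat, det_mul, det_mul]
  linear_combination (charmatrix N).det * hdet

lemma charpoly_diagonal (d : Fin n → ℝ) :
    (Matrix.diagonal d).charpoly = ∏ i, (X - C (d i)) := by
  have h : charmatrix (Matrix.diagonal d) = Matrix.diagonal (fun i => X - C (d i)) := by
    refine Matrix.ext fun i j => ?_
    by_cases h : i = j
    · subst h; simp [charmatrix_apply_eq]
    · simp [charmatrix_apply_ne _ _ _ h, Matrix.diagonal_apply_ne _ h]
  rw [Matrix.charpoly, h, det_diagonal]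

lemma charpoly_hermitian (M : Matrix (Fin n) (Fin n) ℝ) (hM : M.IsHermitian) :
    M.charpoly = ∏ i, (X - C (hM.eigenvalues i)) := by
  conv_lhs => rw [hM.spectral_theorem]
  rw [Unitary.conjStarAlgAut_apply]
  rw [charpoly_conj _ _ _ (mem_unitaryGroup_iff.mp hM.eigenvectorUnitary.2)]
  have : (RCLike.ofReal ∘ hM.eigenvalues : Fin n → ℝ) = hM.eigenvalues := by
    ext j; simp
  rw [this, charpoly_diagonal]

lemma multiset_map_eq {f g : Fin n → ℝ}
    (h : ∏ i, (X - C (f i)) = ∏ i, (X - C (g i))) :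
    Multiset.map f Finset.univ.val = Multiset.map g Finset.univ.val := by
  have key : ∀ u : Fin n → ℝ,
      (∏ i, (X - C (u i))).roots = Multiset.map u Finset.univ.val := by
    intro u
    have h2 := Polynomial.roots_multiset_prod_X_sub_C (Multiset.map u Finset.univ.val)
    rw [Multiset.map_map] at h2
    simpa [Finset.prod] using h2
  rw [← key f, ← key g, h]

lemma count_eq {f g : Fin n → ℝ}
    (hfg : Multiset.map f Finset.univ.val = Multiset.map g Finset.univ.val)
    (p : ℝ → Prop) [DecidablePred p] :
    (Finset.univ.filter (fun j => p (f j))).card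
      = (Finset.univ.filter (fun j => p (g j))).card := by
  have h := congrArg (Multiset.countP p) hfg
  rw [Multiset.countP_map, Multiset.countP_map] at h
  simpa [Finset.card, Finset.filter, Multiset.countP_eq_card_filter, Function.comp] using h


variable {n : ℕ}

lemma apply_basis (M : Matrix (Fin n) (Fin n) ℝ) (hM : M.IsHermitian) (j : Fin n) :
    toEuclideanLin M (hM.eigenvectorBasis j) = hM.eigenvalues j • hM.eigenvectorBasis j := by
  have h := hM.mulVec_eigenvectorBasis j
  apply PiLp.ext
  intro k
  have := congrFun h k
  simpa [toEuclideanLin_apply] using this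

lemma repr_apply (M : Matrix (Fin n) (Fin n) ℝ) (hM : M.IsHermitian)
    (x : EuclideanSpace ℝ (Fin n)) (j : Fin n) :
    hM.eigenvectorBasis.repr (toEuclideanLin M x) j
      = hM.eigenvalues j * hM.eigenvectorBasis.repr x j := by
  rw [OrthonormalBasis.repr_apply_apply, OrthonormalBasis.repr_apply_apply,
    ← (isHermitian_iff_isSymmetric.mp hM) (hM.eigenvectorBasis j) x,
    apply_basis M hM j, real_inner_smul_left]

lemma inner_self_eq (b : OrthonormalBasis (Fin n) ℝ (EuclideanSpace ℝ (Fin n)))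
    (x : EuclideanSpace ℝ (Fin n)) :
    ⟪x, x⟫_ℝ = ∑ j, (b.repr x j)^2 := by
  rw [← b.repr.inner_map_map x x]
  simp only [PiLp.inner_apply, RCLike.inner_apply, starRingEnd_apply, star_trivial, sq]

lemma inner_quadform (M : Matrix (Fin n) (Fin n) ℝ) (hM : M.IsHermitian)
    (x : EuclideanSpace ℝ (Fin n)) :
    ⟪x, toEuclideanLin M x⟫_ℝ
      = ∑ j, hM.eigenvalues j * (hM.eigenvectorBasis.repr x j)^2 := by
  rw [← hM.eigenvectorBasis.repr.inner_map_map x (toEuclideanLin M x)]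
  simp only [PiLp.inner_apply, RCLike.inner_apply, starRingEnd_apply, star_trivial]
  refine Finset.sum_congr rfl fun j _ => ?_
  rw [repr_apply M hM x j]; ring

lemma finrank_span_basis (b : OrthonormalBasis (Fin n) ℝ (EuclideanSpace ℝ (Fin n)))
    (S : Finset (Fin n)) :
    Module.finrank ℝ (Submodule.span ℝ (⇑b '' ↑S)) = S.card := by
  have hli : LinearIndependent ℝ (fun j : (S : Set (Fin n)) => b j) :=
    b.orthonormal.linearIndependent.comp _ Subtype.val_injective
  have hr : Set.range (fun j : (S : Set (Fin n)) => b j) = ⇑b '' ↑S := by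
    ext y; simp
  rw [← hr, finrank_span_eq_card hli]; simp

lemma repr_eq_zero_of_mem_span (b : OrthonormalBasis (Fin n) ℝ (EuclideanSpace ℝ (Fin n)))
    (S : Finset (Fin n)) {x : EuclideanSpace ℝ (Fin n)}
    (hx : x ∈ Submodule.span ℝ (⇑b '' ↑S)) {j : Fin n} (hj : j ∉ S) :
    b.repr x j = 0 := by
  rw [← b.coe_toBasis] at hx
  have hsupp := (Module.Basis.mem_span_image b.toBasis).mp hx
  rw [← b.coe_toBasis_repr_apply]
  by_contra h
  exact hj (hsupp (Finsupp.mem_support_iff.mpr h))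

end WeylAux


open WeylAux

/-- **Weyl's inequality.** Let `A`, `B` be real symmetric `n × n` matrices,
and let `α`, `β`, `γ` be nondecreasing enumerations of the eigenvalues (with multiplicity)
of `A`, `B`, `A + B` respectively. Then for every `i`, the `i`-th smallest eigenvalue of
`A + B` is at least the `i`-th smallest eigenvalue of `A` plus the smallest eigenvalue of
`B`: `γ i ≥ α i + β 0`. -/
theorem weyl_inequality {n : ℕ} (hn : 0 < n) (A B : Matrix (Fin n) (Fin n) ℝ)
    (hA : A.IsSymm) (hB : B.IsSymm)
    (α β γ : Fin n → ℝ) (hα : Monotone α) (hβ : Monotone β) (hγ : Monotone γ)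
    (hcA : A.charpoly = ∏ i, (X - C (α i)))
    (hcB : B.charpoly = ∏ i, (X - C (β i)))
    (hcAB : (A + B).charpoly = ∏ i, (X - C (γ i))) :
    ∀ i : Fin n, α i + β ⟨0, hn⟩ ≤ γ i := by
  intro i
  by_contra hcon
  push_neg at hcon
  -- Hermitian versions
  have hA' : A.IsHermitian := by
    show Aᴴ = A
    have h : Aᴴ = Aᵀ := by ext k l; simp [conjTranspose_apply]
    rw [h]; exact hA
  have hB' : B.IsHermitian := by
    show Bᴴ = B
    have h : Bᴴ = Bᵀ := by ext k l; simp [conjTranspose_apply]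
    rw [h]; exact hB
  have hC' : (A + B).IsHermitian := hA'.add hB'
  -- multiset equalities
  have hmA : Multiset.map hA'.eigenvalues Finset.univ.val = Multiset.map α Finset.univ.val :=
    multiset_map_eq ((charpoly_hermitian A hA').symm.trans hcA)
  have hmB : Multiset.map hB'.eigenvalues Finset.univ.val = Multiset.map β Finset.univ.val :=
    multiset_map_eq ((charpoly_hermitian B hB').symm.trans hcB)
  have hmC : Multiset.map hC'.eigenvalues Finset.univ.val = Multiset.map γ Finset.univ.val :=
    multiset_map_eq ((charpoly_hermitian (A + B) hC').symm.trans hcAB)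
  -- all eigenvalues of B are ≥ β 0
  have hBev : ∀ j, β ⟨0, hn⟩ ≤ hB'.eigenvalues j := by
    intro j
    have hmem : hB'.eigenvalues j ∈ Multiset.map β Finset.univ.val := by
      rw [← hmB]
      exact Multiset.mem_map_of_mem _ (Finset.mem_val.mpr (Finset.mem_univ j))
    obtain ⟨k, _, hk⟩ := Multiset.mem_map.mp hmem
    rw [← hk]
    exact hβ (by simp [Fin.le_def])
  -- global lower bound for B
  have hBlow : ∀ x : EuclideanSpace ℝ (Fin n),
      β ⟨0, hn⟩ * ⟪x, x⟫_ℝ ≤ ⟪x, toEuclideanLin B x⟫_ℝ := by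
    intro x
    rw [inner_quadform B hB', inner_self_eq hB'.eigenvectorBasis x, Finset.mul_sum]
    refine Finset.sum_le_sum fun j _ => ?_
    have := hBev j
    nlinarith [sq_nonneg (hB'.eigenvectorBasis.repr x j)]
  -- subspaces
  set S : Finset (Fin n) := Finset.univ.filter (fun j => α i ≤ hA'.eigenvalues j) with hS
  set T : Finset (Fin n) := Finset.univ.filter (fun j => hC'.eigenvalues j ≤ γ i) with hT
  set W := Submodule.span ℝ (⇑hA'.eigenvectorBasis '' ↑S) with hW
  set V := Submodule.span ℝ (⇑hC'.eigenvectorBasis '' ↑T) with hV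
  -- cardinalities
  have hScard : n - i.1 ≤ S.card := by
    rw [hS, count_eq hmA (fun t => α i ≤ t)]
    calc n - i.1 = (Finset.Ici i).card := (Fin.card_Ici i).symm
      _ ≤ _ := Finset.card_le_card fun j hj => by
          simp only [Finset.mem_filter, Finset.mem_univ, true_and]
          exact hα (Finset.mem_Ici.mp hj)
  have hTcard : i.1 + 1 ≤ T.card := by
    rw [hT, count_eq hmC (fun t => t ≤ γ i)]
    calc i.1 + 1 = (Finset.Iic i).card := (Fin.card_Iic i).symm
      _ ≤ _ := Finset.card_le_card fun j hj => by
          simp only [Finset.mem_filter, Finset.mem_univ, true_and]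
          exact hγ (Finset.mem_Iic.mp hj)
  -- dimension count
  have hdim : 0 < Module.finrank ℝ ↥(V ⊓ W) := by
    have hsum := Submodule.finrank_sup_add_finrank_inf_eq V W
    have h1 : Module.finrank ℝ ↥(V ⊔ W) ≤ n := by
      have := Submodule.finrank_le (V ⊔ W)
      rwa [finrank_euclideanSpace_fin] at this
    have hWr : Module.finrank ℝ ↥W = S.card := finrank_span_basis _ S
    have hVr : Module.finrank ℝ ↥V = T.card := finrank_span_basis _ T
    have hin : i.1 < n := i.2
    omega
  haveI : Nontrivial ↥(V ⊓ W) := Module.finrank_pos_iff.mp hdim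
  obtain ⟨y, hy⟩ := exists_ne (0 : ↥(V ⊓ W))
  set x : EuclideanSpace ℝ (Fin n) := (y : EuclideanSpace ℝ (Fin n)) with hx
  have hx0 : x ≠ 0 := fun h => hy (Subtype.ext h)
  have hxV : x ∈ V := y.2.1
  have hxW : x ∈ W := y.2.2
  -- quadratic form bounds
  have h1 : α i * ⟪x, x⟫_ℝ ≤ ⟪x, toEuclideanLin A x⟫_ℝ := by
    rw [inner_quadform A hA', inner_self_eq hA'.eigenvectorBasis x, Finset.mul_sum]
    refine Finset.sum_le_sum fun j _ => ?_
    by_cases hj : j ∈ S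
    · have hαj : α i ≤ hA'.eigenvalues j := (Finset.mem_filter.mp hj).2
      nlinarith [sq_nonneg (hA'.eigenvectorBasis.repr x j)]
    · rw [repr_eq_zero_of_mem_span _ S hxW hj]
      simp
  have h3 : ⟪x, toEuclideanLin (A + B) x⟫_ℝ ≤ γ i * ⟪x, x⟫_ℝ := by
    rw [inner_quadform (A + B) hC', inner_self_eq hC'.eigenvectorBasis x, Finset.mul_sum]
    refine Finset.sum_le_sum fun j _ => ?_
    by_cases hj : j ∈ T
    · have hγj : hC'.eigenvalues j ≤ γ i := (Finset.mem_filter.mp hj).2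
      nlinarith [sq_nonneg (hC'.eigenvectorBasis.repr x j)]
    · rw [repr_eq_zero_of_mem_span _ T hxV hj]
      simp
  have h2 := hBlow x
  have h4 : ⟪x, toEuclideanLin (A + B) x⟫_ℝ
      = ⟪x, toEuclideanLin A x⟫_ℝ + ⟪x, toEuclideanLin B x⟫_ℝ := by
    rw [_root_.map_add, LinearMap.add_apply, inner_add_right]
  have h5 : 0 < ⟪x, x⟫_ℝ := by
    rcases lt_or_eq_of_le (real_inner_self_nonneg (x := x)) with h | h
    · exact h
    · exact absurd (inner_self_eq_zero.mp h.symm) hx0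
  nlinarith
end

section
/- Let $G=(V,E)$ be a finite graph with Laplacian $L(G)$ and let $\eta(I(G))$ denote the homological connectivity of the independence complex, i.e., the maximal $k$ such that $\tilde H_i(I(G);\mathbb{R})=0$ for all $i\le k-2$. Then $\eta(I(G))\ge |V|/\lambda_{\max}(L(G))$, where $\lambda_{\max}(L(G))$ is the largest Laplacian eigenvalue of $G$. -/
set_option linter.unusedSectionVars false
set_option linter.unusedVariables false
set_option maxHeartbeats 1600000

open Matrix Polynomial Finset

variable {V : Type*} [Fintype V] [DecidableEq V] [LinearOrder V]

/-- Faces of the independence complex of `G` of cardinality `k`. -/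
abbrev SimpleGraph.indepFace (G : SimpleGraph V) [DecidableRel G.Adj] (k : ℕ) :=
  {σ : Finset V // σ.card = k ∧ ∀ u ∈ σ, ∀ v ∈ σ, ¬ G.Adj u v}

/-- The simplicial boundary matrix of the independence complex. -/
noncomputable def SimpleGraph.indepBoundary (G : SimpleGraph V) [DecidableRel G.Adj] (k : ℕ) :
    Matrix (G.indepFace k) (G.indepFace (k+1)) ℝ :=
  Matrix.of fun σ τ =>
    if σ.1 ⊆ τ.1 then ∑ v ∈ τ.1 \ σ.1, (-1 : ℝ) ^ ((τ.1.filter (· < v)).card) else 0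

/-- `dim H̃_k(I(G); ℝ)`. -/
noncomputable def SimpleGraph.indepHomologyDim (G : SimpleGraph V) [DecidableRel G.Adj]
    (k : ℕ) : ℕ :=
  Module.finrank ℝ (LinearMap.ker (G.indepBoundary k).mulVecLin) -
    Module.finrank ℝ (LinearMap.range (G.indepBoundary (k+1)).mulVecLin)

namespace ABMaux

variable {n : ℕ} (G : SimpleGraph (Fin n)) [DecidableRel G.Adj]

abbrev Ind (s : Finset (Fin n)) : Prop := ∀ u ∈ s, ∀ v ∈ s, ¬ G.Adj u v

def Face (j : ℕ) : Finset (Finset (Fin n)) :=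
  Finset.univ.filter (fun s => s.card = j ∧ Ind G s)

lemma mem_Face {j : ℕ} {s : Finset (Fin n)} : s ∈ Face G j ↔ s.card = j ∧ Ind G s := by
  simp [Face]

lemma Ind.mono {s t : Finset (Fin n)} (ht : Ind G t) (hst : s ⊆ t) : Ind G s :=
  fun u hu v hv => ht u (hst hu) v (hst hv)

noncomputable def sg (s : Finset (Fin n)) (v : Fin n) : ℝ :=
  (-1) ^ ((s.filter (· < v)).card)

lemma sg_mul_self (s : Finset (Fin n)) (v : Fin n) : sg s v * sg s v = 1 := by
  rw [sg, ← pow_add]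
  exact Even.neg_one_pow ⟨_, rfl⟩

lemma filter_lt_insert_self (s : Finset (Fin n)) (v : Fin n) :
    (insert v s).filter (· < v) = s.filter (· < v) := by
  rw [Finset.filter_insert, if_neg (lt_irrefl v)]

/-- flag property -/
lemma ind_insert_insert {s : Finset (Fin n)} {v u : Fin n} (hvu : ¬ G.Adj v u)
    (hv : Ind G (insert v s)) (hu : Ind G (insert u s)) :
    Ind G (insert v (insert u s)) := by
  intro a ha b hb
  simp only [Finset.mem_insert] at ha hb
  rcases ha with rfl | rfl | ha <;> rcases hb with rfl | rfl | hb
  · exact fun h => G.irrefl h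
  · exact hvu
  · exact hv a (Finset.mem_insert_self _ _) b (Finset.mem_insert_of_mem hb)
  · exact fun h => hvu (G.adj_symm h)
  · exact fun h => G.irrefl h
  · exact hu a (Finset.mem_insert_self _ _) b (Finset.mem_insert_of_mem hb)
  · exact fun h => hv b (Finset.mem_insert_self _ _) a (Finset.mem_insert_of_mem ha) (G.adj_symm h)
  · exact fun h => hu b (Finset.mem_insert_self _ _) a (Finset.mem_insert_of_mem ha) (G.adj_symm h)
  · exact hv a (Finset.mem_insert_of_mem ha) b (Finset.mem_insert_of_mem hb)

lemma ind_adj {s : Finset (Fin n)} {v u : Fin n} (h : Ind G (insert v (insert u s))) :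
    ¬ G.Adj v u :=
  h v (Finset.mem_insert_self _ _) u (Finset.mem_insert_of_mem (Finset.mem_insert_self _ _))

/-- the key sign identity -/
lemma sg_identity {s : Finset (Fin n)} {v u : Fin n} (hvu : v ≠ u) (hv : v ∉ s) (hu : u ∉ s) :
    sg (insert v (insert u s)) v * sg (insert v (insert u s)) u
      = - (sg (insert v s) v * sg (insert u s) u) := by
  have e1 : ((insert v (insert u s)).filter (· < v)).card
      = (s.filter (· < v)).card + (if u < v then 1 else 0) := by
    rw [filter_lt_insert_self, Finset.filter_insert]
    by_cases h : u < v
    · rw [if_pos h, if_pos h,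
        Finset.card_insert_of_notMem (fun hm => hu (Finset.mem_of_mem_filter _ hm))]
    · rw [if_neg h, if_neg h, add_zero]
  have e2 : ((insert v (insert u s)).filter (· < u)).card
      = (s.filter (· < u)).card + (if v < u then 1 else 0) := by
    rw [Finset.filter_insert]
    by_cases h : v < u
    · rw [if_pos h, if_pos h, filter_lt_insert_self,
        Finset.card_insert_of_notMem (fun hm => hv (Finset.mem_of_mem_filter _ hm))]
    · rw [if_neg h, if_neg h, filter_lt_insert_self, add_zero]
  have e3 : ((insert v s).filter (· < v)).card = (s.filter (· < v)).card := by
    rw [filter_lt_insert_self]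
  have e4 : ((insert u s).filter (· < u)).card = (s.filter (· < u)).card := by
    rw [filter_lt_insert_self]
  simp only [sg, e1, e2, e3, e4]
  rcases lt_or_gt_of_ne hvu with h | h
  · rw [if_pos h, if_neg (asymm h), add_zero, pow_succ]
    ring
  · rw [if_neg (asymm h), if_pos h, add_zero, pow_succ]
    ring

lemma sum_face (j : ℕ) (f : Finset (Fin n) → ℝ) :
    ∑ σ : G.indepFace j, f σ.1 = ∑ s ∈ Face G j, f s :=
  (Finset.sum_subtype (Face G j) (fun s => mem_Face G) f).symm

variable (k : ℕ)

noncomputable def Hex (h : G.indepFace (k+1) → ℝ) (s : Finset (Fin n)) : ℝ :=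
  if hs : s.card = k+1 ∧ Ind G s then h ⟨s, hs⟩ else 0

lemma Hex_face (h : G.indepFace (k+1) → ℝ) (σ : G.indepFace (k+1)) :
    Hex G k h σ.1 = h σ := by
  rw [Hex, dif_pos σ.2]

lemma Hex_zero {h : G.indepFace (k+1) → ℝ} {s : Finset (Fin n)}
    (hs : ¬ (s.card = k+1 ∧ Ind G s)) : Hex G k h s = 0 := by
  rw [Hex, dif_neg hs]

noncomputable def gv (h : G.indepFace (k+1) → ℝ) (s : Finset (Fin n)) (u : Fin n) : ℝ :=
  if u ∈ s then 0 else sg (insert u s) u * Hex G k h (insert u s)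

/-- formula for the "up" boundary value -/
lemma up_apply (h : G.indepFace (k+1) → ℝ) (σ : G.indepFace k) :
    (G.indepBoundary k).mulVec h σ
      = ∑ v ∈ Finset.univ \ σ.1, sg (insert v σ.1) v * Hex G k h (insert v σ.1) := by
  have step1 : (G.indepBoundary k).mulVec h σ
      = ∑ s ∈ Face G (k+1),
          (if σ.1 ⊆ s then ∑ v ∈ s \ σ.1, sg s v else 0) * Hex G k h s := by
    rw [Matrix.mulVec, dotProduct, ← sum_face G (k+1)
      (fun s => (if σ.1 ⊆ s then ∑ v ∈ s \ σ.1, sg s v else 0) * Hex G k h s)]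
    refine Finset.sum_congr rfl fun τ _ => ?_
    rw [Hex_face]
    rfl
  rw [step1]
  simp only [ite_mul, zero_mul]
  rw [← Finset.sum_filter (fun s => σ.1 ⊆ s)
      (fun s => (∑ v ∈ s \ σ.1, sg s v) * Hex G k h s)]
  rw [← Finset.sum_filter_of_ne (p := fun v => Ind G (insert v σ.1))
      (f := fun v => sg (insert v σ.1) v * Hex G k h (insert v σ.1))
      (fun v hv hne => by
        by_contra hni
        exact hne (by rw [Hex_zero G k (fun hc => hni hc.2), mul_zero]))]
  · refine (Finset.sum_bij (fun v _ => insert v σ.1) ?_ ?_ ?_ ?_).symm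
    · intro v hv
      simp only [Finset.mem_filter, Finset.mem_sdiff, Finset.mem_univ, true_and] at hv
      simp only [Finset.mem_filter, mem_Face]
      exact ⟨⟨by rw [Finset.card_insert_of_notMem hv.1, σ.2.1], hv.2⟩,
        Finset.subset_insert _ _⟩
    · intro a ha b hb hab
      simp only [Finset.mem_filter, Finset.mem_sdiff, Finset.mem_univ, true_and] at ha hb
      have : a ∈ insert b σ.1 := by rw [← hab]; exact Finset.mem_insert_self _ _
      rcases Finset.mem_insert.mp this with h' | h'
      · exact h'
      · exact absurd h' ha.1
    · intro s hs
      simp only [Finset.mem_filter, mem_Face] at hs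
      obtain ⟨⟨hcard, hind⟩, hsub⟩ := hs
      have hone : (s \ σ.1).card = 1 := by
        rw [Finset.card_sdiff_of_subset hsub, hcard, σ.2.1]
        omega
      obtain ⟨v, hv⟩ := Finset.card_eq_one.mp hone
      have hvs : v ∈ s \ σ.1 := hv ▸ Finset.mem_singleton_self v
      rw [Finset.mem_sdiff] at hvs
      have heq : insert v σ.1 = s := by
        apply Finset.eq_of_subset_of_card_le
        · exact Finset.insert_subset hvs.1 hsub
        · rw [hcard, Finset.card_insert_of_notMem hvs.2, σ.2.1]
      refine ⟨v, ?_, heq⟩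
      simp only [Finset.mem_filter, Finset.mem_sdiff, Finset.mem_univ, true_and]
      exact ⟨hvs.2, heq ▸ hind⟩
    · intro v hv
      simp only [Finset.mem_filter, Finset.mem_sdiff, Finset.mem_univ, true_and] at hv
      rw [Finset.insert_sdiff_cancel hv.1, Finset.sum_singleton]

/-- formula for the "down" (coboundary) value -/
lemma down_apply (h : G.indepFace (k+1) → ℝ) (τ : G.indepFace (k+2)) :
    (G.indepBoundary (k+1))ᵀ.mulVec h τ
      = ∑ v ∈ τ.1, sg τ.1 v * Hex G k h (τ.1.erase v) := by
  have step1 : (G.indepBoundary (k+1))ᵀ.mulVec h τ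
      = ∑ s ∈ Face G (k+1),
          (if s ⊆ τ.1 then ∑ v ∈ τ.1 \ s, sg τ.1 v else 0) * Hex G k h s := by
    rw [Matrix.mulVec, dotProduct, ← sum_face G (k+1)
      (fun s => (if s ⊆ τ.1 then ∑ v ∈ τ.1 \ s, sg τ.1 v else 0) * Hex G k h s)]
    refine Finset.sum_congr rfl fun σ _ => ?_
    rw [Hex_face]
    rfl
  rw [step1]
  simp only [ite_mul, zero_mul]
  rw [← Finset.sum_filter (fun s => s ⊆ τ.1)
      (fun s => (∑ v ∈ τ.1 \ s, sg τ.1 v) * Hex G k h s)]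
  refine (Finset.sum_bij (fun v _ => τ.1.erase v) ?_ ?_ ?_ ?_).symm
  · intro v hv
    simp only [Finset.mem_filter, mem_Face]
    refine ⟨⟨?_, Ind.mono G τ.2.2 (Finset.erase_subset _ _)⟩, Finset.erase_subset _ _⟩
    rw [Finset.card_erase_of_mem hv, τ.2.1]
    omega
  · intro a ha b hb hab
    exact (Finset.erase_inj τ.1 ha).mp hab
  · intro s hs
    simp only [Finset.mem_filter, mem_Face] at hs
    obtain ⟨⟨hcard, hind⟩, hsub⟩ := hs
    have hone : (τ.1 \ s).card = 1 := by
      rw [Finset.card_sdiff_of_subset hsub, hcard, τ.2.1]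
      omega
    obtain ⟨v, hv⟩ := Finset.card_eq_one.mp hone
    have hvs : v ∈ τ.1 \ s := hv ▸ Finset.mem_singleton_self v
    rw [Finset.mem_sdiff] at hvs
    refine ⟨v, hvs.1, ?_⟩
    have hsub2 : s ⊆ τ.1.erase v := by
      intro x hx
      rw [Finset.mem_erase]
      exact ⟨fun hxv => hvs.2 (hxv ▸ hx), hsub hx⟩
    refine (Finset.eq_of_subset_of_card_le hsub2 ?_).symm
    rw [Finset.card_erase_of_mem hvs.1, τ.2.1, hcard]
    omega
  · intro v hv
    rw [Finset.sdiff_erase_self hv, Finset.sum_singleton]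


/-- reindexing pairs (r, u ∈ r) with r a (j+1)-face ↔ (s, u) with s a j-face and u extending s -/
lemma RX (j : ℕ) (f : Finset (Fin n) → Fin n → ℝ) :
    ∑ r ∈ Face G (j+1), ∑ u ∈ r, f r u
      = ∑ s ∈ Face G j, ∑ u ∈ (Finset.univ \ s).filter (fun u => Ind G (insert u s)),
          f (insert u s) u := by
  rw [Finset.sum_sigma', Finset.sum_sigma']
  refine Finset.sum_bij (fun p _ => (⟨p.1.erase p.2, p.2⟩ : Σ _ : Finset (Fin n), Fin n))
    ?_ ?_ ?_ ?_
  · rintro ⟨r, u⟩ hp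
    simp only [Finset.mem_sigma, mem_Face] at hp ⊢
    obtain ⟨⟨hcard, hind⟩, hu⟩ := hp
    refine ⟨⟨by rw [Finset.card_erase_of_mem hu, hcard]; omega,
      Ind.mono G hind (Finset.erase_subset _ _)⟩, ?_⟩
    simp only [Finset.mem_filter, Finset.mem_sdiff, Finset.mem_univ, true_and]
    exact ⟨Finset.notMem_erase _ _, by rw [Finset.insert_erase hu]; exact hind⟩
  · rintro ⟨r, u⟩ hp ⟨r', u'⟩ hp' heq
    simp only [Finset.mem_sigma, mem_Face] at hp hp'
    obtain ⟨he, hu2⟩ := Sigma.ext_iff.mp heq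
    dsimp only at he hu2
    obtain rfl := eq_of_heq hu2
    have : r = r' := by
      rw [← Finset.insert_erase hp.2, he, Finset.insert_erase hp'.2]
    simp [this]
  · rintro ⟨s, u⟩ hp
    simp only [Finset.mem_sigma, mem_Face, Finset.mem_filter, Finset.mem_sdiff,
      Finset.mem_univ, true_and] at hp
    obtain ⟨⟨hcard, hind⟩, hu, hins⟩ := hp
    refine ⟨⟨insert u s, u⟩, ?_, ?_⟩
    · simp only [Finset.mem_sigma, mem_Face]
      exact ⟨⟨by rw [Finset.card_insert_of_notMem hu, hcard], hins⟩,
        Finset.mem_insert_self _ _⟩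
    · exact Sigma.ext (Finset.erase_insert hu) HEq.rfl
  · rintro ⟨r, u⟩ hp
    simp only [Finset.mem_sigma, mem_Face] at hp
    dsimp only
    rw [Finset.insert_erase hp.2]


lemma sq_expand {α : Type*} [DecidableEq α] (s : Finset α) (b : α → ℝ) :
    (∑ v ∈ s, b v)^2 = ∑ v ∈ s, (b v)^2 + ∑ v ∈ s, ∑ u ∈ s.erase v, b v * b u := by
  rw [sq, Finset.sum_mul_sum, ← Finset.sum_add_distrib]
  refine Finset.sum_congr rfl fun v hv => ?_
  rw [← Finset.add_sum_erase _ _ hv, sq]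

lemma sg_sq (s : Finset (Fin n)) (v : Fin n) : (sg s v)^2 = 1 := by
  rw [sq, sg_mul_self]

lemma gv_eq_zero {h : G.indepFace (k+1) → ℝ} {s : Finset (Fin n)} {u : Fin n}
    (hs : s.card = k) (hu : ¬ (u ∉ s ∧ Ind G (insert u s))) : gv G k h s u = 0 := by
  rw [gv]
  by_cases hmem : u ∈ s
  · rw [if_pos hmem]
  · rw [if_neg hmem, Hex_zero, mul_zero]
    rintro ⟨hc, hi⟩
    exact hu ⟨hmem, hi⟩

def extn (r : Finset (Fin n)) : ℕ :=
  ((Finset.univ \ r).filter (fun v => Ind G (insert v r))).card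

lemma D1 (h : G.indepFace (k+1) → ℝ) :
    ∑ t ∈ Face G (k+2), ∑ v ∈ t, (Hex G k h (t.erase v))^2
      = ∑ r ∈ Face G (k+1), (extn G r : ℝ) * (Hex G k h r)^2 := by
  rw [RX G (k+1) (fun t v => (Hex G k h (t.erase v))^2)]
  refine Finset.sum_congr rfl fun r hr => ?_
  rw [Finset.sum_congr rfl (fun v hv => by
    simp only [Finset.mem_filter, Finset.mem_sdiff, Finset.mem_univ, true_and] at hv
    rw [Finset.erase_insert hv.1])]
  rw [Finset.sum_const, nsmul_eq_mul, extn]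

lemma gv_restrict (h : G.indepFace (k+1) → ℝ) (w : Fin n → ℝ) {s : Finset (Fin n)}
    (hs : s ∈ Face G k) :
    ∑ v, w v * (gv G k h s v)^2
      = ∑ v ∈ (Finset.univ \ s).filter (fun u => Ind G (insert u s)),
          w v * (Hex G k h (insert v s))^2 := by
  rw [mem_Face] at hs
  rw [← Finset.sum_subset
    (Finset.subset_univ ((Finset.univ \ s).filter (fun u => Ind G (insert u s))))
    (f := fun v => w v * (gv G k h s v)^2) (fun v _ hv => by
      simp only [Finset.mem_filter, Finset.mem_sdiff, Finset.mem_univ, true_and,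
        not_and] at hv
      rw [gv_eq_zero G k hs.1 (fun hc => hv hc.1 hc.2)]
      ring)]
  refine Finset.sum_congr rfl fun v hv => ?_
  simp only [Finset.mem_filter, Finset.mem_sdiff, Finset.mem_univ, true_and] at hv
  rw [gv, if_neg hv.1, mul_pow, sg_sq, one_mul]

lemma D2w (h : G.indepFace (k+1) → ℝ) (w : Fin n → ℝ) :
    ∑ s ∈ Face G k, ∑ v, w v * (gv G k h s v)^2
      = ∑ r ∈ Face G (k+1), (∑ u ∈ r, w u) * (Hex G k h r)^2 := by
  rw [Finset.sum_congr rfl (fun s hs => gv_restrict G k h w hs),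
    ← RX G k (fun r u => w u * (Hex G k h r)^2)]
  exact Finset.sum_congr rfl fun r hr => (Finset.sum_mul _ _ _).symm

lemma ite_sum {c : Prop} [Decidable c] {α : Type*} (t : Finset α) (f : α → ℝ) :
    (if c then ∑ x ∈ t, f x else 0) = ∑ x ∈ t, (if c then f x else 0) := by
  split <;> simp

lemma O1 (h : G.indepFace (k+1) → ℝ) :
    ∑ t ∈ Face G (k+2), ∑ v ∈ t, ∑ u ∈ t.erase v,
        (sg t v * Hex G k h (t.erase v)) * (sg t u * Hex G k h (t.erase u))
      = - ∑ s ∈ Face G k, ∑ u ∈ (Finset.univ \ s).filter (fun u => Ind G (insert u s)),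
          ∑ v ∈ (Finset.univ \ (insert u s)).filter
              (fun v => Ind G (insert v (insert u s))),
            gv G k h s v * gv G k h s u := by
  rw [RX G (k+1) (fun t v => ∑ u ∈ t.erase v,
      (sg t v * Hex G k h (t.erase v)) * (sg t u * Hex G k h (t.erase u)))]
  rw [Finset.sum_congr rfl (fun r hr => Finset.sum_congr rfl (fun v hv => by
    simp only [Finset.mem_filter, Finset.mem_sdiff, Finset.mem_univ, true_and] at hv
    rw [Finset.erase_insert hv.1]))]
  rw [Finset.sum_congr rfl (fun r hr => Finset.sum_comm)]
  rw [RX G k (fun r u => ∑ v ∈ (Finset.univ \ r).filter (fun w => Ind G (insert w r)),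
      sg (insert v r) v * Hex G k h r
        * (sg (insert v r) u * Hex G k h ((insert v r).erase u)))]
  rw [← Finset.sum_neg_distrib]
  refine Finset.sum_congr rfl fun s hs => ?_
  rw [← Finset.sum_neg_distrib]
  refine Finset.sum_congr rfl fun u hu => ?_
  rw [← Finset.sum_neg_distrib]
  refine Finset.sum_congr rfl fun v hv => ?_
  simp only [Finset.mem_filter, Finset.mem_sdiff, Finset.mem_univ, true_and,
    Finset.mem_insert, not_or] at hu hv
  have hvu : v ≠ u := hv.1.1
  have hvs : v ∉ s := hv.1.2
  have e2 : (insert v (insert u s)).erase u = insert v s := by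
    rw [Finset.erase_insert_of_ne hvu, Finset.erase_insert hu.1]
  rw [e2, gv, if_neg hvs, gv, if_neg hu.1]
  linear_combination (Hex G k h (insert u s) * Hex G k h (insert v s))
    * (sg_identity hvu hvs hu.1)

lemma cross (h : G.indepFace (k+1) → ℝ) {s : Finset (Fin n)} (hs : s ∈ Face G k) :
    ∑ v, ∑ u ∈ Finset.univ.erase v, gv G k h s v * gv G k h s u
      = (∑ u ∈ (Finset.univ \ s).filter (fun u => Ind G (insert u s)),
          ∑ v ∈ (Finset.univ \ (insert u s)).filter
              (fun v => Ind G (insert v (insert u s))),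
            gv G k h s v * gv G k h s u)
        + ∑ v, ∑ u, (G.adjMatrix ℝ) v u * (gv G k h s v * gv G k h s u) := by
  rw [mem_Face] at hs
  have conv1 : ∀ (t : Finset (Fin n)) (P : Fin n → Prop) [DecidablePred P]
      (f : Fin n → ℝ), ∑ x ∈ (Finset.univ \ t).filter P, f x
        = ∑ x, if x ∉ t ∧ P x then f x else 0 := by
    intro t P _ f
    rw [Finset.sdiff_eq_filter, Finset.filter_filter, Finset.sum_filter]
  have lhs1 : ∑ v, ∑ u ∈ Finset.univ.erase v, gv G k h s v * gv G k h s u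
      = ∑ v, ∑ u, if u ≠ v then gv G k h s v * gv G k h s u else 0 := by
    refine Finset.sum_congr rfl fun v _ => ?_
    rw [← Finset.filter_ne', Finset.sum_filter]
  have mid1 : (∑ u ∈ (Finset.univ \ s).filter (fun u => Ind G (insert u s)),
          ∑ v ∈ (Finset.univ \ (insert u s)).filter
              (fun v => Ind G (insert v (insert u s))),
            gv G k h s v * gv G k h s u)
      = ∑ v, ∑ u, if (u ∉ s ∧ Ind G (insert u s))
            ∧ (v ∉ insert u s ∧ Ind G (insert v (insert u s))) then
          gv G k h s v * gv G k h s u else 0 := by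
    rw [conv1]
    rw [Finset.sum_congr rfl (fun u _ => by
      rw [conv1 (insert u s) _ (fun v => gv G k h s v * gv G k h s u), ite_sum])]
    rw [Finset.sum_comm]
    refine Finset.sum_congr rfl fun v _ => Finset.sum_congr rfl fun u _ => ?_
    rw [← ite_and]
  rw [lhs1, mid1, ← Finset.sum_add_distrib]
  refine Finset.sum_congr rfl fun v _ => ?_
  rw [← Finset.sum_add_distrib]
  refine Finset.sum_congr rfl fun u _ => ?_
  by_cases h1 : u ∉ s ∧ Ind G (insert u s)
  · by_cases h2 : v ∉ s ∧ Ind G (insert v s)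
    · by_cases hvu : v = u
      · subst hvu
        rw [if_neg (by simp), if_neg (fun hc => hc.2.1 (Finset.mem_insert_self _ _)),
          SimpleGraph.adjMatrix_apply, if_neg (G.irrefl), zero_mul, add_zero]
      · by_cases hadj : G.Adj v u
        · rw [if_pos (Ne.symm hvu), if_neg (fun hc => ind_adj G hc.2.2 hadj),
            SimpleGraph.adjMatrix_apply, if_pos hadj, one_mul, zero_add]
        · rw [if_pos (Ne.symm hvu),
            if_pos ⟨h1, ⟨by simp only [Finset.mem_insert, not_or]; exact ⟨hvu, h2.1⟩,
              ind_insert_insert G hadj h2.2 h1.2⟩⟩,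
            SimpleGraph.adjMatrix_apply, if_neg hadj, zero_mul, add_zero]
    · have hgv : gv G k h s v = 0 := gv_eq_zero G k hs.1 h2
      simp [hgv]
  · have hgu : gv G k h s u = 0 := gv_eq_zero G k hs.1 h1
    simp [hgu]

lemma dot_adj (g : Fin n → ℝ) :
    ∑ v, ∑ u, (G.adjMatrix ℝ) v u * (g v * g u) = g ⬝ᵥ (G.adjMatrix ℝ).mulVec g := by
  simp only [dotProduct, Matrix.mulVec, Finset.mul_sum]
  refine Finset.sum_congr rfl fun v _ => Finset.sum_congr rfl fun u _ => ?_
  ring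

lemma quad_le (lam : ℝ) (hmax : ∀ μ ∈ spectrum ℝ (G.lapMatrix ℝ), μ ≤ lam)
    (g : Fin n → ℝ) : g ⬝ᵥ (G.lapMatrix ℝ).mulVec g ≤ lam * (g ⬝ᵥ g) := by
  set M : Matrix (Fin n) (Fin n) ℝ := lam • (1 : Matrix (Fin n) (Fin n) ℝ) - G.lapMatrix ℝ
    with hM
  have hLh : (G.lapMatrix ℝ).IsHermitian := (G.posSemidef_lapMatrix ℝ).1
  have hMh : M.IsHermitian := by
    rw [hM]
    refine Matrix.IsHermitian.sub ?_ hLh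
    rw [Matrix.IsHermitian, Matrix.conjTranspose_smul, Matrix.conjTranspose_one,
      star_trivial]
  have hPSD : M.PosSemidef := by
    refine hMh.posSemidef_iff_eigenvalues_nonneg.mpr fun i => ?_
    show 0 ≤ hMh.eigenvalues i
    have hmem : hMh.eigenvalues i
        ∈ spectrum ℝ ((algebraMap ℝ (Matrix (Fin n) (Fin n) ℝ)) lam - G.lapMatrix ℝ) := by
      convert hMh.eigenvalues_mem_spectrum_real i using 2
      rw [hM, Algebra.algebraMap_eq_smul_one]
    rw [← spectrum.singleton_sub_eq] at hmem
    obtain ⟨a, ha, b, hb, hab⟩ := Set.mem_sub.mp hmem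
    rw [Set.mem_singleton_iff] at ha
    subst ha
    rw [← hab]
    have := hmax b hb
    linarith
  have h0 := hPSD.dotProduct_mulVec_nonneg g
  rw [star_trivial] at h0
  have hexp : g ⬝ᵥ M.mulVec g = lam * (g ⬝ᵥ g) - g ⬝ᵥ (G.lapMatrix ℝ).mulVec g := by
    rw [hM, Matrix.sub_mulVec, dotProduct_sub, Matrix.smul_mulVec,
      Matrix.one_mulVec, dotProduct_smul, smul_eq_mul]
  rw [hexp] at h0
  linarith

lemma adj_ge (lam : ℝ) (hmax : ∀ μ ∈ spectrum ℝ (G.lapMatrix ℝ), μ ≤ lam)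
    (g : Fin n → ℝ) :
    (∑ v, (G.degree v : ℝ) * (g v)^2) - lam * ∑ v, (g v)^2
      ≤ g ⬝ᵥ (G.adjMatrix ℝ).mulVec g := by
  have hdeg : g ⬝ᵥ (G.degMatrix ℝ).mulVec g = ∑ v, (G.degree v : ℝ) * (g v)^2 := by
    simp only [dotProduct, SimpleGraph.degMatrix, Matrix.mulVec_diagonal]
    exact Finset.sum_congr rfl fun v _ => by ring
  have hsplit : g ⬝ᵥ (G.lapMatrix ℝ).mulVec g
      = g ⬝ᵥ (G.degMatrix ℝ).mulVec g - g ⬝ᵥ (G.adjMatrix ℝ).mulVec g := by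
    rw [SimpleGraph.lapMatrix, Matrix.sub_mulVec, dotProduct_sub]
  have hquad := quad_le G lam hmax g
  have hgg : g ⬝ᵥ g = ∑ v, (g v)^2 := by
    simp only [dotProduct]
    exact Finset.sum_congr rfl fun v _ => (sq (g v)).symm ▸ by ring
  rw [hgg] at hquad
  linarith

lemma count {r : Finset (Fin n)} (hr : r ∈ Face G (k+1)) :
    (n : ℝ) ≤ (extn G r : ℝ) + (k+1) + ∑ u ∈ r, (G.degree u : ℝ) := by
  rw [mem_Face] at hr
  have hnat : n ≤ extn G r + (k+1) + ∑ u ∈ r, G.degree u := by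
    have hsub : (Finset.univ : Finset (Fin n))
        ⊆ r ∪ r.biUnion (fun u => G.neighborFinset u)
          ∪ (Finset.univ \ r).filter (fun v => Ind G (insert v r)) := by
      intro v _
      by_cases hvr : v ∈ r
      · exact Finset.mem_union_left _ (Finset.mem_union_left _ hvr)
      · by_cases hadj : ∃ u ∈ r, G.Adj u v
        · obtain ⟨u, hu, huv⟩ := hadj
          exact Finset.mem_union_left _ (Finset.mem_union_right _
            (Finset.mem_biUnion.mpr ⟨u, hu, (G.mem_neighborFinset u v).mpr huv⟩))
        · push_neg at hadj
          refine Finset.mem_union_right _ ?_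
          simp only [Finset.mem_filter, Finset.mem_sdiff, Finset.mem_univ, true_and]
          refine ⟨hvr, fun a ha b hb => ?_⟩
          simp only [Finset.mem_insert] at ha hb
          rcases ha with rfl | ha <;> rcases hb with rfl | hb
          · exact fun hh => G.irrefl hh
          · exact fun hh => hadj b hb (G.adj_symm hh)
          · exact fun hh => hadj a ha hh
          · exact hr.2 a ha b hb
    calc n = (Finset.univ : Finset (Fin n)).card := (Finset.card_fin n).symm
    _ ≤ _ := Finset.card_le_card hsub
    _ ≤ (r ∪ r.biUnion (fun u => G.neighborFinset u)).card
          + ((Finset.univ \ r).filter (fun v => Ind G (insert v r))).card :=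
        Finset.card_union_le _ _
    _ ≤ r.card + (r.biUnion (fun u => G.neighborFinset u)).card + extn G r := by
        rw [extn]
        exact Nat.add_le_add_right (Finset.card_union_le _ _) _
    _ ≤ (k+1) + (∑ u ∈ r, G.degree u) + extn G r := by
        refine Nat.add_le_add_right (add_le_add (le_of_eq hr.1) ?_) _
        refine (Finset.card_biUnion_le).trans (le_of_eq ?_)
        exact Finset.sum_congr rfl fun u _ => G.card_neighborFinset_eq_degree u
    _ = extn G r + (k+1) + ∑ u ∈ r, G.degree u := by ring
  calc (n : ℝ) ≤ ((extn G r + (k+1) + ∑ u ∈ r, G.degree u : ℕ) : ℝ) := by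
        exact_mod_cast hnat
  _ = (extn G r : ℝ) + (k+1) + ∑ u ∈ r, (G.degree u : ℝ) := by
        push_cast
        ring

lemma key (h : G.indepFace (k+1) → ℝ) (lam : ℝ)
    (hmax : ∀ μ ∈ spectrum ℝ (G.lapMatrix ℝ), μ ≤ lam) :
    ((n : ℝ) - ((k:ℝ)+1) * lam) * ∑ r ∈ Face G (k+1), (Hex G k h r)^2
      ≤ (∑ t ∈ Face G (k+2), (∑ v ∈ t, sg t v * Hex G k h (t.erase v))^2)
        + ∑ s ∈ Face G k, (∑ v, gv G k h s v)^2 := by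
  set S0 : ℝ := ∑ r ∈ Face G (k+1), (Hex G k h r)^2 with hS0
  set SE : ℝ := ∑ r ∈ Face G (k+1), (extn G r : ℝ) * (Hex G k h r)^2 with hSE
  set SD : ℝ := ∑ r ∈ Face G (k+1), (∑ u ∈ r, (G.degree u : ℝ)) * (Hex G k h r)^2
    with hSD
  have e1 : ∑ t ∈ Face G (k+2), (∑ v ∈ t, sg t v * Hex G k h (t.erase v))^2
      = SE + ∑ t ∈ Face G (k+2), ∑ v ∈ t, ∑ u ∈ t.erase v,
          (sg t v * Hex G k h (t.erase v)) * (sg t u * Hex G k h (t.erase u)) := by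
    rw [Finset.sum_congr rfl
      (fun t _ => sq_expand t (fun v => sg t v * Hex G k h (t.erase v))),
      Finset.sum_add_distrib]
    congr 1
    rw [Finset.sum_congr rfl (fun t _ => Finset.sum_congr rfl (fun v _ => by
      rw [mul_pow, sg_sq, one_mul]))]
    exact D1 G k h
  have e2a : ∑ s ∈ Face G k, ∑ v, (gv G k h s v)^2 = ((k:ℝ)+1) * S0 := by
    rw [Finset.sum_congr rfl (fun s _ => Finset.sum_congr rfl (fun v _ =>
      (one_mul ((gv G k h s v)^2)).symm)), D2w G k h (fun _ => 1), hS0,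
      Finset.mul_sum]
    refine Finset.sum_congr rfl fun r hr => ?_
    rw [mem_Face] at hr
    rw [Finset.sum_const, hr.1, nsmul_eq_mul, mul_one]
    push_cast
    ring
  have e2 : ∑ s ∈ Face G k, (∑ v, gv G k h s v)^2
      = ((k:ℝ)+1) * S0
        + ((∑ s ∈ Face G k,
            ∑ u ∈ (Finset.univ \ s).filter (fun u => Ind G (insert u s)),
            ∑ v ∈ (Finset.univ \ (insert u s)).filter
                (fun v => Ind G (insert v (insert u s))),
              gv G k h s v * gv G k h s u)
          + ∑ s ∈ Face G k, (gv G k h s) ⬝ᵥ (G.adjMatrix ℝ).mulVec (gv G k h s)) := by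
    rw [Finset.sum_congr rfl (fun s _ => sq_expand Finset.univ (gv G k h s)),
      Finset.sum_add_distrib, e2a]
    congr 1
    rw [Finset.sum_congr rfl (fun s hs => cross G k h hs), Finset.sum_add_distrib]
    congr 1
    exact Finset.sum_congr rfl fun s _ => dot_adj G (gv G k h s)
  have hO1 := O1 G k h
  have hB : SD - lam * (((k:ℝ)+1) * S0)
      ≤ ∑ s ∈ Face G k, (gv G k h s) ⬝ᵥ (G.adjMatrix ℝ).mulVec (gv G k h s) := by
    have hsum : ∑ s ∈ Face G k,
        ((∑ v, (G.degree v : ℝ) * (gv G k h s v)^2) - lam * ∑ v, (gv G k h s v)^2)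
        ≤ ∑ s ∈ Face G k, (gv G k h s) ⬝ᵥ (G.adjMatrix ℝ).mulVec (gv G k h s) :=
      Finset.sum_le_sum fun s _ => adj_ge G lam hmax (gv G k h s)
    have heq : ∑ s ∈ Face G k,
        ((∑ v, (G.degree v : ℝ) * (gv G k h s v)^2) - lam * ∑ v, (gv G k h s v)^2)
        = SD - lam * (((k:ℝ)+1) * S0) := by
      rw [Finset.sum_sub_distrib, D2w G k h (fun v => (G.degree v : ℝ)), ← hSD,
        ← Finset.mul_sum, e2a]
    linarith
  have hC : ((n : ℝ) - ((k:ℝ)+1) * lam) * S0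
      ≤ SE + ((k:ℝ)+1) * S0 + (SD - lam * (((k:ℝ)+1) * S0)) := by
    have hrw : SE + ((k:ℝ)+1) * S0 + (SD - lam * (((k:ℝ)+1) * S0))
        = ∑ r ∈ Face G (k+1),
            ((extn G r : ℝ) + ((k:ℝ)+1) + (∑ u ∈ r, (G.degree u : ℝ))
              - lam * ((k:ℝ)+1)) * (Hex G k h r)^2 := by
      rw [hSE, hSD, hS0]
      simp only [Finset.mul_sum, ← Finset.sum_add_distrib, ← Finset.sum_sub_distrib]
      exact Finset.sum_congr rfl fun r _ => by ring
    rw [hrw, hS0, Finset.mul_sum]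
    refine Finset.sum_le_sum fun r hr => ?_
    refine mul_le_mul_of_nonneg_right ?_ (sq_nonneg _)
    have := count G k hr
    linarith
  rw [e1, e2]
  linarith

end ABMaux

open ABMaux in
/-- **Aharoni–Berger–Meshulam.** Let `G` be a graph on `n` vertices with at
least one edge, and `lamMax` the largest eigenvalue of its Laplacian `L(G)`. Then the
homological connectivity of the independence complex satisfies `η(I(G)) ≥ n / lamMax`;
that is, `H̃_i(I(G); ℝ) = 0` for all `i` with `i + 1 < n / lamMax` (equivalently, for all
`i ≤ ⌈n / lamMax⌉ - 2`). -/
theorem indep_connectivity_lapMax {n : ℕ} (G : SimpleGraph (Fin n)) [DecidableRel G.Adj]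
    (hE : ∃ u v, G.Adj u v) (lamMax : ℝ)
    (hmem : lamMax ∈ spectrum ℝ (G.lapMatrix ℝ))
    (hmax : ∀ μ ∈ spectrum ℝ (G.lapMatrix ℝ), μ ≤ lamMax) :
    ∀ i : ℕ, (i : ℝ) + 1 < n / lamMax → G.indepHomologyDim i = 0 := by
  intro i hi
  by_cases hlam : 0 < lamMax
  swap
  · exfalso
    have hle : (n : ℝ) / lamMax ≤ 0 :=
      div_nonpos_of_nonneg_of_nonpos (Nat.cast_nonneg n) (not_lt.mp hlam)
    have : (0:ℝ) ≤ (i:ℝ) := Nat.cast_nonneg i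
    linarith
  have hn : ((i:ℝ) + 1) * lamMax < n := (lt_div_iff₀ hlam).mp hi
  -- kernel triviality
  have hker : ∀ h : G.indepFace (i+1) → ℝ, (G.indepBoundary i).mulVec h = 0 →
      ((G.indepBoundary (i+1))ᵀ).mulVec h = 0 → h = 0 := by
    intro h hup hdown
    have hkey := key G i h lamMax hmax
    have h1 : ∑ t ∈ Face G (i+2), (∑ v ∈ t, sg t v * Hex G i h (t.erase v))^2 = 0 := by
      rw [← sum_face G (i+2) (fun t => (∑ v ∈ t, sg t v * Hex G i h (t.erase v))^2)]
      refine Finset.sum_eq_zero fun τ _ => ?_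
      rw [← down_apply G i h τ, congrFun hdown τ]
      exact zero_pow two_ne_zero
    have h2 : ∑ s ∈ Face G i, (∑ v, gv G i h s v)^2 = 0 := by
      rw [← sum_face G i (fun s => (∑ v, gv G i h s v)^2)]
      refine Finset.sum_eq_zero fun σ _ => ?_
      have hgsum : ∑ v, gv G i h σ.1 v = (G.indepBoundary i).mulVec h σ := by
        rw [up_apply G i h σ,
          ← Finset.sum_subset (Finset.subset_univ (Finset.univ \ σ.1))
            (f := fun v => gv G i h σ.1 v) (fun v _ hv => by
              have hvm : v ∈ σ.1 := by
                by_contra hc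
                exact hv (Finset.mem_sdiff.mpr ⟨Finset.mem_univ v, hc⟩)
              show gv G i h σ.1 v = 0
              rw [gv, if_pos hvm])]
        refine Finset.sum_congr rfl fun v hv => ?_
        rw [gv, if_neg (Finset.mem_sdiff.mp hv).2]
      rw [hgsum, congrFun hup σ]
      exact zero_pow two_ne_zero
    have hS0 : ∑ r ∈ Face G (i+1), (Hex G i h r)^2 = 0 := by
      have hpos : (0:ℝ) < (n : ℝ) - ((i:ℝ)+1) * lamMax := by linarith
      have hle0 : ((n : ℝ) - ((i:ℝ)+1) * lamMax) * ∑ r ∈ Face G (i+1), (Hex G i h r)^2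
          ≤ 0 := by rw [h1, h2] at hkey; linarith
      have hge0 : 0 ≤ ∑ r ∈ Face G (i+1), (Hex G i h r)^2 :=
        Finset.sum_nonneg fun r _ => sq_nonneg _
      nlinarith
    funext σ
    have hmem' : σ.1 ∈ Face G (i+1) := (mem_Face G).mpr ⟨σ.2.1, σ.2.2⟩
    have := (Finset.sum_eq_zero_iff_of_nonneg (fun r _ => sq_nonneg (Hex G i h r))).mp
      hS0 σ.1 hmem'
    have hzero : Hex G i h σ.1 = 0 := by
      have := sq_eq_zero_iff.mp this
      exact this
    show h σ = 0
    rw [← Hex_face G i h σ]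
    exact hzero
  -- linear algebra
  rw [SimpleGraph.indepHomologyDim]
  apply Nat.sub_eq_zero_of_le
  set A := G.indepBoundary i with hA
  set C := G.indepBoundary (i+1) with hC
  set K1 := LinearMap.ker A.mulVecLin with hK1
  set K2 := LinearMap.ker (Cᵀ).mulVecLin with hK2
  have hbot : K1 ⊓ K2 = ⊥ := by
    rw [eq_bot_iff]
    rintro h hmemh
    rw [Submodule.mem_inf, LinearMap.mem_ker, LinearMap.mem_ker,
      Matrix.mulVecLin_apply, Matrix.mulVecLin_apply] at hmemh
    rw [Submodule.mem_bot]
    exact hker h hmemh.1 hmemh.2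
  have hd : Module.finrank ℝ K1 + Module.finrank ℝ K2
      ≤ Module.finrank ℝ (G.indepFace (i+1) → ℝ) := by
    have hsum := Submodule.finrank_sup_add_finrank_inf_eq K1 K2
    rw [hbot, finrank_bot, add_zero] at hsum
    rw [← hsum]
    exact Submodule.finrank_le _
  have hrn : Module.finrank ℝ (LinearMap.range (Cᵀ).mulVecLin) + Module.finrank ℝ K2
      = Module.finrank ℝ (G.indepFace (i+1) → ℝ) := by
    rw [hK2]
    exact LinearMap.finrank_range_add_finrank_ker _
  have htr : Module.finrank ℝ (LinearMap.range (Cᵀ).mulVecLin)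
      = Module.finrank ℝ (LinearMap.range C.mulVecLin) := by
    have := Matrix.rank_transpose C
    rw [Matrix.rank, Matrix.rank] at this
    exact this
  have goal' : Module.finrank ℝ K1 ≤ Module.finrank ℝ (LinearMap.range C.mulVecLin) := by
    omega
  rw [hK1] at goal'
  refine le_trans (le_of_eq ?_) (le_trans goal' (le_of_eq ?_)) <;> congr!
end

section
/- Let $G=(V,E)$ be a finite graph and $f:V\to\mathbb{R}_{\ge0}$ a fractional quadratic packing, i.e., $\sum_{u\in N_G(v)}f(u)(f(u)+f(v))\le 1$ for all $v\in V$. Let $w(v)=f(v)^2$ and let $\mathcal{L}^w(G)$ be the symmetric weighted Laplacian with $\mathcal{L}^w(G)_{u,u}=\sum_{u'\in N_G(u)}w(u')$ and $\mathcal{L}^w(G)_{u,v}=-\sqrt{w(u)w(v)}$ for $\{u,v\}\in E$. Then the largest eigenvalue of $\mathcal{L}^w(G)$ is at most $1$. -/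
open Matrix Finset

/-- The symmetric vertex-weighted Laplacian `𝓛^w(G)`. -/
noncomputable def SimpleGraph.symWLap {V : Type*} [Fintype V] [DecidableEq V]
    (G : SimpleGraph V) [DecidableRel G.Adj] (w : V → ℝ) : Matrix V V ℝ :=
  Matrix.of fun u v =>
    if u = v then ∑ u' ∈ G.neighborFinset u, w u'
    else if G.Adj u v then -Real.sqrt (w u * w v) else 0

section aux

variable {V : Type*} [Fintype V] [DecidableEq V] (G : SimpleGraph V) [DecidableRel G.Adj]

omit [DecidableEq V] in
lemma symWLap_swap_sum (g : V → V → ℝ) :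
    ∑ u, ∑ v, (if G.Adj u v then g u v else 0)
      = ∑ u, ∑ v, (if G.Adj u v then g v u else 0) := by
  rw [Finset.sum_comm]
  refine Finset.sum_congr rfl fun u _ => Finset.sum_congr rfl fun v _ => ?_
  simp [G.adj_comm]

lemma symWLap_quad_le (f : V → ℝ) (hf : ∀ v, 0 ≤ f v)
    (hpack : ∀ v, ∑ u ∈ G.neighborFinset v, f u * (f u + f v) ≤ 1) (x : V → ℝ) :
    x ⬝ᵥ ((G.symWLap fun v => (f v) ^ 2) *ᵥ x) ≤ ∑ u, x u ^ 2 := by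
  have hL : ∀ u v, (G.symWLap fun v => f v ^ 2) u v * x v =
      (if u = v then (∑ v', if G.Adj u v' then f v' ^ 2 else 0) * x u else 0)
      + (if G.Adj u v then -(f u * f v * x v) else 0) := by
    intro u v
    simp only [SimpleGraph.symWLap, Matrix.of_apply]
    by_cases h : u = v
    · subst h
      simp [G.irrefl, SimpleGraph.neighborFinset_eq_filter, Finset.sum_filter]
    · simp only [if_neg h]
      by_cases ha : G.Adj u v
      · have hs : Real.sqrt (f u ^ 2 * f v ^ 2) = f u * f v := by
          rw [← mul_pow, Real.sqrt_sq (mul_nonneg (hf u) (hf v))]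
        simp only [ha, if_pos, hs, if_neg h]
        ring_nf
      · simp [ha]
  have hQ : x ⬝ᵥ ((G.symWLap fun v => (f v) ^ 2) *ᵥ x)
      = (∑ u, ∑ v, (if G.Adj u v then f v ^ 2 * x u ^ 2 else 0))
        - ∑ u, ∑ v, (if G.Adj u v then f u * f v * x u * x v else 0) := by
    simp only [dotProduct, mulVec, dotProduct]
    rw [← Finset.sum_sub_distrib]
    refine Finset.sum_congr rfl fun u _ => ?_
    have hinner : ∑ v, (G.symWLap fun v => f v ^ 2) u v * x v =
        (∑ v', if G.Adj u v' then f v' ^ 2 else 0) * x u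
        + ∑ v, (if G.Adj u v then -(f u * f v * x v) else 0) := by
      rw [Finset.sum_congr rfl fun v _ => hL u v, Finset.sum_add_distrib,
        Finset.sum_ite_eq]
      simp
    rw [hinner, mul_add]
    have e1 : x u * ((∑ v', if G.Adj u v' then f v' ^ 2 else 0) * x u)
        = ∑ v, (if G.Adj u v then f v ^ 2 * x u ^ 2 else 0) := by
      rw [show x u * ((∑ v', if G.Adj u v' then f v' ^ 2 else 0) * x u)
          = (∑ v', if G.Adj u v' then f v' ^ 2 else 0) * x u ^ 2 by ring,
        Finset.sum_mul]
      refine Finset.sum_congr rfl fun v _ => ?_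
      split <;> ring
    have e2 : x u * ∑ v, (if G.Adj u v then -(f u * f v * x v) else 0)
        = -∑ v, (if G.Adj u v then f u * f v * x u * x v else 0) := by
      rw [Finset.mul_sum, ← Finset.sum_neg_distrib]
      refine Finset.sum_congr rfl fun v _ => ?_
      split <;> ring
    rw [e1, e2, sub_eq_add_neg]
  rw [hQ]
  set A1 := ∑ u, ∑ v, (if G.Adj u v then f v ^ 2 * x u ^ 2 else 0) with hA1
  set A2 := ∑ u, ∑ v, (if G.Adj u v then f u * f v * x u * x v else 0) with hA2
  set A3 := ∑ u, ∑ v, (if G.Adj u v then f u * f v * x u ^ 2 else 0) with hA3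
  have hswap : A3 = ∑ u, ∑ v, (if G.Adj u v then f u * f v * x v ^ 2 else 0) := by
    rw [hA3, symWLap_swap_sum G (fun u v => f u * f v * x u ^ 2)]
    refine Finset.sum_congr rfl fun u _ => Finset.sum_congr rfl fun v _ => ?_
    split <;> ring
  have h2 : A3 + A3 + (A2 + A2)
      = ∑ u, ∑ v, (if G.Adj u v then f u * f v * (x u + x v) ^ 2 else 0) := by
    nth_rewrite 2 [hswap]
    rw [hA3, hA2]
    simp only [← Finset.sum_add_distrib]
    refine Finset.sum_congr rfl fun u _ => Finset.sum_congr rfl fun v _ => ?_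
    split <;> ring
  have hrhs : 0 ≤ ∑ u, ∑ v, (if G.Adj u v then f u * f v * (x u + x v) ^ 2 else 0) :=
    Finset.sum_nonneg fun u _ => Finset.sum_nonneg fun v _ => by
      split
      · exact mul_nonneg (mul_nonneg (hf u) (hf v)) (sq_nonneg _)
      · exact le_rfl
  have hnn : 0 ≤ A3 + A2 := by linarith
  have hbound : A1 + A3 ≤ ∑ u, x u ^ 2 := by
    have h1 : ∀ u, (∑ v, if G.Adj u v then f v * (f v + f u) else 0) ≤ 1 := by
      intro u
      have := hpack u
      rwa [SimpleGraph.neighborFinset_eq_filter, Finset.sum_filter] at this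
    calc A1 + A3 = ∑ u, x u ^ 2 * ∑ v, (if G.Adj u v then f v * (f v + f u) else 0) := by
          rw [hA1, hA3, ← Finset.sum_add_distrib]
          refine Finset.sum_congr rfl fun u _ => ?_
          rw [Finset.mul_sum, ← Finset.sum_add_distrib]
          refine Finset.sum_congr rfl fun v _ => ?_
          split <;> ring
      _ ≤ ∑ u, x u ^ 2 * 1 :=
          Finset.sum_le_sum fun u _ => mul_le_mul_of_nonneg_left (h1 u) (sq_nonneg _)
      _ = ∑ u, x u ^ 2 := by simp
  linarith

end aux

/-- Let `f : V → ℝ≥0` be a fractional quadratic packing of `G`, i.e.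
`∑_{u ∈ N_G(v)} f u * (f u + f v) ≤ 1` for all `v`. Let `w v = (f v)^2`. Then the largest
eigenvalue of the symmetric weighted Laplacian `𝓛^w(G)` is at most `1`. -/
theorem symWLap_eig_le_one {V : Type*} [Fintype V] [DecidableEq V]
    (G : SimpleGraph V) [DecidableRel G.Adj] (f : V → ℝ) (hf : ∀ v, 0 ≤ f v)
    (hpack : ∀ v, ∑ u ∈ G.neighborFinset v, f u * (f u + f v) ≤ 1) :
    ∀ μ ∈ spectrum ℝ (G.symWLap fun v => (f v) ^ 2), μ ≤ 1 := by
  intro μ hμ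
  set L := G.symWLap fun v => (f v) ^ 2 with hLdef
  rw [spectrum.mem_iff, Matrix.isUnit_iff_isUnit_det] at hμ
  have hdet : (algebraMap ℝ (Matrix V V ℝ) μ - L).det = 0 := by
    by_contra h
    exact hμ (isUnit_iff_ne_zero.mpr h)
  obtain ⟨x, hx0, hx⟩ := (Matrix.exists_mulVec_eq_zero_iff).mpr hdet
  have hLx : L *ᵥ x = μ • x := by
    rw [Matrix.sub_mulVec] at hx
    have halg : (algebraMap ℝ (Matrix V V ℝ) μ) *ᵥ x = μ • x := by
      rw [Algebra.algebraMap_eq_smul_one, Matrix.smul_mulVec, Matrix.one_mulVec]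
    rw [halg] at hx
    exact (sub_eq_zero.mp hx).symm
  have hquad := symWLap_quad_le G f hf hpack x
  rw [hLx] at hquad
  have hdp : x ⬝ᵥ (μ • x) = μ * ∑ u, x u ^ 2 := by
    simp [dotProduct, Finset.mul_sum, sq]
    exact Finset.sum_congr rfl fun u _ => by ring
  rw [hdp] at hquad
  have hpos : 0 < ∑ u, x u ^ 2 := by
    obtain ⟨u, hu⟩ := Function.ne_iff.mp hx0
    have hu' : x u ≠ 0 := by simpa using hu
    exact Finset.sum_pos' (fun v _ => sq_nonneg (x v))
      ⟨u, Finset.mem_univ u, by positivity⟩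
  nlinarith
end

section
/- Let $G=(V,E)$ be a finite graph. Define $\rho_q^*(G)$ as the supremum of $\sum_{v\in V}f(v)^2$ over all $f:V\to\mathbb{R}_{\ge0}$ satisfying $\sum_{u\in N_G(v)}f(u)(f(u)+f(v))\le 1$ for all $v\in V$. Then the homological connectivity of the independence complex satisfies $\eta(I(G))\ge\rho_q^*(G)$; in particular $\tilde H_i(I(G);\mathbb{R})=0$ for all $i\le\lceil\rho_q^*(G)\rceil-2$. -/
open Matrix

variable {V : Type*} [Fintype V] [DecidableEq V] [LinearOrder V]

open Finset

set_option linter.unusedSectionVars false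

/-- sign of vertex `w` relative to finset `t`. -/
noncomputable def sgn (w : V) (t : Finset V) : ℝ := (-1) ^ ((t.filter (· < w)).card)

/-- independence of a finset. -/
def indepS (H : SimpleGraph V) (s : Finset V) : Prop := ∀ u ∈ s, ∀ v ∈ s, ¬ H.Adj u v

open scoped Classical in
/-- vertices in `A` extending the face `s`. -/
noncomputable def exts (H : SimpleGraph V) (A : Finset V) (s : Finset V) : Finset V :=
  (A \ s).filter (fun w => ∀ u ∈ s, ¬ H.Adj w u)

/-- total-function boundary operator. -/
noncomputable def db (H : SimpleGraph V) (A : Finset V) (u : Finset V → ℝ)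
    (s : Finset V) : ℝ :=
  ∑ w ∈ exts H A s, sgn w (insert w s) * u (insert w s)

/-- cone operator at `v`. -/
noncomputable def cn (v : V) (u : Finset V → ℝ) (s : Finset V) : ℝ :=
  if v ∈ s then sgn v s * u (s.erase v) else 0

/-- link operator at `v`. -/
noncomputable def lk (v : V) (u : Finset V → ℝ) (s : Finset V) : ℝ :=
  if v ∈ s then 0 else sgn v (insert v s) * u (insert v s)

/-- good sets: faces of the complex of `(H, A)` of cardinality `k`. -/
def gd (H : SimpleGraph V) (A : Finset V) (k : ℕ) (s : Finset V) : Prop :=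
  s ⊆ A ∧ s.card = k ∧ indepS H s

open scoped Classical in
noncomputable def mu (H : SimpleGraph V) (A : Finset V) : ℕ :=
  A.card + ((A ×ˢ A).filter (fun p => H.Adj p.1 p.2)).card

section sgnlemmas

lemma sgn_insert_self (v : V) (t : Finset V) : sgn v (insert v t) = sgn v t := by
  unfold sgn
  rw [Finset.filter_insert, if_neg (by simp)]

lemma sgn_insert_ne (w a : V) {t : Finset V} (ha : a ∉ t) :
    sgn w (insert a t) = (if a < w then (-1:ℝ) else 1) * sgn w t := by
  unfold sgn
  rw [Finset.filter_insert]
  split_ifs with h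
  · rw [Finset.card_insert_of_notMem (by simp [Finset.mem_filter, ha]), pow_succ]
    ring
  · rw [one_mul]

lemma sgn_mul_self (v : V) (t : Finset V) : sgn v t * sgn v t = 1 := by
  unfold sgn
  rw [← pow_add]
  exact Even.neg_one_pow ⟨_, rfl⟩

lemma sgn_key {v w : V} (t : Finset V) (hv : v ∉ t) (hw : w ∉ t) (hvw : v ≠ w) :
    sgn w (insert w (insert v t)) * sgn v (insert v (insert w t)) =
      -(sgn v (insert v t) * sgn w (insert w t)) := by
  simp only [sgn_insert_self]
  rw [sgn_insert_ne w v hv, sgn_insert_ne v w hw]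
  rcases lt_or_gt_of_ne hvw with h | h
  · rw [if_pos h, if_neg (not_lt.mpr h.le)]; ring
  · rw [if_neg (not_lt.mpr h.le), if_pos h]; ring

lemma sgn_key2 {v w : V} (t : Finset V) (hv : v ∉ t) (hw : w ∉ t) (hvw : v ≠ w) :
    sgn w (insert w t) * sgn v (insert v (insert w t)) =
      -(sgn v (insert v t) * sgn w (insert w (insert v t))) := by
  simp only [sgn_insert_self]
  rw [sgn_insert_ne v w hw, sgn_insert_ne w v hv]
  rcases lt_or_gt_of_ne hvw with h | h
  · rw [if_neg (not_lt.mpr h.le), if_pos h]; ring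
  · rw [if_pos h, if_neg (not_lt.mpr h.le)]; ring

end sgnlemmas
section extlemmas

variable {H H' : SimpleGraph V} {A A₀ : Finset V}

lemma mem_exts {w : V} {s : Finset V} :
    w ∈ exts H A s ↔ w ∈ A ∧ w ∉ s ∧ ∀ u ∈ s, ¬ H.Adj w u := by
  classical
  unfold exts
  simp only [Finset.mem_filter, Finset.mem_sdiff]
  tauto

lemma indep_subset {s t : Finset V} (h : s ⊆ t) (ht : indepS H t) : indepS H s :=
  fun u hu v hv => ht u (h hu) v (h hv)

lemma indep_insert {s : Finset V} {w : V} (hs : indepS H s) (hw : ∀ u ∈ s, ¬ H.Adj w u) :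
    indepS H (insert w s) := by
  intro a ha b hb
  rcases Finset.mem_insert.mp ha with rfl | ha'
  · rcases Finset.mem_insert.mp hb with rfl | hb'
    · simp
    · exact hw b hb'
  · rcases Finset.mem_insert.mp hb with rfl | hb'
    · exact fun h => hw a ha' h.symm
    · exact hs a ha' b hb'

open scoped Classical in
lemma exts_insert {w : V} {s : Finset V} (hw : w ∈ exts H A s) :
    exts H A (insert w s) = (exts H A s).filter (fun p => p ≠ w ∧ ¬ H.Adj p w) := by
  rcases mem_exts.mp hw with ⟨hwA, hws, hwc⟩
  apply Finset.ext
  intro p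
  constructor
  · intro hp
    obtain ⟨hpA, hpns, hpc⟩ := mem_exts.mp hp
    rw [Finset.mem_insert, not_or] at hpns
    exact Finset.mem_filter.mpr ⟨mem_exts.mpr ⟨hpA, hpns.2,
      fun u hu => hpc u (Finset.mem_insert_of_mem hu)⟩, hpns.1,
      hpc w (Finset.mem_insert_self w s)⟩
  · intro hp
    obtain ⟨hp1, hp2, hp3⟩ := Finset.mem_filter.mp hp
    obtain ⟨hpA, hps, hpc⟩ := mem_exts.mp hp1
    refine mem_exts.mpr ⟨hpA, by rw [Finset.mem_insert, not_or]; exact ⟨hp2, hps⟩, ?_⟩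
    intro u hu
    rcases Finset.mem_insert.mp hu with rfl | hu'
    · exact hp3
    · exact hpc u hu'

/-- `db` of a chain vanishing outside good sets vanishes at bad sets. -/
lemma db_bad {u : Finset V → ℝ} (hu : ∀ r, u r ≠ 0 → r ⊆ A ∧ indepS H r)
    {s : Finset V} (hs : ¬ (s ⊆ A ∧ indepS H s)) : db H A u s = 0 := by
  apply Finset.sum_eq_zero
  intro w hw
  have : u (insert w s) = 0 := by
    by_contra h
    rcases hu _ h with ⟨h1, h2⟩
    exact hs ⟨fun x hx => h1 (Finset.mem_insert_of_mem hx),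
      indep_subset (Finset.subset_insert _ _) h2⟩
  rw [this, mul_zero]

/-- `db` of a chain supported on `k+1`-element sets vanishes on sets of wrong card. -/
lemma db_wrong_card {u : Finset V → ℝ} {k : ℕ} (hu : ∀ r, u r ≠ 0 → r.card = k + 1)
    {s : Finset V} (hs : s.card ≠ k) : db H A u s = 0 := by
  apply Finset.sum_eq_zero
  intro w hw
  rcases mem_exts.mp hw with ⟨hwA, hws, hwc⟩
  have : u (insert w s) = 0 := by
    by_contra h
    have := hu _ h
    rw [Finset.card_insert_of_notMem hws] at this
    exact hs (Nat.succ_injective this)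
  rw [this, mul_zero]

lemma db_add (u v : Finset V → ℝ) (s : Finset V) :
    db H A (fun r => u r + v r) s = db H A u s + db H A v s := by
  unfold db; rw [← Finset.sum_add_distrib]; apply Finset.sum_congr rfl; intros; ring

lemma db_sub (u v : Finset V → ℝ) (s : Finset V) :
    db H A (fun r => u r - v r) s = db H A u s - db H A v s := by
  unfold db; rw [← Finset.sum_sub_distrib]; apply Finset.sum_congr rfl; intros; ring

/-- ambient irrelevance. -/
lemma db_ambient (hAA : A₀ ⊆ A) {u : Finset V → ℝ} (hu : ∀ r, u r ≠ 0 → r ⊆ A₀)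
    (s : Finset V) : db H A u s = db H A₀ u s := by
  symm
  apply Finset.sum_subset
  · intro w hw
    rcases mem_exts.mp hw with ⟨h1, h2, h3⟩
    exact mem_exts.mpr ⟨hAA h1, h2, h3⟩
  · intro w hw hw0
    have : u (insert w s) = 0 := by
      by_contra h
      rcases mem_exts.mp hw with ⟨h1, h2, h3⟩
      have hwA0 : w ∈ A₀ := hu _ h (Finset.mem_insert_self w s)
      exact hw0 (mem_exts.mpr ⟨hwA0, h2, h3⟩)
    rw [this, mul_zero]

/-- graph irrelevance: `H' ≤ H`, chain supported on `H`-independent sets. -/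
lemma db_graph (hle : H' ≤ H) {u : Finset V → ℝ} (hu : ∀ r, u r ≠ 0 → indepS H r)
    (s : Finset V) : db H' A u s = db H A u s := by
  symm
  apply Finset.sum_subset
  · intro w hw
    rcases mem_exts.mp hw with ⟨h1, h2, h3⟩
    exact mem_exts.mpr ⟨h1, h2, fun x hx hadj => h3 x hx (hle hadj)⟩
  · intro w hw hw0
    have : u (insert w s) = 0 := by
      by_contra h
      rcases mem_exts.mp hw with ⟨h1, h2, h3⟩
      refine hw0 (mem_exts.mpr ⟨h1, h2, fun x hx => ?_⟩)
      exact hu _ h w (Finset.mem_insert_self w s) x (Finset.mem_insert_of_mem hx)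
    rw [this, mul_zero]

end extlemmas
section coreids

variable {H : SimpleGraph V} {A : Finset V}

lemma sum_antisym {t : Finset V} (F : V → V → ℝ)
    (h : ∀ w ∈ t, ∀ p ∈ t, F w p = - F p w) :
    ∑ w ∈ t, ∑ p ∈ t, F w p = 0 := by
  have h1 : ∑ w ∈ t, ∑ p ∈ t, F w p = ∑ p ∈ t, ∑ w ∈ t, F w p := Finset.sum_comm
  have h2 : ∑ p ∈ t, ∑ w ∈ t, F w p = - ∑ w ∈ t, ∑ p ∈ t, F w p := by
    rw [← Finset.sum_neg_distrib]
    apply Finset.sum_congr rfl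
    intro p hp
    rw [← Finset.sum_neg_distrib]
    apply Finset.sum_congr rfl
    intro w hw
    rw [h w hw p hp]
  linarith [h1, h2]

open scoped Classical in
/-- the boundary of a boundary vanishes. -/
lemma db_db (u : Finset V → ℝ) (s : Finset V) : db H A (db H A u) s = 0 := by
  unfold db
  have step : ∀ w ∈ exts H A s,
      sgn w (insert w s) * ∑ p ∈ exts H A (insert w s),
        sgn p (insert p (insert w s)) * u (insert p (insert w s)) =
      ∑ p ∈ exts H A s, (if p ≠ w ∧ ¬ H.Adj p w then
        sgn w (insert w s) * (sgn p (insert p (insert w s)) * u (insert p (insert w s)))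
        else 0) := by
    intro w hw
    rw [exts_insert hw, Finset.sum_filter, Finset.mul_sum]
    apply Finset.sum_congr rfl
    intro p hp
    split_ifs with h
    · rfl
    · rw [mul_zero]
  rw [Finset.sum_congr rfl step]
  apply sum_antisym
  intro w hw p hp
  rcases mem_exts.mp hw with ⟨hwA, hws, hwc⟩
  rcases mem_exts.mp hp with ⟨hpA, hps, hpc⟩
  by_cases h : p ≠ w ∧ ¬ H.Adj p w
  · have h' : w ≠ p ∧ ¬ H.Adj w p := ⟨h.1.symm, fun a => h.2 a.symm⟩
    rw [if_pos h, if_pos h']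
    have key := sgn_key2 (v := p) (w := w) s hps hws h.1
    have harg : insert p (insert w s) = insert w (insert p s) := Finset.insert_comm _ _ _
    rw [harg] at key ⊢
    linear_combination (u (insert w (insert p s))) * key
  · have h' : ¬ (w ≠ p ∧ ¬ H.Adj w p) := by
      intro hc
      exact h ⟨hc.1.symm, fun a => hc.2 a.symm⟩
    rw [if_neg h, if_neg h', neg_zero]

open scoped Classical in
/-- the cone identity. -/
lemma cone_id (v : V) (u : Finset V → ℝ) {s : Finset V} (hsA : s ⊆ A)
    (hind : indepS H s)
    (hu : ∀ r, u r ≠ 0 → r ⊆ A ∧ indepS H r ∧ ∀ x ∈ r, ¬ H.Adj v x) :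
    db H A (cn v u) s =
      (if v ∈ s ∨ v ∈ exts H A s then u s else 0) - cn v (db H A u) s := by
  by_cases hvs : v ∈ s
  · -- case v ∈ s
    set t := s.erase v with ht
    have hvt : v ∉ t := Finset.notMem_erase v s
    have hst : s = insert v t := (Finset.insert_erase hvs).symm
    have hcn : cn v (db H A u) s = sgn v s * db H A u t := by
      unfold cn; rw [if_pos hvs]
    have hsum : db H A u t = sgn v s * u s + ∑ w ∈ exts H A s,
        sgn w (insert w t) * u (insert w t) := by
      unfold db
      have hsub : insert v (exts H A s) ⊆ exts H A t := by
        intro w hw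
        rcases Finset.mem_insert.mp hw with hq | hw'
        · subst hq
          exact mem_exts.mpr ⟨hsA hvs, hvt,
            fun x hx => hind w hvs x (Finset.mem_of_mem_erase hx)⟩
        · rcases mem_exts.mp hw' with ⟨h1, h2, h3⟩
          exact mem_exts.mpr ⟨h1, fun hc => h2 (Finset.mem_of_mem_erase hc),
            fun x hx => h3 x (Finset.mem_of_mem_erase hx)⟩
      have hvanish : ∀ w ∈ exts H A t, w ∉ insert v (exts H A s) →
          sgn w (insert w t) * u (insert w t) = 0 := by
        intro w hw hw0
        rcases mem_exts.mp hw with ⟨h1, h2, h3⟩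
        have hwv : w ≠ v := fun hc => hw0 (by rw [hc]; exact Finset.mem_insert_self v _)
        have hws : w ∉ s := by
          rw [hst]; intro hc
          rcases Finset.mem_insert.mp hc with rfl | hc'
          · exact hwv rfl
          · exact h2 hc'
        have : ¬ (∀ x ∈ s, ¬ H.Adj w x) := by
          intro hc
          exact hw0 (Finset.mem_insert_of_mem (mem_exts.mpr ⟨h1, hws, hc⟩))
        push_neg at this
        obtain ⟨x, hxs, hadj⟩ := this
        have hxv : x = v := by
          by_contra hxv
          exact h3 x (Finset.mem_erase.mpr ⟨hxv, hxs⟩) hadj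
        subst hxv
        have hu0 : u (insert w t) = 0 := by
          by_contra hc
          exact (hu _ hc).2.2 w (Finset.mem_insert_self w t) hadj.symm
        rw [hu0, mul_zero]
      rw [← Finset.sum_subset hsub hvanish, Finset.sum_insert (by
        intro hc; exact (mem_exts.mp hc).2.1 hvs)]
      congr 1
      rw [← hst]
    -- now compute db (cn v u) s
    have hterm : ∀ w ∈ exts H A s,
        sgn w (insert w s) * cn v u (insert w s) =
        - (sgn v s * (sgn w (insert w t) * u (insert w t))) := by
      intro w hw
      rcases mem_exts.mp hw with ⟨h1, h2, h3⟩
      have hwv : w ≠ v := fun hc => h2 (hc ▸ hvs)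
      have hwt : w ∉ t := fun hc => h2 (Finset.mem_of_mem_erase hc)
      have hvins : v ∈ insert w s := Finset.mem_insert_of_mem hvs
      have herase : (insert w s).erase v = insert w t := by
        rw [ht, Finset.erase_insert_of_ne hwv]
      unfold cn
      rw [if_pos hvins, herase]
      have harg1 : insert w s = insert w (insert v t) := by rw [← hst]
      have harg2 : insert w (insert v t) = insert v (insert w t) := Finset.insert_comm _ _ _
      have key := sgn_key (v := v) (w := w) t hvt hwt hwv.symm
      have hsgnv : sgn v (insert v t) = sgn v s := by rw [← hst]
      have hsv : sgn v (insert w s) = sgn v (insert v (insert w t)) := by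
        rw [harg1, harg2]
      have hsw : sgn w (insert w s) = sgn w (insert w (insert v t)) := by rw [harg1]
      rw [hsv, hsw]
      rw [hsgnv] at key
      linear_combination (u (insert w t)) * key
    have hL : db H A (cn v u) s =
        ∑ w ∈ exts H A s, -(sgn v s * (sgn w (insert w t) * u (insert w t))) :=
      Finset.sum_congr rfl hterm
    rw [hL, hcn, hsum, if_pos (Or.inl hvs)]
    rw [Finset.sum_neg_distrib, mul_add, ← Finset.mul_sum]
    linear_combination (u s) * (sgn_mul_self v s)
  · -- case v ∉ s
    have hcn : cn v (db H A u) s = 0 := by unfold cn; rw [if_neg hvs]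
    rw [hcn, sub_zero]
    unfold db
    by_cases hve : v ∈ exts H A s
    · rw [if_pos (Or.inr hve)]
      rw [Finset.sum_eq_single_of_mem v hve]
      · unfold cn
        rw [if_pos (Finset.mem_insert_self v s), Finset.erase_insert hvs, ← mul_assoc,
          sgn_mul_self, one_mul]
      · intro w hw hwv
        have : cn v u (insert w s) = 0 := by
          unfold cn
          rw [if_neg (by
            intro hc
            rcases Finset.mem_insert.mp hc with rfl | hc'
            · exact hwv rfl
            · exact hvs hc')]
        rw [this, mul_zero]
    · rw [if_neg (by rintro (h | h); exacts [hvs h, hve h])]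
      apply Finset.sum_eq_zero
      intro w hw
      have hwv : w ≠ v := fun hc => hve (hc ▸ hw)
      have : cn v u (insert w s) = 0 := by
        unfold cn
        rw [if_neg (by
          intro hc
          rcases Finset.mem_insert.mp hc with h | h
          · exact hwv h.symm
          · exact hvs h)]
      rw [this, mul_zero]

open scoped Classical in
/-- the link identity. -/
lemma link_id (v : V) (u : Finset V → ℝ) {s : Finset V}
    (hs : s ⊆ A.filter (fun w => w ≠ v ∧ ¬ H.Adj v w)) :
    db H (A.filter (fun w => w ≠ v ∧ ¬ H.Adj v w)) (lk v u) s =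
      - lk v (db H A u) s := by
  set Av := A.filter (fun w => w ≠ v ∧ ¬ H.Adj v w) with hAv
  have hvns : v ∉ s := fun hc => ((Finset.mem_filter.mp (hs hc)).2.1) rfl
  have hE : exts H Av s = exts H A (insert v s) := by
    apply Finset.ext
    intro w
    constructor
    · intro hw
      rcases mem_exts.mp hw with ⟨h1, h2, h3⟩
      rcases Finset.mem_filter.mp h1 with ⟨hwA, hwv, hwadj⟩
      refine mem_exts.mpr ⟨hwA, ?_, ?_⟩
      · intro hc
        rcases Finset.mem_insert.mp hc with rfl | hc'
        · exact hwv rfl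
        · exact h2 hc'
      · intro x hx
        rcases Finset.mem_insert.mp hx with rfl | hx'
        · exact fun a => hwadj a.symm
        · exact h3 x hx'
    · intro hw
      rcases mem_exts.mp hw with ⟨h1, h2, h3⟩
      have hwv : w ≠ v := by
        intro hc; exact h2 (hc ▸ Finset.mem_insert_self v s)
      refine mem_exts.mpr ⟨Finset.mem_filter.mpr ⟨h1, hwv, fun a =>
        h3 v (Finset.mem_insert_self v s) a.symm⟩, fun hc =>
        h2 (Finset.mem_insert_of_mem hc), fun x hx =>
        h3 x (Finset.mem_insert_of_mem hx)⟩
  have hlk : lk v (db H A u) s = sgn v (insert v s) * db H A u (insert v s) := by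
    unfold lk; rw [if_neg hvns]
  rw [hlk]
  unfold db
  rw [hE, Finset.mul_sum, ← Finset.sum_neg_distrib]
  apply Finset.sum_congr rfl
  intro w hw
  rcases mem_exts.mp hw with ⟨h1, h2, h3⟩
  have hwv : w ≠ v := by
    intro hc; exact h2 (hc ▸ Finset.mem_insert_self v s)
  have hws : w ∉ s := fun hc => h2 (Finset.mem_insert_of_mem hc)
  have hlk2 : lk v u (insert w s) = sgn v (insert v (insert w s)) *
      u (insert v (insert w s)) := by
    unfold lk
    rw [if_neg (by
      intro hc
      rcases Finset.mem_insert.mp hc with h | h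
      · exact hwv h.symm
      · exact hvns h)]
  rw [hlk2]
  have harg : insert v (insert w s) = insert w (insert v s) := Finset.insert_comm _ _ _
  have key := sgn_key2 (v := v) (w := w) s hvns hws hwv.symm
  rw [harg] at key ⊢
  linear_combination (u (insert w (insert v s))) * key

end coreids
section arith

variable {H H' : SimpleGraph V} {A A₀ : Finset V} {f : V → ℝ}

open scoped Classical in
lemma constraints_mono (hle : H' ≤ H) (hsub : A₀ ⊆ A) (hf : ∀ x, 0 ≤ f x)
    (hc : ∀ v ∈ A, ∑ u ∈ A.filter (fun u => H.Adj v u), f u * (f u + f v) ≤ 1) :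
    ∀ v ∈ A₀, ∑ u ∈ A₀.filter (fun u => H'.Adj v u), f u * (f u + f v) ≤ 1 := by
  intro v hv
  refine le_trans (Finset.sum_le_sum_of_subset_of_nonneg ?_ ?_) (hc v (hsub hv))
  · intro u hu
    rcases Finset.mem_filter.mp hu with ⟨h1, h2⟩
    exact Finset.mem_filter.mpr ⟨hsub h1, hle h2⟩
  · intro u _ _
    have := hf u; have := hf v; nlinarith

open scoped Classical in
lemma sum_sq_nbr_le (hf : ∀ x, 0 ≤ f x) {v : V} (hv : v ∈ A)
    (hc : ∑ u ∈ A.filter (fun u => H.Adj v u), f u * (f u + f v) ≤ 1) :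
    ∑ u ∈ A.filter (fun u => H.Adj v u), f u ^ 2 ≤ 1 := by
  refine le_trans (Finset.sum_le_sum ?_) hc
  intro u _
  have := hf u; have := hf v; nlinarith

open scoped Classical in
/-- the good edge inequality. -/
lemma good_edge (hf : ∀ x, 0 ≤ f x)
    (hc : ∀ v ∈ A, ∑ u ∈ A.filter (fun u => H.Adj v u), f u * (f u + f v) ≤ 1)
    {x y : V} (hx : x ∈ A) (hy : y ∈ A) (hfy : 0 < f y)
    (hmax : ∀ u ∈ A, ∀ w ∈ A, H.Adj u w → f u * f w ≤ f x * f y)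
    (hord : ∑ u ∈ A.filter (fun u => H.Adj y u), f u ≤
      ∑ u ∈ A.filter (fun u => H.Adj x u), f u) :
    ∑ u ∈ A.filter (fun u => H.Adj x u ∨ H.Adj y u), f u ^ 2 ≤ 1 := by
  set NN := A.filter (fun u => H.Adj x u ∨ H.Adj y u) with hNN
  set Nx := A.filter (fun u => H.Adj x u) with hNx
  set Ny := A.filter (fun u => H.Adj y u) with hNy
  have hsplit : ∑ u ∈ NN, f u ^ 2 =
      ∑ u ∈ NN.filter (fun u => H.Adj x u), f u ^ 2 +
      ∑ u ∈ NN.filter (fun u => ¬ H.Adj x u), f u ^ 2 :=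
    (Finset.sum_filter_add_sum_filter_not NN _ _).symm
  have hNNx : NN.filter (fun u => H.Adj x u) = Nx := by
    apply Finset.ext; intro u
    simp only [hNN, hNx, Finset.mem_filter]
    tauto
  have hb1 : ∑ u ∈ Nx, f u ^ 2 ≤ 1 - f x * ∑ u ∈ Nx, f u := by
    have h1 : ∑ u ∈ Nx, f u * (f u + f x) ≤ 1 := hc x hx
    have h2 : ∑ u ∈ Nx, f u * (f u + f x) =
        ∑ u ∈ Nx, f u ^ 2 + f x * ∑ u ∈ Nx, f u := by
      rw [Finset.mul_sum, ← Finset.sum_add_distrib]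
      apply Finset.sum_congr rfl; intros; ring
    rw [h2] at h1
    linarith
  have hb2 : ∑ u ∈ NN.filter (fun u => ¬ H.Adj x u), f u ^ 2 ≤
      f x * ∑ u ∈ Nx, f u := by
    have hsub : NN.filter (fun u => ¬ H.Adj x u) ⊆ Ny := by
      intro u hu
      simp only [hNN, hNy, Finset.mem_filter] at hu ⊢
      tauto
    have hfu : ∀ u ∈ NN.filter (fun u => ¬ H.Adj x u), f u ^ 2 ≤ f x * f u := by
      intro u hu
      have huy : u ∈ Ny := hsub hu
      rcases Finset.mem_filter.mp huy with ⟨huA, hadj⟩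
      have hle : f y * f u ≤ f x * f y := hmax y hy u huA hadj
      have : f u ≤ f x := by
        have := hfy
        nlinarith
      have := hf u
      nlinarith
    calc ∑ u ∈ NN.filter (fun u => ¬ H.Adj x u), f u ^ 2
        ≤ ∑ u ∈ NN.filter (fun u => ¬ H.Adj x u), f x * f u :=
          Finset.sum_le_sum hfu
      _ = f x * ∑ u ∈ NN.filter (fun u => ¬ H.Adj x u), f u := by
          rw [Finset.mul_sum]
      _ ≤ f x * ∑ u ∈ Ny, f u := by
          apply mul_le_mul_of_nonneg_left _ (hf x)
          exact Finset.sum_le_sum_of_subset_of_nonneg hsub (fun u _ _ => hf u)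
      _ ≤ f x * ∑ u ∈ Nx, f u := mul_le_mul_of_nonneg_left hord (hf x)
  rw [hsplit, hNNx]
  linarith

end arith

section mulemmas

variable {H H' : SimpleGraph V} {A A₀ : Finset V}

open scoped Classical in
lemma edges_mono (hle : H' ≤ H) (hsub : A₀ ⊆ A) :
    ((A₀ ×ˢ A₀).filter (fun p => H'.Adj p.1 p.2)) ⊆
    ((A ×ˢ A).filter (fun p => H.Adj p.1 p.2)) := by
  intro p hp
  rcases Finset.mem_filter.mp hp with ⟨h1, h2⟩
  rcases Finset.mem_product.mp h1 with ⟨h3, h4⟩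
  exact Finset.mem_filter.mpr ⟨Finset.mem_product.mpr ⟨hsub h3, hsub h4⟩, hle h2⟩

open scoped Classical in
lemma mu_lt_of_vertex (hle : H' ≤ H) (hsub : A₀ ⊆ A) {v : V} (hvA : v ∈ A)
    (hv0 : v ∉ A₀) : mu H' A₀ < mu H A := by
  unfold mu
  have h1 : A₀.card < A.card :=
    Finset.card_lt_card (Finset.ssubset_iff_of_subset hsub |>.mpr ⟨v, hvA, hv0⟩)
  have h2 := Finset.card_le_card (edges_mono hle hsub)
  omega

open scoped Classical in
lemma mu_lt_of_edge (hle : H' ≤ H) {x y : V} (hx : x ∈ A) (hy : y ∈ A)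
    (h1 : H.Adj x y) (h2 : ¬ H'.Adj x y) : mu H' A < mu H A := by
  unfold mu
  have hcard : ((A ×ˢ A).filter (fun p => H'.Adj p.1 p.2)).card <
      ((A ×ˢ A).filter (fun p => H.Adj p.1 p.2)).card := by
    apply Finset.card_lt_card
    refine Finset.ssubset_iff_of_subset (edges_mono hle le_rfl) |>.mpr ?_
    exact ⟨(x, y), Finset.mem_filter.mpr ⟨Finset.mem_product.mpr ⟨hx, hy⟩, h1⟩,
      fun hc => h2 (Finset.mem_filter.mp hc).2⟩
  omega

end mulemmas
section supplemmas

variable {H : SimpleGraph V} {A B : Finset V}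

open scoped Classical in
/-- support of a link chain. -/
lemma lk_supp {v : V} {m : ℕ} {u : Finset V → ℝ}
    (hus : ∀ r, u r ≠ 0 → gd H A (m+1) r) :
    ∀ s, lk v u s ≠ 0 → gd H (A.filter (fun w => w ≠ v ∧ ¬ H.Adj v w)) m s := by
  intro s hbs
  unfold lk at hbs
  by_cases hvs : v ∈ s
  · rw [if_pos hvs] at hbs; exact absurd rfl hbs
  · rw [if_neg hvs] at hbs
    have hu : u (insert v s) ≠ 0 := by
      intro h0; rw [h0, mul_zero] at hbs; exact hbs rfl
    obtain ⟨h1, h2, h3⟩ := hus _ hu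
    refine ⟨?_, ?_, indep_subset (Finset.subset_insert v s) h3⟩
    · intro w hws
      refine Finset.mem_filter.mpr ⟨h1 (Finset.mem_insert_of_mem hws), ?_, ?_⟩
      · intro hcq; subst hcq; exact hvs hws
      · exact h3 v (Finset.mem_insert_self v s) w (Finset.mem_insert_of_mem hws)
    · have := Finset.card_insert_of_notMem hvs
      rw [h2] at this
      omega

/-- support of a cone chain. -/
lemma cn_supp {v : V} {m : ℕ} (hvA : v ∈ A) (hBsub : B ⊆ A)
    (hBv : ∀ w ∈ B, ¬ H.Adj v w) {c : Finset V → ℝ}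
    (hcs : ∀ r, c r ≠ 0 → gd H B m r) :
    ∀ r, cn v c r ≠ 0 → gd H A (m+1) r ∧ v ∈ r ∧ r.erase v ⊆ B := by
  intro r hr
  unfold cn at hr
  by_cases hvr : v ∈ r
  swap
  · rw [if_neg hvr] at hr; exact absurd rfl hr
  rw [if_pos hvr] at hr
  have hcne : c (r.erase v) ≠ 0 := by
    intro h0; rw [h0, mul_zero] at hr; exact hr rfl
  obtain ⟨h1, h2, h3⟩ := hcs _ hcne
  have hrins : r = insert v (r.erase v) := (Finset.insert_erase hvr).symm
  refine ⟨⟨?_, ?_, ?_⟩, hvr, h1⟩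
  · intro w hw
    by_cases hwv : w = v
    · subst hwv; exact hvA
    · exact hBsub (h1 (Finset.mem_erase.mpr ⟨hwv, hw⟩))
  · rw [hrins, Finset.card_insert_of_notMem (Finset.notMem_erase v r), h2]
  · rw [hrins]
    exact indep_insert h3 (fun w hw => hBv w (h1 hw))

open scoped Classical in
/-- numeric: removing a closed neighbourhood costs at most `1 + f v ^ 2`. -/
lemma sum_sq_Av (f : V → ℝ) (hf : ∀ x, 0 ≤ f x) {v : V} (hvA : v ∈ A)
    (hcv : ∑ u ∈ A.filter (fun u => H.Adj v u), f u * (f u + f v) ≤ 1) :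
    ∑ w ∈ A, f w ^ 2 - 1 - f v ^ 2 ≤
      ∑ w ∈ A.filter (fun w => w ≠ v ∧ ¬ H.Adj v w), f w ^ 2 := by
  have hsplit := Finset.sum_filter_add_sum_filter_not A
    (fun w => w ≠ v ∧ ¬ H.Adj v w) (fun w => f w ^ 2)
  have hsub : A.filter (fun w => ¬ (w ≠ v ∧ ¬ H.Adj v w)) ⊆
      insert v (A.filter (fun u => H.Adj v u)) := by
    intro w hw
    rcases Finset.mem_filter.mp hw with ⟨hwA, hwp⟩
    push_neg at hwp
    by_cases hwv : w = v
    · subst hwv; exact Finset.mem_insert_self _ _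
    · exact Finset.mem_insert_of_mem (Finset.mem_filter.mpr ⟨hwA, hwp hwv⟩)
  have hb : ∑ w ∈ A.filter (fun w => ¬ (w ≠ v ∧ ¬ H.Adj v w)), f w ^ 2 ≤
      f v ^ 2 + ∑ w ∈ A.filter (fun u => H.Adj v u), f w ^ 2 := by
    refine le_trans (Finset.sum_le_sum_of_subset_of_nonneg hsub
      (fun w _ _ => sq_nonneg (f w))) ?_
    rw [Finset.sum_insert (fun hcq => H.irrefl (Finset.mem_filter.mp hcq).2)]
  have hnb := sum_sq_nbr_le hf hvA hcv
  linarith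

end supplemmas

lemma lk_of_not_mem {v : V} {u : Finset V → ℝ} {s : Finset V}
    (h : v ∉ s) : lk v u s = sgn v (insert v s) * u (insert v s) := by
  unfold lk; rw [if_neg h]

lemma lk_of_mem {v : V} {u : Finset V → ℝ} {s : Finset V}
    (h : v ∈ s) : lk v u s = 0 := by
  unfold lk; rw [if_pos h]
section mainthm

open scoped Classical in
theorem main_total : ∀ (n : ℕ) (H : SimpleGraph V) (A : Finset V), mu H A ≤ n →
    ∀ (f : V → ℝ), (∀ x, 0 ≤ f x) →
    (∀ v ∈ A, ∑ u ∈ A.filter (fun u => H.Adj v u), f u * (f u + f v) ≤ 1) →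
    ∀ (k : ℕ), (k : ℝ) < ∑ v ∈ A, f v ^ 2 →
    ∀ u : Finset V → ℝ, (∀ s, u s ≠ 0 → gd H A k s) → db H A u = 0 →
    ∃ c : Finset V → ℝ, (∀ s, c s ≠ 0 → gd H A (k+1) s) ∧ db H A c = u := by
  intro n
  induction n using Nat.strong_induction_on with
  | _ n IH =>
  intro H A hmu f hf hc k hk u hsupp hcyc
  have hS0 : (0:ℝ) < ∑ v ∈ A, f v ^ 2 := lt_of_le_of_lt (Nat.cast_nonneg k) hk
  match k, hk, hsupp with
  | 0, hk, hsupp =>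
    -- base case k = 0
    obtain ⟨v₀, hv₀A, hv₀⟩ := Finset.exists_ne_zero_of_sum_ne_zero hS0.ne'
    refine ⟨fun s => if s = {v₀} then u ∅ else 0, ?_, ?_⟩
    · intro s hs
      have hs' : (if s = {v₀} then u ∅ else 0 : ℝ) ≠ 0 := hs
      have hseq : s = {v₀} := by
        by_contra h
        rw [if_neg h] at hs'
        exact hs' rfl
      subst hseq
      refine ⟨Finset.singleton_subset_iff.mpr hv₀A, Finset.card_singleton _, ?_⟩
      intro a ha b hb
      rw [Finset.mem_singleton] at ha hb
      subst ha; subst hb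
      exact H.irrefl
    · funext s
      by_cases hs : s = ∅
      · subst hs
        show db H A (fun s => if s = {v₀} then u ∅ else 0) ∅ = u ∅
        unfold db
        rw [Finset.sum_eq_single_of_mem v₀
          (mem_exts.mpr ⟨hv₀A, Finset.notMem_empty _, fun x hx => absurd hx
            (Finset.notMem_empty _)⟩)]
        · show sgn v₀ {v₀} * (if ({v₀} : Finset V) = {v₀} then u ∅ else 0) = u ∅
          rw [if_pos rfl]
          have hsg : sgn v₀ {v₀} = 1 := by
            unfold sgn
            rw [Finset.filter_singleton, if_neg (lt_irrefl v₀), Finset.card_empty, pow_zero]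
          rw [hsg, one_mul]
        · intro w hw hwv
          show sgn w {w} * (if ({w} : Finset V) = {v₀} then u ∅ else 0) = 0
          rw [if_neg (by
            intro hc'
            exact hwv (Finset.singleton_inj.mp hc')), mul_zero]
      · have hu0 : u s = 0 := by
          by_contra h
          exact hs (Finset.card_eq_zero.mp (hsupp s h).2.1)
        rw [hu0]
        apply Finset.sum_eq_zero
        intro w hw
        show sgn w (insert w s) * (if insert w s = {v₀} then u ∅ else 0) = 0
        rw [if_neg, mul_zero]
        intro hc'
        have hsub : s ⊆ {v₀} := hc' ▸ Finset.subset_insert w s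
        rcases Finset.subset_singleton_iff.mp hsub with rfl | rfl
        · exact hs rfl
        · have hwv : w = v₀ := by
            have hm := Finset.mem_insert_self w ({v₀} : Finset V)
            rw [hc', Finset.mem_singleton] at hm
            exact hm
          exact (mem_exts.mp hw).2.1 (Finset.mem_singleton.mpr hwv)
  | (k' + 1), hk, hsupp =>
  by_cases hzero : ∃ v ∈ A, f v = 0
  · -- CASE 1 : vertex with weight 0
    obtain ⟨v, hvA, hfv⟩ := hzero
    have hAvsub : (A.filter (fun w => w ≠ v ∧ ¬ H.Adj v w)) ⊆ A := Finset.filter_subset _ _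
    set Av := A.filter (fun w => w ≠ v ∧ ¬ H.Adj v w) with hAvdef
    have hvAv : v ∉ Av := by
      rw [hAvdef]
      intro hcq
      exact (Finset.mem_filter.mp hcq).2.1 rfl
    have hbsupp : ∀ s, lk v u s ≠ 0 → gd H Av k' s := lk_supp hsupp
    have hcyc' : ∀ r, db H A u r = 0 := fun r => by rw [hcyc]; rfl
    have hbcyc : db H Av (lk v u) = 0 := by
      funext s
      rw [Pi.zero_apply]
      by_cases hgood : s ⊆ Av ∧ indepS H s
      · rw [hAvdef] at hgood ⊢
        rw [link_id v u hgood.1]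
        have h0 : db H A u (insert v s) = 0 := hcyc' _
        unfold lk
        split_ifs with h
        · exact neg_zero
        · rw [h0, mul_zero, neg_zero]
      · exact db_bad (fun r hr => ⟨(hbsupp r hr).1, (hbsupp r hr).2.2⟩) hgood
    -- numeric bound for the link complex
    have hnumAv : (k' : ℝ) < ∑ w ∈ Av, f w ^ 2 := by
      have := sum_sq_Av f hf hvA (hc v hvA)
      rw [← hAvdef] at this
      have hkc : ((k' + 1 : ℕ) : ℝ) = (k' : ℝ) + 1 := by push_cast; ring
      rw [hkc] at hk
      nlinarith [this, hk, hfv]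
    obtain ⟨c', hc'supp, hc'db⟩ := IH (mu H Av)
      (lt_of_lt_of_le (mu_lt_of_vertex le_rfl hAvsub hvA hvAv) hmu) H Av le_rfl f hf
      (constraints_mono le_rfl hAvsub hf hc) k' hnumAv (lk v u) hbsupp hbcyc
    -- the cone d and the corrected cycle z2
    have hc'A : ∀ r, c' r ≠ 0 → r ⊆ A ∧ indepS H r ∧ ∀ x ∈ r, ¬ H.Adj v x := by
      intro r hr
      obtain ⟨h1, _, h3⟩ := hc'supp r hr
      refine ⟨h1.trans hAvsub, h3, fun x hx => ?_⟩
      exact (Finset.mem_filter.mp (hAvdef ▸ h1 hx)).2.2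
    have hdsupp := cn_supp hvA hAvsub
      (fun w hw => (Finset.mem_filter.mp (hAvdef ▸ hw)).2.2) hc'supp
    have hdbc' : db H A c' = lk v u := by
      funext s
      rw [db_ambient hAvsub (fun r hr => (hc'supp r hr).1) s]
      exact congrFun hc'db s
    set z2 := fun s => u s + db H A (cn v c') s with hz2def
    have hz2supp : ∀ s, z2 s ≠ 0 → gd H (A.erase v) (k' + 1) s := by
      intro s hs
      have hs' : u s + db H A (cn v c') s ≠ 0 := hs
      by_cases hgood : s ⊆ A ∧ indepS H s
      · -- use cone identity
        have hce := cone_id v c' hgood.1 hgood.2 hc'A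
        rw [hdbc'] at hce
        have hucard : s.card = k' + 1 := by
          by_contra hcard
          have h1 : u s = 0 := by
            by_contra h; exact hcard (hsupp s h).2.1
          have h2 : db H A (cn v c') s = 0 :=
            db_wrong_card (fun r hr => (hdsupp r hr).1.2.1) hcard
          rw [h1, h2] at hs'; exact hs' (add_zero 0)
        by_cases hvs : v ∈ s
        · -- z2 vanishes on faces containing v : contradiction
          exfalso
          have hcval : c' s = 0 := by
            by_contra h
            exact hvAv ((hc'supp s h).1 hvs)
          have hlkval : cn v (lk v u) s = sgn v s * (sgn v s * u s) := by
            unfold cn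
            rw [if_pos hvs]
            unfold lk
            rw [if_neg (Finset.notMem_erase v s), Finset.insert_erase hvs]
          rw [hce, if_pos (Or.inl hvs), hcval, hlkval] at hs'
          apply hs'
          have := sgn_mul_self v s
          linear_combination (-(u s)) * this
        · refine ⟨?_, hucard, hgood.2⟩
          intro w hw
          exact Finset.mem_erase.mpr ⟨fun hcq => hvs (hcq ▸ hw), hgood.1 hw⟩
      · exfalso
        have h1 : u s = 0 := by
          by_contra h
          exact hgood ⟨(hsupp s h).1, (hsupp s h).2.2⟩
        have h2 : db H A (cn v c') s = 0 :=
          db_bad (fun r hr => ⟨(hdsupp r hr).1.1, (hdsupp r hr).1.2.2⟩) hgood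
        rw [h1, h2] at hs'; exact hs' (add_zero 0)
    have hz2cyc : db H (A.erase v) z2 = 0 := by
      funext s
      rw [Pi.zero_apply]
      rw [← db_ambient (Finset.erase_subset v A) (fun r hr => (hz2supp r hr).1) s]
      rw [hz2def, db_add, hcyc' s, db_db, add_zero]
    have hnumAe : ((k' + 1 : ℕ) : ℝ) < ∑ w ∈ A.erase v, f w ^ 2 := by
      have herase : ∑ w ∈ A.erase v, f w ^ 2 = (∑ w ∈ A, f w ^ 2) - f v ^ 2 :=
        Finset.sum_erase_eq_sub hvA
      rw [herase, hfv]
      simpa using hk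
    obtain ⟨c₃, hc₃supp, hc₃db⟩ := IH (mu H (A.erase v))
      (lt_of_lt_of_le (mu_lt_of_vertex le_rfl (Finset.erase_subset v A) hvA
        (Finset.notMem_erase v A)) hmu) H (A.erase v) le_rfl f hf
      (constraints_mono le_rfl (Finset.erase_subset v A) hf hc) (k' + 1) hnumAe
      z2 hz2supp hz2cyc
    refine ⟨fun s => c₃ s - cn v c' s, ?_, ?_⟩
    · intro s hs
      have hs' : c₃ s - cn v c' s ≠ 0 := hs
      by_cases h3 : c₃ s ≠ 0
      · obtain ⟨h1, h2, h4⟩ := hc₃supp s h3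
        exact ⟨h1.trans (Finset.erase_subset v A), h2, h4⟩
      · push_neg at h3
        have hd : cn v c' s ≠ 0 := by
          intro h0; rw [h3, h0, sub_zero] at hs'; exact hs' rfl
        exact (hdsupp s hd).1
    · funext s
      rw [db_sub]
      have h1 : db H A c₃ s = z2 s := by
        rw [db_ambient (Finset.erase_subset v A) (fun r hr => (hc₃supp r hr).1) s]
        exact congrFun hc₃db s
      rw [h1]
      show (u s + db H A (cn v c') s) - db H A (cn v c') s = u s
      ring

  · -- all weights positive
    push_neg at hzero
    have hcyc' : ∀ r, db H A u r = 0 := fun r => by rw [hcyc]; rfl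
    by_cases hiso : ∃ v ∈ A, ∀ w ∈ A, ¬ H.Adj v w
    · -- CASE 2 : isolated vertex, cone
      obtain ⟨v, hvA, hviso⟩ := hiso
      have huA : ∀ r, u r ≠ 0 → r ⊆ A ∧ indepS H r ∧ ∀ x ∈ r, ¬ H.Adj v x := by
        intro r hr
        obtain ⟨h1, _, h3⟩ := hsupp r hr
        exact ⟨h1, h3, fun x hx => hviso x (h1 hx)⟩
      have hcnsupp := cn_supp hvA (Finset.Subset.refl A) hviso hsupp
      refine ⟨cn v u, fun r hr => (hcnsupp r hr).1, ?_⟩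
      funext s
      by_cases hgood : s ⊆ A ∧ indepS H s
      · have hce := cone_id v u hgood.1 hgood.2 huA
        have hz : cn v (db H A u) s = 0 := by
          unfold cn
          split_ifs with h
          · rw [hcyc', mul_zero]
          · rfl
        rw [hce, hz, sub_zero]
        by_cases hu0 : u s = 0
        · rw [hu0, ite_self]
        · rw [if_pos]
          by_cases hvs : v ∈ s
          · exact Or.inl hvs
          · exact Or.inr (mem_exts.mpr ⟨hvA, hvs, fun x hx => hviso x (hgood.1 hx)⟩)
      · have h1 : u s = 0 := by
          by_contra h; exact hgood ⟨(hsupp s h).1, (hsupp s h).2.2⟩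
        rw [db_bad (fun r hr => ⟨(hcnsupp r hr).1.1, (hcnsupp r hr).1.2.2⟩) hgood, h1]
    · -- CASE 3 : delete a maximal edge
      push_neg at hiso
      -- pick the edge maximizing f x * f y
      have hEne : ((A ×ˢ A).filter (fun q => H.Adj q.1 q.2)).Nonempty := by
        obtain ⟨v0, hv0A, _⟩ := Finset.exists_ne_zero_of_sum_ne_zero hS0.ne'
        obtain ⟨w0, hw0A, hw0adj⟩ := hiso v0 hv0A
        exact ⟨(v0, w0), Finset.mem_filter.mpr
          ⟨Finset.mem_product.mpr ⟨hv0A, hw0A⟩, hw0adj⟩⟩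
      obtain ⟨p, hpE, hpmax⟩ := Finset.exists_max_image
        ((A ×ˢ A).filter (fun q => H.Adj q.1 q.2)) (fun q => f q.1 * f q.2) hEne
      rcases Finset.mem_filter.mp hpE with ⟨hpprod, hpadj⟩
      rcases Finset.mem_product.mp hpprod with ⟨hp1A, hp2A⟩
      have hmaxE : ∀ a ∈ A, ∀ b ∈ A, H.Adj a b → f a * f b ≤ f p.1 * f p.2 :=
        fun a ha b hb hab => hpmax (a, b)
          (Finset.mem_filter.mpr ⟨Finset.mem_product.mpr ⟨ha, hb⟩, hab⟩)
      obtain ⟨x, y, hxA, hyA, hadj, hmaxq, hord⟩ :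
          ∃ x y, x ∈ A ∧ y ∈ A ∧ H.Adj x y ∧
            (∀ a ∈ A, ∀ b ∈ A, H.Adj a b → f a * f b ≤ f x * f y) ∧
            (∑ w ∈ A.filter (fun w => H.Adj y w), f w ≤
              ∑ w ∈ A.filter (fun w => H.Adj x w), f w) := by
        rcases le_total (∑ w ∈ A.filter (fun w => H.Adj p.2 w), f w)
          (∑ w ∈ A.filter (fun w => H.Adj p.1 w), f w) with hord | hord
        · exact ⟨p.1, p.2, hp1A, hp2A, hpadj, hmaxE, hord⟩
        · refine ⟨p.2, p.1, hp2A, hp1A, hpadj.symm, fun a ha b hb hab => ?_, hord⟩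
          calc f a * f b ≤ f p.1 * f p.2 := hmaxE a ha b hb hab
            _ = f p.2 * f p.1 := mul_comm _ _
      have hxy : x ≠ y := hadj.ne
      have hfy : 0 < f y := (hf y).lt_of_ne (Ne.symm (hzero y hyA))
      have hloss := good_edge hf hc hxA hyA hfy hmaxq hord
      -- the graph with the edge removed
      set H' := H.deleteEdges {s(x,y)} with hH'def
      have hH'le : H' ≤ H := SimpleGraph.deleteEdges_le _
      have hH'adj : ∀ a b, H'.Adj a b ↔
          H.Adj a b ∧ ¬ (a = x ∧ b = y ∨ a = y ∧ b = x) := by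
        intro a b
        rw [hH'def, SimpleGraph.deleteEdges_adj, Set.mem_singleton_iff, Sym2.eq_iff]
      have hH'xy : ¬ H'.Adj x y := fun hcq =>
        ((hH'adj x y).mp hcq).2 (Or.inl ⟨rfl, rfl⟩)
      have hindHH' : ∀ r, indepS H r → indepS H' r :=
        fun r h3 a ha b hb hab => h3 a ha b hb (hH'le hab)
      -- first induction : same A, fewer edges
      have hsuppH' : ∀ s, u s ≠ 0 → gd H' A (k'+1) s := by
        intro s hsn
        obtain ⟨h1, h2, h3⟩ := hsupp s hsn
        exact ⟨h1, h2, hindHH' s h3⟩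
      have hcycH' : db H' A u = 0 := by
        funext s
        rw [Pi.zero_apply, db_graph hH'le (fun r hr => (hsupp r hr).2.2) s]
        exact hcyc' s
      obtain ⟨c1, hc1supp, hc1db⟩ := IH (mu H' A)
        (lt_of_lt_of_le (mu_lt_of_edge hH'le hxA hyA hadj hH'xy) hmu) H' A le_rfl f hf
        (constraints_mono hH'le (Finset.Subset.refl A) hf hc) (k'+1) hk u hsuppH' hcycH'
      have hc1db' : ∀ r, db H' A c1 r = u r := fun r => by rw [hc1db]
      -- the double link complex
      have hAvysub : (A.filter (fun w => w ≠ y ∧ ¬ H'.Adj y w)) ⊆ A :=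
        Finset.filter_subset _ _
      set Avy := A.filter (fun w => w ≠ y ∧ ¬ H'.Adj y w) with hAvydef
      have hA2Avy : (Avy.filter (fun w => w ≠ x ∧ ¬ H'.Adj x w)) ⊆ Avy :=
        Finset.filter_subset _ _
      set A2 := Avy.filter (fun w => w ≠ x ∧ ¬ H'.Adj x w) with hA2def
      have hA2A : A2 ⊆ A := hA2Avy.trans hAvysub
      have hxAvy : x ∈ Avy := by
        rw [hAvydef]
        exact Finset.mem_filter.mpr ⟨hxA, hxy, fun h => hH'xy h.symm⟩
      have hyAvy : y ∉ Avy := by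
        rw [hAvydef]
        intro hq
        exact (Finset.mem_filter.mp hq).2.1 rfl
      have hxA2 : x ∉ A2 := by
        rw [hA2def]
        intro hq
        exact (Finset.mem_filter.mp hq).2.1 rfl
      have hyA2 : y ∉ A2 := fun hq => hyAvy (hA2Avy hq)
      have hA2mem : ∀ w ∈ A2, w ∈ A ∧ ¬ H'.Adj y w ∧ ¬ H'.Adj x w := by
        intro w hw
        rw [hA2def] at hw
        rcases Finset.mem_filter.mp hw with ⟨hw1, _, hw3⟩
        rw [hAvydef] at hw1
        rcases Finset.mem_filter.mp hw1 with ⟨hwA, _, hw2⟩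
        exact ⟨hwA, hw2, hw3⟩
      -- numeric bound for the double link complex
      have hA2eq : A2 = A.filter (fun w => ¬ (H.Adj x w ∨ H.Adj y w)) := by
        rw [hA2def, hAvydef]
        apply Finset.ext
        intro w
        simp only [Finset.mem_filter]
        constructor
        · rintro ⟨⟨hwA, hwy, hwny⟩, hwx, hwnx⟩
          refine ⟨hwA, ?_⟩
          rintro (hadjx | hadjy)
          · apply hwnx
            rw [hH'adj]
            refine ⟨hadjx, ?_⟩
            rintro (⟨-, hq⟩ | ⟨hq, -⟩)
            · exact hwy hq
            · exact hxy hq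
          · apply hwny
            rw [hH'adj]
            refine ⟨hadjy, ?_⟩
            rintro (⟨hq, -⟩ | ⟨-, hq⟩)
            · exact hxy hq.symm
            · exact hwx hq
        · rintro ⟨hwA, hwn⟩
          push_neg at hwn
          obtain ⟨hnx, hny⟩ := hwn
          have hwx : w ≠ x := by
            intro hq; subst hq; exact hny hadj.symm
          have hwy : w ≠ y := by
            intro hq; subst hq; exact hnx hadj
          exact ⟨⟨hwA, hwy, fun h => hny (hH'le h)⟩, hwx, fun h => hnx (hH'le h)⟩
      have hnumA2 : (k' : ℝ) < ∑ w ∈ A2, f w ^ 2 := by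
        have hsplit := Finset.sum_filter_add_sum_filter_not A
          (fun w => H.Adj x w ∨ H.Adj y w) (fun w => f w ^ 2)
        rw [← hA2eq] at hsplit
        have hkc : ((k' + 1 : ℕ) : ℝ) = (k' : ℝ) + 1 := by push_cast; ring
        rw [hkc] at hk
        linarith
      -- the double link chain
      have hb1supp : ∀ s, lk y c1 s ≠ 0 → gd H' Avy (k'+1) s := by
        rw [hAvydef]; convert lk_supp (v := y) hc1supp
      have hb2supp : ∀ s, lk x (lk y c1) s ≠ 0 → gd H' A2 k' s := by
        rw [hA2def]; convert lk_supp (v := x) hb1supp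
      have hb2cyc : db H' A2 (lk x (lk y c1)) = 0 := by
        funext s
        rw [Pi.zero_apply]
        by_cases hgood : s ⊆ A2 ∧ indepS H' s
        · have hsA2 : s ⊆ Avy.filter (fun w => w ≠ x ∧ ¬ H'.Adj x w) := hA2def ▸ hgood.1
          have hl' : db H' A2 (lk x (lk y c1)) s = - lk x (db H' Avy (lk y c1)) s := by
            rw [hA2def]
            convert link_id (H := H') (A := Avy) x (lk y c1) (s := s) (by convert hsA2) using 2
            ext; simp only [Finset.mem_filter]
          rw [hl', neg_eq_zero]
          have hxs : x ∉ s := fun h => hxA2 (hgood.1 h)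
          rw [lk_of_not_mem hxs]
          have hins : insert x s ⊆ A.filter (fun w => w ≠ y ∧ ¬ H'.Adj y w) := by
            rw [← hAvydef]
            intro w hw
            rcases Finset.mem_insert.mp hw with rfl | hw'
            · exact hxAvy
            · exact hA2Avy (hgood.1 hw')
          rw [← hAvydef] at hins
          have hinner : db H' Avy (lk y c1) (insert x s) = 0 := by
            rw [hAvydef] at hins ⊢
            have hl2 : db H' (A.filter (fun w => w ≠ y ∧ ¬ H'.Adj y w)) (lk y c1) (insert x s) =
                - lk y (db H' A c1) (insert x s) := by
              convert link_id (H := H') (A := A) y c1 (s := insert x s) (by convert hins) using 2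
              ext; simp only [Finset.mem_filter]
            rw [hl2, neg_eq_zero]
            have hys : y ∉ insert x s := by
              intro hq
              rcases Finset.mem_insert.mp hq with hq' | hq'
              · exact hxy hq'.symm
              · exact hyA2 (hgood.1 hq')
            rw [lk_of_not_mem hys, hc1db']
            have hu0 : u (insert y (insert x s)) = 0 := by
              by_contra h
              exact (hsupp _ h).2.2 x
                (Finset.mem_insert_of_mem (Finset.mem_insert_self x s)) y
                (Finset.mem_insert_self y _) hadj
            rw [hu0, mul_zero]
          rw [hinner, mul_zero]
        · exact db_bad (fun r hr => ⟨(hb2supp r hr).1, (hb2supp r hr).2.2⟩) hgood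
      obtain ⟨c2, hc2supp, hc2db⟩ := IH (mu H' A2)
        (lt_of_lt_of_le (mu_lt_of_vertex hH'le hA2A hxA hxA2) hmu) H' A2 le_rfl f hf
        (constraints_mono hH'le hA2A hf hc) k' hnumA2 (lk x (lk y c1)) hb2supp hb2cyc
      -- double cone
      have hcnx := cn_supp (H := H') (A := Avy) (B := A2) hxAvy hA2Avy
        (fun w hw => (hA2mem w hw).2.2) hc2supp
      have hcny := cn_supp (H := H') (A := A) (B := Avy) hyA hAvysub
        (fun w hw => by
          rw [hAvydef] at hw
          exact (Finset.mem_filter.mp hw).2.2)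
        (fun r hr => (hcnx r hr).1)
      have hb2db' : ∀ r, db H' Avy c2 r = lk x (lk y c1) r := fun r => by
        rw [db_ambient hA2Avy (fun q hq => (hc2supp q hq).1) r]
        rw [hc2db]
      -- the chain c1 - ∂D vanishes on faces containing x and y
      have hxyzero : ∀ s, x ∈ s → y ∈ s →
          c1 s - db H' A (cn y (cn x c2)) s = 0 := by
        intro s hxs hys
        by_cases hgood : s ⊆ A ∧ indepS H' s
        · have hucn : ∀ r, cn x c2 r ≠ 0 →
              r ⊆ A ∧ indepS H' r ∧ ∀ w ∈ r, ¬ H'.Adj y w := by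
            intro r hr
            obtain ⟨⟨h1, _, h3⟩, _, _⟩ := hcnx r hr
            refine ⟨h1.trans hAvysub, h3, fun w hw => ?_⟩
            have := h1 hw
            rw [hAvydef] at this
            exact (Finset.mem_filter.mp this).2.2
          have hce := cone_id (H := H') (A := A) y (cn x c2) hgood.1 hgood.2 hucn
          have hcx0 : cn x c2 s = 0 := by
            unfold cn
            rw [if_pos hxs]
            have h0 : c2 (s.erase x) = 0 := by
              by_contra h
              exact hyA2 ((hc2supp _ h).1
                (Finset.mem_erase.mpr ⟨fun hq => hxy hq.symm, hys⟩))
            rw [h0, mul_zero]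
          have hyes : y ∈ s.erase x := Finset.mem_erase.mpr ⟨fun hq => hxy hq.symm, hys⟩
          have hambient : ∀ r, db H' A (cn x c2) r = db H' Avy (cn x c2) r := fun r =>
            db_ambient hAvysub (fun q hq => (hcnx q hq).1.1) r
          have ht1 : s.erase y ⊆ Avy := by
            intro w hw
            rcases Finset.mem_erase.mp hw with ⟨hwy, hws⟩
            rw [hAvydef]
            exact Finset.mem_filter.mpr ⟨hgood.1 hws, hwy,
              fun h => hgood.2 y hys w hws h⟩
          have ht2 : indepS H' (s.erase y) :=
            indep_subset (Finset.erase_subset y s) hgood.2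
          have hc2supp' : ∀ r, c2 r ≠ 0 →
              r ⊆ Avy ∧ indepS H' r ∧ ∀ w ∈ r, ¬ H'.Adj x w := by
            intro r hr
            exact ⟨(hc2supp r hr).1.trans hA2Avy, (hc2supp r hr).2.2,
              fun w hw => (hA2mem w ((hc2supp r hr).1 hw)).2.2⟩
          have hce2 := cone_id (H := H') (A := Avy) x c2 ht1 ht2 hc2supp'
          have hc20 : c2 (s.erase y) = 0 := by
            by_contra h
            exact hxA2 ((hc2supp _ h).1
              (Finset.mem_erase.mpr ⟨hxy, hxs⟩))
          have hxt : x ∈ s.erase y := Finset.mem_erase.mpr ⟨hxy, hxs⟩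
          have hcn2 : cn x (db H' Avy c2) (s.erase y) =
              sgn x (s.erase y) * (sgn x (s.erase y) * (sgn y s * c1 s)) := by
            unfold cn
            rw [if_pos hxt, hb2db']
            unfold lk
            rw [if_neg (Finset.notMem_erase x (s.erase y)), Finset.insert_erase hxt,
              if_neg (Finset.notMem_erase y s), Finset.insert_erase hys]
          have hcny_val : cn y (db H' A (cn x c2)) s =
              sgn y s * (db H' A (cn x c2)) (s.erase y) := by
            unfold cn
            rw [if_pos hys]
          have hfinal : db H' A (cn y (cn x c2)) s = c1 s := by
            rw [hce, hcx0, ite_self, zero_sub, hcny_val, hambient, hce2, hc20,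
              ite_self, zero_sub, hcn2]
            have e1 := sgn_mul_self x (s.erase y)
            have e2 := sgn_mul_self y s
            linear_combination (sgn y s * sgn y s * c1 s) * e1 + (c1 s) * e2
          rw [hfinal]
          ring
        · have h1 : c1 s = 0 := by
            by_contra h
            exact hgood ⟨(hc1supp s h).1, (hc1supp s h).2.2⟩
          have h2 : db H' A (cn y (cn x c2)) s = 0 :=
            db_bad (fun r hr => ⟨(hcny r hr).1.1, (hcny r hr).1.2.2⟩) hgood
          rw [h1, h2, sub_zero]
      have hc4supp : ∀ s, c1 s - db H' A (cn y (cn x c2)) s ≠ 0 →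
          gd H A (k' + 1 + 1) s := by
        intro s hs'
        have hgood : (s ⊆ A ∧ indepS H' s) ∧ s.card = k' + 1 + 1 := by
          by_cases h1 : c1 s ≠ 0
          · exact ⟨⟨(hc1supp s h1).1, (hc1supp s h1).2.2⟩, (hc1supp s h1).2.1⟩
          · push_neg at h1
            have h2 : db H' A (cn y (cn x c2)) s ≠ 0 := by
              intro h0; rw [h1, h0, sub_zero] at hs'; exact hs' rfl
            constructor
            · by_contra h
              exact h2 (db_bad (fun r hr => ⟨(hcny r hr).1.1, (hcny r hr).1.2.2⟩) h)
            · by_contra h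
              exact h2 (db_wrong_card (fun r hr => (hcny r hr).1.2.1) h)
        refine ⟨hgood.1.1, hgood.2, ?_⟩
        intro a ha b hb hab
        have hnadj' : ¬ H'.Adj a b := hgood.1.2 a ha b hb
        rw [hH'adj] at hnadj'
        push_neg at hnadj'
        have hpair := hnadj' hab
        have hxys : x ∈ s ∧ y ∈ s := by
          rcases hpair with ⟨ha', hb'⟩ | ⟨ha', hb'⟩
          · exact ⟨ha' ▸ ha, hb' ▸ hb⟩
          · exact ⟨hb' ▸ hb, ha' ▸ ha⟩
        exact absurd (hxyzero s hxys.1 hxys.2) hs'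
      refine ⟨fun s => c1 s - db H' A (cn y (cn x c2)) s,
        fun s hs => hc4supp s hs, ?_⟩
      funext s
      have hstep : db H' A (fun r => c1 r - db H' A (cn y (cn x c2)) r) s = u s := by
        rw [db_sub, hc1db' s, db_db, sub_zero]
      rw [← db_graph hH'le (fun r hr => (hc4supp r hr).2.2) s]
      exact hstep


end mainthm

section bridge

variable (G : SimpleGraph V) [DecidableRel G.Adj]

/-- a chain on faces, as a total function on finsets. -/
noncomputable def totChain (k : ℕ) (z : G.indepFace k → ℝ) : Finset V → ℝ := fun s =>
  if h : s.card = k ∧ ∀ a ∈ s, ∀ b ∈ s, ¬ G.Adj a b then z ⟨s, h⟩ else 0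

lemma totChain_supp (k : ℕ) (z : G.indepFace k → ℝ) :
    ∀ s, totChain G k z s ≠ 0 → gd G Finset.univ k s := by
  intro s hs
  by_cases h : s.card = k ∧ ∀ a ∈ s, ∀ b ∈ s, ¬ G.Adj a b
  · exact ⟨Finset.subset_univ s, h.1, h.2⟩
  · exact absurd (dif_neg h) hs

lemma totChain_face (k : ℕ) (z : G.indepFace k → ℝ) (τ : G.indepFace k) :
    totChain G k z τ.1 = z τ := by
  unfold totChain
  rw [dif_pos ⟨τ.2.1, τ.2.2⟩]

open scoped Classical in
lemma db_eq_boundary (k : ℕ) (z : G.indepFace (k+1) → ℝ) (σ : G.indepFace k) :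
    (G.indepBoundary k).mulVec z σ =
      db G Finset.univ (totChain G (k+1) z) σ.1 := by
  have hL : (G.indepBoundary k).mulVec z σ =
      ∑ τ ∈ Finset.univ.filter (fun τ : G.indepFace (k+1) => σ.1 ⊆ τ.1),
        (∑ v ∈ τ.1 \ σ.1, (-1:ℝ) ^ ((τ.1.filter (· < v)).card)) * z τ := by
    rw [Finset.sum_filter]
    show ∑ τ : G.indepFace (k+1), G.indepBoundary k σ τ * z τ = _
    apply Finset.sum_congr rfl
    intro τ _
    unfold SimpleGraph.indepBoundary
    rw [Matrix.of_apply, ite_mul, zero_mul]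
  rw [hL]
  have hne : ∀ τ : G.indepFace (k+1), τ ∈ Finset.univ.filter
      (fun τ : G.indepFace (k+1) => σ.1 ⊆ τ.1) → (τ.1 \ σ.1).Nonempty := by
    intro τ hτ
    have hsub := (Finset.mem_filter.mp hτ).2
    rw [← Finset.card_pos, Finset.card_sdiff_of_subset hsub, τ.2.1, σ.2.1]
    omega
  have hkey : ∀ (τ : G.indepFace (k+1)) (hτ : τ ∈ Finset.univ.filter
      (fun τ : G.indepFace (k+1) => σ.1 ⊆ τ.1)),
      τ.1 \ σ.1 = {(τ.1 \ σ.1).min' (hne τ hτ)} ∧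
      τ.1 = insert ((τ.1 \ σ.1).min' (hne τ hτ)) σ.1 := by
    intro τ hτ
    have hsub := (Finset.mem_filter.mp hτ).2
    have h1 : (τ.1 \ σ.1).card = 1 := by
      rw [Finset.card_sdiff_of_subset hsub, τ.2.1, σ.2.1]; omega
    obtain ⟨w, hwe⟩ := Finset.card_eq_one.mp h1
    have hmin : (τ.1 \ σ.1).min' (hne τ hτ) = w :=
      Finset.mem_singleton.mp (by rw [← hwe]; exact Finset.min'_mem _ _)
    simp only [hmin]
    refine ⟨hwe, ?_⟩
    apply Finset.ext
    intro a
    constructor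
    · intro ha
      by_cases has : a ∈ σ.1
      · exact Finset.mem_insert_of_mem has
      · have : a ∈ τ.1 \ σ.1 := Finset.mem_sdiff.mpr ⟨ha, has⟩
        rw [hwe, Finset.mem_singleton] at this
        exact this ▸ Finset.mem_insert_self a σ.1
    · intro ha
      rcases Finset.mem_insert.mp ha with rfl | has
      · have : a ∈ τ.1 \ σ.1 := hwe ▸ Finset.mem_singleton_self a
        exact (Finset.mem_sdiff.mp this).1
      · exact hsub has
  have hjpf : ∀ w ∈ exts G Finset.univ σ.1,
      (insert w σ.1).card = k + 1 ∧
        ∀ a ∈ insert w σ.1, ∀ b ∈ insert w σ.1, ¬ G.Adj a b := by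
    intro w hw
    obtain ⟨-, hws, hwc⟩ := mem_exts.mp hw
    exact ⟨by rw [Finset.card_insert_of_notMem hws, σ.2.1],
      indep_insert σ.2.2 hwc⟩
  refine Finset.sum_bij' (fun τ hτ => (τ.1 \ σ.1).min' (hne τ hτ))
    (fun w hw => ⟨insert w σ.1, hjpf w hw⟩) ?_ ?_ ?_ ?_ ?_
  · -- maps into exts
    intro τ hτ
    have hsub := (Finset.mem_filter.mp hτ).2
    have hmem := Finset.min'_mem (τ.1 \ σ.1) (hne τ hτ)
    rcases Finset.mem_sdiff.mp hmem with ⟨hmτ, hmσ⟩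
    exact mem_exts.mpr ⟨Finset.mem_univ _, hmσ,
      fun a ha => τ.2.2 _ hmτ a (hsub ha)⟩
  · -- j maps into the filter set
    intro w hw
    exact Finset.mem_filter.mpr ⟨Finset.mem_univ _, Finset.subset_insert w σ.1⟩
  · -- left inverse
    intro τ hτ
    exact Subtype.ext (hkey τ hτ).2.symm
  · -- right inverse
    intro w hw
    have hws : w ∉ σ.1 := (mem_exts.mp hw).2.1
    have hset : insert w σ.1 \ σ.1 = {w} := by
      apply Finset.ext
      intro a
      simp only [Finset.mem_sdiff, Finset.mem_insert, Finset.mem_singleton]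
      constructor
      · rintro ⟨rfl | has, hns⟩
        · rfl
        · exact absurd has hns
      · rintro rfl
        exact ⟨Or.inl rfl, hws⟩
    simp only [hset, Finset.min'_singleton]
  · -- term equality
    intro τ hτ
    obtain ⟨hwe, hτeq⟩ := hkey τ hτ
    rw [Finset.sum_congr hwe (fun _ _ => rfl), Finset.sum_singleton]
    have harg : totChain G (k+1) z (insert ((τ.1 \ σ.1).min' (hne τ hτ)) σ.1) = z τ := by
      rw [← hτeq, totChain_face]
    rw [harg]
    congr 1
    show (-1:ℝ) ^ ((τ.1.filter (· < (τ.1 \ σ.1).min' (hne τ hτ))).card) = _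
    unfold sgn
    rw [← hτeq]

end bridge

lemma filter_univ_adj (G : SimpleGraph V) [DecidableRel G.Adj] (v : V)
    (inst : DecidablePred (fun u => G.Adj v u)) :
    @Finset.filter V (fun u => G.Adj v u) inst Finset.univ = G.neighborFinset v := by
  ext a
  simp [SimpleGraph.mem_neighborFinset]

/-- Let `ρ*_q(G)` be the supremum of `∑_v (f v)^2` over all fractional
quadratic packings `f : V → ℝ≥0` (i.e. `∑_{u ∈ N_G(v)} f u * (f u + f v) ≤ 1` for all `v`).
Then the homological connectivity satisfies `η(I(G)) ≥ ρ*_q(G)`: for every fractional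
quadratic packing `f`, `H̃_i(I(G); ℝ) = 0` for all `i` with `i + 1 < ∑_v (f v)^2`
(equivalently, for all `i ≤ ⌈∑_v (f v)^2⌉ - 2`). -/
theorem indep_connectivity_quadratic_packing (G : SimpleGraph V) [DecidableRel G.Adj]
    (f : V → ℝ) (hf : ∀ v, 0 ≤ f v)
    (hpack : ∀ v, ∑ u ∈ G.neighborFinset v, f u * (f u + f v) ≤ 1) :
    ∀ i : ℕ, (i : ℝ) + 1 < ∑ v : V, (f v) ^ 2 → G.indepHomologyDim i = 0 := by
  intro i hi
  have hle : LinearMap.ker (G.indepBoundary i).mulVecLin ≤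
      LinearMap.range (G.indepBoundary (i+1)).mulVecLin := by
    intro z hz
    rw [LinearMap.mem_ker] at hz
    have hz' : ∀ σ : G.indepFace i, (G.indepBoundary i).mulVec z σ = 0 := by
      intro σ
      rw [← Matrix.mulVecLin_apply, hz]
      rfl
    have hcyc : db G Finset.univ (totChain G (i+1) z) = 0 := by
      funext s
      rw [Pi.zero_apply]
      by_cases h1 : indepS G s
      · by_cases h2 : s.card = i
        · have hσ : s.card = i ∧ ∀ a ∈ s, ∀ b ∈ s, ¬ G.Adj a b := ⟨h2, h1⟩
          rw [← db_eq_boundary G i z ⟨s, hσ⟩]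
          exact hz' _
        · exact db_wrong_card (fun r hr => (totChain_supp G (i+1) z r hr).2.1) h2
      · exact db_bad (fun r hr => ⟨(totChain_supp G (i+1) z r hr).1,
          (totChain_supp G (i+1) z r hr).2.2⟩) (fun hq => h1 hq.2)
    have hk : ((i + 1 : ℕ) : ℝ) < ∑ v ∈ (Finset.univ : Finset V), f v ^ 2 := by
      push_cast
      exact hi
    obtain ⟨c, hcsupp, hcdb⟩ := main_total (mu G Finset.univ) G Finset.univ le_rfl f hf
      (by
        intro v _
        rw [filter_univ_adj G v]
        exact hpack v)
      (i+1) hk (totChain G (i+1) z) (totChain_supp G (i+1) z) hcyc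
    refine ⟨fun τ => c τ.1, ?_⟩
    have hctot : totChain G (i+1+1) (fun τ : G.indepFace (i+1+1) => c τ.1) = c := by
      funext s
      by_cases h : s.card = i + 1 + 1 ∧ ∀ a ∈ s, ∀ b ∈ s, ¬ G.Adj a b
      · exact dif_pos h
      · unfold totChain
        rw [dif_neg h]
        by_contra hq
        have hc0 : c s ≠ 0 := fun hr => hq hr.symm
        obtain ⟨-, h2, h3⟩ := hcsupp s hc0
        exact h ⟨h2, h3⟩
    funext σ
    rw [Matrix.mulVecLin_apply, db_eq_boundary G (i+1) _ σ, hctot, hcdb]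
    exact totChain_face G (i+1) z σ
  unfold SimpleGraph.indepHomologyDim
  exact Nat.sub_eq_zero_of_le (Submodule.finrank_mono hle)
end

section
/- For the cycle graph $C_n$ on vertex set $\{1,\ldots,n\}$, define $f(i)=0$ if $i\equiv1\pmod 3$ and $f(i)=1/\sqrt2$ otherwise. Then $f$ is a fractional quadratic packing of $C_n$ (i.e., $\sum_{u\in N(v)}f(u)(f(u)+f(v))\le1$ for all $v$), and $\sum_{i=1}^n f(i)^2$ equals $k$ if $n=3k$ or $n=3k+1$, and $k+1/2$ if $n=3k+2$. -/
open Matrix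

lemma sum_range_pattern (m : ℕ) :
    ∑ j ∈ Finset.range (3 * m), (if j % 3 = 0 then (0:ℝ) else 1/2) = m := by
  induction m with
  | zero => simp
  | succ m ih =>
    have h3 : 3 * (m + 1) = (3 * m) + 1 + 1 + 1 := by ring
    rw [h3, Finset.sum_range_succ, Finset.sum_range_succ, Finset.sum_range_succ, ih]
    have h0 : (3 * m) % 3 = 0 := by omega
    have h1 : (3 * m + 1) % 3 = 1 := by omega
    have h2 : (3 * m + 1 + 1) % 3 = 2 := by omega
    rw [h0, h1, h2]
    push_cast
    ring

/-- On the cycle graph `C_n` (`n ≥ 3`; vertices `0, …, n-1`, corresponding to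
`1, …, n`), define `f j = 0` if `j ≡ 0 (mod 3)` (i.e. the vertex label in `{1, …, n}` is
`≡ 1 (mod 3)`) and `f j = 1/√2` otherwise. Then `f` is a fractional quadratic packing of `C_n`,
and `∑_j (f j)^2` equals `k` if `n = 3k` or `n = 3k + 1`, and `k + 1/2` if `n = 3k + 2`. -/
theorem cycle_quadratic_packing {n : ℕ} (hn : 3 ≤ n)
    (f : Fin n → ℝ)
    (hfdef : ∀ j : Fin n, f j = if (j : ℕ) % 3 = 0 then 0 else 1 / Real.sqrt 2) :
    (∀ v : Fin n, ∑ u ∈ (SimpleGraph.cycleGraph n).neighborFinset v,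
        f u * (f u + f v) ≤ 1) ∧
    (∀ k : ℕ, ((n = 3 * k ∨ n = 3 * k + 1) → ∑ j : Fin n, (f j) ^ 2 = k) ∧
      (n = 3 * k + 2 → ∑ j : Fin n, (f j) ^ 2 = k + 1 / 2)) := by
  have ha : (1 / Real.sqrt 2) * (1 / Real.sqrt 2) = 1 / 2 := by
    rw [div_mul_div_comm, Real.mul_self_sqrt (by norm_num)]
    norm_num
  have hanng : (0:ℝ) ≤ 1 / Real.sqrt 2 := by positivity
  have hrange : ∀ j : Fin n, f j = 0 ∨ f j = 1 / Real.sqrt 2 := by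
    intro j; rw [hfdef j]; split_ifs <;> simp
  have hnng : ∀ j : Fin n, 0 ≤ f j := by
    intro j
    rcases hrange j with h | h
    · rw [h]
    · rw [h]; exact hanng
  have hsq : ∀ j : Fin n, f j * f j ≤ 1 / 2 := by
    intro j
    rcases hrange j with h | h
    · rw [h]; norm_num
    · rw [h, ha]
  have hmul : ∀ i j : Fin n, f i * f j ≤ 1 / 2 := by
    intro i j
    rcases hrange i with h | h
    · rw [h]; norm_num
    · rcases hrange j with h' | h'
      · rw [h']; norm_num
      · rw [h, h', ha]
  constructor
  · intro v
    obtain ⟨m, rfl⟩ : ∃ m, n = m + 2 := ⟨n - 2, by omega⟩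
    rw [SimpleGraph.cycleGraph_neighborFinset]
    have hv' : (v : ℕ) < m + 2 := v.isLt
    have hm : 1 ≤ m := by omega
    have hadd : ((v + 1 : Fin (m+2)) : ℕ)
        = if (v:ℕ) + 1 = m + 2 then 0 else (v:ℕ) + 1 := by
      rw [Fin.add_def]
      simp only [Fin.val_one]
      split_ifs with h
      · rw [h, Nat.mod_self]
      · exact Nat.mod_eq_of_lt (by omega)
    have hsub : ((v - 1 : Fin (m+2)) : ℕ)
        = if (v:ℕ) = 0 then m + 1 else (v:ℕ) - 1 := by
      rw [Fin.sub_def]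
      simp only [Fin.val_one]
      split_ifs with h
      · rw [h]
        simp only [Nat.add_zero]
        exact Nat.mod_eq_of_lt (by omega)
      · have he : m + 2 - 1 + (v:ℕ) = (m + 2) + ((v:ℕ) - 1) := by omega
        rw [he, Nat.add_mod_left]
        exact Nat.mod_eq_of_lt (by omega)
    have hne : v - 1 ≠ v + 1 := by
      intro h
      rw [Fin.ext_iff, hadd, hsub] at h
      split_ifs at h <;> omega
    rw [Finset.sum_pair hne]
    -- key: one of the relevant values is 0
    rcases (show (v:ℕ) % 3 = 0 ∨ (v:ℕ) % 3 = 1 ∨ (v:ℕ) % 3 = 2 by omega) with h0 | h1 | h2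
    · -- f v = 0
      have hv : f v = 0 := by rw [hfdef v, if_pos h0]
      rw [hv]
      have := hsq (v - 1); have := hsq (v + 1)
      nlinarith
    · -- f (v-1) = 0
      have hz : f (v - 1) = 0 := by
        rw [hfdef, if_pos]
        rw [hsub, if_neg (by omega)]; omega
      rw [hz]
      have := hsq (v + 1); have := hmul (v+1) v
      nlinarith
    · -- f (v+1) = 0
      have hz : f (v + 1) = 0 := by
        rw [hfdef, if_pos]
        rw [hadd]
        split_ifs with h
        · rfl
        · omega
      rw [hz]
      have := hsq (v - 1); have := hmul (v-1) v
      nlinarith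
  · intro k
    have hsum : ∑ j : Fin n, (f j) ^ 2
        = ∑ j ∈ Finset.range n, (if j % 3 = 0 then (0:ℝ) else 1/2) := by
      rw [Finset.sum_range fun j => if j % 3 = 0 then (0:ℝ) else 1/2]
      apply Finset.sum_congr rfl
      intro j _
      rw [hfdef j, sq]
      split_ifs
      · norm_num
      · exact ha
    constructor
    · rintro (rfl | rfl)
      · rw [hsum, sum_range_pattern]
      · rw [hsum, Finset.sum_range_succ, sum_range_pattern]
        have : (3 * k) % 3 = 0 := by omega
        rw [this]; simp
    · rintro rfl
      rw [hsum]
      have h3 : 3 * k + 2 = (3 * k) + 1 + 1 := by ring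
      rw [h3, Finset.sum_range_succ, Finset.sum_range_succ, sum_range_pattern]
      have h0 : (3 * k) % 3 = 0 := by omega
      have h1 : (3 * k + 1) % 3 = 1 := by omega
      rw [h0, h1]
      norm_num
end

section
/- Let $G=(V,E)$ be a finite graph and $S\subseteq V$ a neighborhood packing, with $\deg(S)=\sum_{v\in S}\deg(v)$. Then for all $k\ge0$, $\dim\tilde H_k(I(G);\mathbb{R})\le\sum_{m=|S|}^{k+1}\binom{\deg(S)}{m}\binom{|V|-\deg(S)}{k+1-m}$. In particular, $\tilde H_k(I(G);\mathbb{R})=0$ for all $k\le|S|-2$. -/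
open Matrix

variable {V : Type*} [Fintype V] [DecidableEq V] [LinearOrder V]

set_option linter.unusedSectionVars false

section
variable {V : Type*} [Fintype V] [DecidableEq V] [LinearOrder V]
namespace IndepPacking

def sg (τ : Finset V) (v : V) : ℝ := (-1 : ℝ) ^ ((τ.filter (· < v)).card)

lemma sg_filter_insert {τ : Finset V} {w : V} (hw : w ∉ τ) (u : V) :
    ((insert w τ).filter (· < u)).card
      = (τ.filter (· < u)).card + if w < u then 1 else 0 := by
  rw [Finset.filter_insert]
  by_cases h : w < u
  · rw [if_pos h, if_pos h,
      Finset.card_insert_of_notMem (fun hc => hw (Finset.mem_filter.mp hc).1)]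
  · rw [if_neg h, if_neg h, add_zero]

lemma sg_insert {τ : Finset V} {w : V} (hw : w ∉ τ) (u : V) :
    sg (insert w τ) u = (if w < u then (-1:ℝ) else 1) * sg τ u := by
  unfold sg
  rw [sg_filter_insert hw u, pow_add]
  by_cases h : w < u
  · simp [h, mul_comm]
  · simp [h, mul_comm]

lemma sg_mul_self (τ : Finset V) (v : V) : sg τ v * sg τ v = 1 := by
  unfold sg; rw [← pow_add]; exact Even.neg_one_pow ⟨_, rfl⟩

lemma sg_core1 {σ : Finset V} {a b : V} (ha : a ∉ σ) (hb : b ∉ σ) (hab : a ≠ b) :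
    sg (insert a σ) a * sg (insert a (insert b σ)) b
      + sg (insert b σ) b * sg (insert a (insert b σ)) a = 0 := by
  have hab' : a ∉ insert b σ := by simp [hab, ha]
  have hba' : b ∉ insert a σ := by simp [Ne.symm hab, hb]
  rw [sg_insert hab' b, Finset.insert_comm, sg_insert hba' a]
  rcases hab.lt_or_gt with h | h
  · rw [if_pos h, if_neg (asymm h)]; ring
  · rw [if_neg (asymm h), if_pos h]; ring

lemma sg_core2 {σ : Finset V} {a b : V} (ha : a ∉ σ) (hb : b ∉ σ) (hab : a ≠ b) :
    sg (insert a (insert b σ)) b * sg (insert a (insert b σ)) a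
      + sg (insert a σ) a * sg (insert b σ) b = 0 := by
  have hab' : a ∉ insert b σ := by simp [hab, ha]
  have hba' : b ∉ insert a σ := by simp [Ne.symm hab, hb]
  rw [sg_insert hab' b, Finset.insert_comm, sg_insert hba' a]
  rcases hab.lt_or_gt with h | h
  · rw [if_pos h, if_neg (asymm h)]
    have := sg_mul_self (insert b σ) b
    nlinarith [sg_mul_self (insert b σ) b, sg_mul_self (insert a σ) a]
  · rw [if_neg (asymm h), if_pos h]
    nlinarith [sg_mul_self (insert b σ) b, sg_mul_self (insert a σ) a]

end IndepPacking

end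

section
variable {V : Type*} [Fintype V] [DecidableEq V] [LinearOrder V]
namespace IndepPacking

variable (G : SimpleGraph V) [DecidableRel G.Adj]

lemma indep_mono {σ τ : Finset V} (h : σ ⊆ τ) (hτ : ∀ u ∈ τ, ∀ v ∈ τ, ¬ G.Adj u v) :
    ∀ u ∈ σ, ∀ v ∈ σ, ¬ G.Adj u v := fun u hu v hv => hτ u (h hu) v (h hv)

lemma inter_nbr_eq_empty_of_mem {τ : Finset V} (hτ : ∀ u ∈ τ, ∀ v ∈ τ, ¬ G.Adj u v)
    {v : V} (hv : v ∈ τ) : τ ∩ G.neighborFinset v = ∅ := by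
  rw [Finset.eq_empty_iff_forall_notMem]
  intro w hw
  rw [Finset.mem_inter, SimpleGraph.mem_neighborFinset] at hw
  exact hτ v hv w hw.1 hw.2

lemma indep_insert {τ : Finset V} (hτ : ∀ u ∈ τ, ∀ v ∈ τ, ¬ G.Adj u v) {v : V}
    (hv : τ ∩ G.neighborFinset v = ∅) :
    ∀ u ∈ insert v τ, ∀ w ∈ insert v τ, ¬ G.Adj u w := by
  have key : ∀ w ∈ τ, ¬ G.Adj v w := by
    intro w hw hadj
    exact (Finset.eq_empty_iff_forall_notMem.mp hv w)
      (Finset.mem_inter.mpr ⟨hw, (SimpleGraph.mem_neighborFinset _ _ _).mpr hadj⟩)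
  intro u hu w hw hadj
  rcases Finset.mem_insert.mp hu with h1 | h1 <;> rcases Finset.mem_insert.mp hw with h2 | h2
  · rw [h1, h2] at hadj; exact G.irrefl hadj
  · rw [h1] at hadj; exact key w h2 hadj
  · rw [h2] at hadj; exact key u h1 hadj.symm
  · exact hτ u h1 w h2 hadj

lemma eq_insert_of_subset {σ τ : Finset V} (h : σ ⊆ τ) (hc : τ.card = σ.card + 1) :
    ∃ w, w ∉ σ ∧ τ = insert w σ := by
  have h1 : (τ \ σ).card = 1 := by rw [Finset.card_sdiff_of_subset h, hc]; omega
  obtain ⟨w, hw⟩ := Finset.card_eq_one.mp h1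
  have hwmem : w ∈ τ \ σ := hw ▸ Finset.mem_singleton_self w
  rw [Finset.mem_sdiff] at hwmem
  refine ⟨w, hwmem.2, ?_⟩
  apply Finset.Subset.antisymm
  · intro x hx
    by_cases hxσ : x ∈ σ
    · exact Finset.mem_insert_of_mem hxσ
    · have hx2 : x ∈ τ \ σ := Finset.mem_sdiff.mpr ⟨hx, hxσ⟩
      rw [hw, Finset.mem_singleton] at hx2
      exact hx2 ▸ Finset.mem_insert_self _ _
  · intro x hx
    rcases Finset.mem_insert.mp hx with rfl | hx
    · exact hwmem.1
    · exact h hx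

lemma boundary_of_not_subset {k : ℕ} {σ : G.indepFace k} {τ : G.indepFace (k+1)}
    (h : ¬ σ.1 ⊆ τ.1) : G.indepBoundary k σ τ = 0 := by
  simp [SimpleGraph.indepBoundary, h]

lemma boundary_insert {k : ℕ} (σ : G.indepFace k) (τ : G.indepFace (k+1)) {w : V}
    (hw : w ∉ σ.1) (hins : τ.1 = insert w σ.1) :
    G.indepBoundary k σ τ = sg τ.1 w := by
  have hsub : σ.1 ⊆ τ.1 := by rw [hins]; exact Finset.subset_insert _ _
  have hdiff : τ.1 \ σ.1 = {w} := by
    rw [hins]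
    ext x
    simp only [Finset.mem_sdiff, Finset.mem_insert, Finset.mem_singleton]
    constructor
    · rintro ⟨rfl | hx, hxσ⟩
      · rfl
      · exact absurd hx hxσ
    · rintro rfl
      exact ⟨Or.inl rfl, hw⟩
  simp [SimpleGraph.indepBoundary, hsub, hdiff, sg]

lemma boundary_mul_boundary (k : ℕ) :
    G.indepBoundary k * G.indepBoundary (k+1) = 0 := by
  ext σ τ
  rw [Matrix.mul_apply, Matrix.zero_apply]
  by_cases hsub : σ.1 ⊆ τ.1
  · have hc2 : (τ.1 \ σ.1).card = 2 := by
      rw [Finset.card_sdiff_of_subset hsub, σ.2.1, τ.2.1]; omega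
    obtain ⟨a, b, hab, hd⟩ := Finset.card_eq_two.mp hc2
    have haτ : a ∈ τ.1 \ σ.1 := by rw [hd]; simp
    have hbτ : b ∈ τ.1 \ σ.1 := by rw [hd]; simp
    rw [Finset.mem_sdiff] at haτ hbτ
    have hτeq : τ.1 = insert a (insert b σ.1) := by
      ext x
      simp only [Finset.mem_insert]
      constructor
      · intro hx
        by_cases hxσ : x ∈ σ.1
        · right; right; exact hxσ
        · have hx2 : x ∈ τ.1 \ σ.1 := Finset.mem_sdiff.mpr ⟨hx, hxσ⟩
          rw [hd, Finset.mem_insert, Finset.mem_singleton] at hx2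
          tauto
      · rintro (rfl | rfl | hx)
        · exact haτ.1
        · exact hbτ.1
        · exact hsub hx
    have hsa : insert a σ.1 ⊆ τ.1 := by
      rw [hτeq]; intro x hx
      rcases Finset.mem_insert.mp hx with rfl | hx
      · exact Finset.mem_insert_self _ _
      · exact Finset.mem_insert_of_mem (Finset.mem_insert_of_mem hx)
    have hsb : insert b σ.1 ⊆ τ.1 := by
      rw [hτeq]; intro x hx
      rcases Finset.mem_insert.mp hx with rfl | hx
      · exact Finset.mem_insert_of_mem (Finset.mem_insert_self _ _)
      · exact Finset.mem_insert_of_mem (Finset.mem_insert_of_mem hx)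
    set ρa : G.indepFace (k+1) :=
      ⟨insert a σ.1, by rw [Finset.card_insert_of_notMem haτ.2, σ.2.1],
        indep_mono G hsa τ.2.2⟩ with hρa
    set ρb : G.indepFace (k+1) :=
      ⟨insert b σ.1, by rw [Finset.card_insert_of_notMem hbτ.2, σ.2.1],
        indep_mono G hsb τ.2.2⟩ with hρb
    have hne : ρa ≠ ρb := by
      intro h
      have h' : insert a σ.1 = insert b σ.1 := Subtype.ext_iff.mp h
      have : a ∈ insert b σ.1 := h' ▸ Finset.mem_insert_self a σ.1
      rcases Finset.mem_insert.mp this with h' | h'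
      · exact hab h'
      · exact haτ.2 h'
    rw [Finset.sum_eq_add_of_mem ρa ρb (Finset.mem_univ _) (Finset.mem_univ _) hne ?_]
    · have e1 : G.indepBoundary k σ ρa = sg (insert a σ.1) a :=
        boundary_insert G σ ρa haτ.2 rfl
      have e2 : G.indepBoundary (k+1) ρa τ = sg τ.1 b := by
        refine boundary_insert G ρa τ ?_ ?_
        · simp only [hρa]
          intro h
          rcases Finset.mem_insert.mp h with h' | h'
          · exact hab h'.symm
          · exact hbτ.2 h'
        · rw [hτeq, Finset.insert_comm]
      have e3 : G.indepBoundary k σ ρb = sg (insert b σ.1) b :=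
        boundary_insert G σ ρb hbτ.2 rfl
      have e4 : G.indepBoundary (k+1) ρb τ = sg τ.1 a := by
        refine boundary_insert G ρb τ ?_ ?_
        · simp only [hρb]
          intro h
          rcases Finset.mem_insert.mp h with h' | h'
          · exact hab h'
          · exact haτ.2 h'
        · rw [hτeq]
      rw [e1, e2, e3, e4, hτeq]
      exact sg_core1 haτ.2 hbτ.2 hab
    · intro ρ _ hρ
      by_cases h1 : σ.1 ⊆ ρ.1
      · by_cases h2 : ρ.1 ⊆ τ.1
        · obtain ⟨w, hwσ, hweq⟩ := eq_insert_of_subset h1 (by rw [σ.2.1, ρ.2.1])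
          have hwτ : w ∈ τ.1 \ σ.1 :=
            Finset.mem_sdiff.mpr ⟨h2 (hweq ▸ Finset.mem_insert_self _ _), hwσ⟩
          rw [hd, Finset.mem_insert, Finset.mem_singleton] at hwτ
          rcases hwτ with rfl | rfl
          · exact absurd (Subtype.ext hweq) hρ.1
          · exact absurd (Subtype.ext hweq) hρ.2
        · rw [boundary_of_not_subset G h2, mul_zero]
      · rw [boundary_of_not_subset G h1, zero_mul]
  · apply Finset.sum_eq_zero
    intro ρ _
    by_cases h1 : σ.1 ⊆ ρ.1
    · by_cases h2 : ρ.1 ⊆ τ.1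
      · exact absurd (h1.trans h2) hsub
      · rw [boundary_of_not_subset G h2, mul_zero]
    · rw [boundary_of_not_subset G h1, zero_mul]

lemma boundary_sq (k : ℕ) (x : G.indepFace (k+2) → ℝ) :
    (G.indepBoundary k).mulVec ((G.indepBoundary (k+1)).mulVec x) = 0 := by
  rw [Matrix.mulVec_mulVec, boundary_mul_boundary, Matrix.zero_mulVec]

end IndepPacking
end

section
variable {V : Type*} [Fintype V] [DecidableEq V] [LinearOrder V]
namespace IndepPacking
variable (G : SimpleGraph V) [DecidableRel G.Adj]

lemma sg_core2' {E : Finset V} {a b : V} (ha : a ∉ E) (hb : b ∉ E) (hab : a ≠ b)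
    {P T M : Finset V} (hP : P = insert a (insert b E)) (hT : T = insert a E)
    (hM : M = insert b E) :
    sg P b * sg P a + sg T a * sg M b = 0 := by
  subst hP; subst hT; subst hM; exact sg_core2 ha hb hab

noncomputable def cone (v : V) (n : ℕ) : Matrix (G.indepFace (n+1)) (G.indepFace n) ℝ :=
  Matrix.of fun τ σ =>
    if τ.1 = insert v σ.1 ∧ v ∉ σ.1 ∧ σ.1 ∩ G.neighborFinset v = ∅ then sg τ.1 v else 0

lemma cone_eq_zero_of_not_mem {v : V} {n : ℕ} {τ : G.indepFace (n+1)} {σ : G.indepFace n}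
    (hvτ : v ∉ τ.1) : cone G v n τ σ = 0 := by
  simp only [cone, Matrix.of_apply]
  split
  case isTrue h => exact absurd (h.1 ▸ Finset.mem_insert_self v σ.1) hvτ
  case isFalse => rfl

lemma cone_eq_zero_of_ne {v : V} {n : ℕ} {τ : G.indepFace (n+1)} {σ : G.indepFace n}
    (h : σ.1 ≠ τ.1.erase v) : cone G v n τ σ = 0 := by
  simp only [cone, Matrix.of_apply]
  split
  case isTrue h' =>
    exact absurd (by rw [h'.1, Finset.erase_insert h'.2.1]) (Ne.symm h)
  case isFalse => rfl

lemma cone_apply_erase {v : V} {n : ℕ} {τ : G.indepFace (n+1)} {σ : G.indepFace n}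
    (hvτ : v ∈ τ.1) (h : σ.1 = τ.1.erase v) : cone G v n τ σ = sg τ.1 v := by
  have h1 : τ.1 = insert v σ.1 := by rw [h, Finset.insert_erase hvτ]
  have h2 : v ∉ σ.1 := by rw [h]; exact Finset.notMem_erase v τ.1
  have h3 : σ.1 ∩ G.neighborFinset v = ∅ := by
    have hτv := inter_nbr_eq_empty_of_mem G τ.2.2 hvτ
    rw [Finset.eq_empty_iff_forall_notMem] at hτv ⊢
    intro x hx
    rw [Finset.mem_inter] at hx
    exact hτv x (Finset.mem_inter.mpr ⟨Finset.mem_of_mem_erase (h ▸ hx.1), hx.2⟩)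
  simp only [cone, Matrix.of_apply, if_pos (⟨h1, h2, h3⟩ : _ ∧ _ ∧ _)]

lemma cone_ptwise (v : V) (n : ℕ) (τ μ : G.indepFace (n+1))
    (hμ : μ.1 ∩ G.neighborFinset v = ∅) :
    (∑ ρ : G.indepFace (n+1+1), G.indepBoundary (n+1) τ ρ * cone G v (n+1) ρ μ)
      + (∑ σ : G.indepFace n, cone G v n τ σ * G.indepBoundary n σ μ)
      = if τ = μ then 1 else 0 := by
  by_cases hvμ : v ∈ μ.1
  · have hT1 : (∑ ρ : G.indepFace (n+1+1), G.indepBoundary (n+1) τ ρ * cone G v (n+1) ρ μ)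
        = 0 := by
      apply Finset.sum_eq_zero; intro ρ _
      have hz : cone G v (n+1) ρ μ = 0 := by
        simp only [cone, Matrix.of_apply]
        split
        case isTrue h => exact absurd hvμ h.2.1
        case isFalse => rfl
      rw [hz, mul_zero]
    rw [hT1, zero_add]
    by_cases hvτ : v ∈ τ.1
    · have hcard₀ : (τ.1.erase v).card = n := by
        rw [Finset.card_erase_of_mem hvτ, τ.2.1]; omega
      set σ₀ : G.indepFace n :=
        ⟨τ.1.erase v, hcard₀, indep_mono G (Finset.erase_subset _ _) τ.2.2⟩ with hσ₀
      rw [Finset.sum_eq_single σ₀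
        (fun σ _ hσ => by rw [cone_eq_zero_of_ne G (fun h => hσ (Subtype.ext h)), zero_mul])
        (fun h => absurd (Finset.mem_univ _) h)]
      rw [cone_apply_erase G hvτ rfl]
      by_cases hτμ : τ = μ
      · subst hτμ
        rw [if_pos rfl,
          boundary_insert G σ₀ τ (Finset.notMem_erase v τ.1) (Finset.insert_erase hvτ).symm]
        exact sg_mul_self τ.1 v
      · have hns : ¬ σ₀.1 ⊆ μ.1 := by
          intro hsub
          have hτsub : τ.1 ⊆ μ.1 := by
            rw [← Finset.insert_erase hvτ]
            exact Finset.insert_subset hvμ hsub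
          exact hτμ (Subtype.ext (Finset.eq_of_subset_of_card_le hτsub
            (by rw [τ.2.1, μ.2.1])))
        rw [boundary_of_not_subset G hns, mul_zero, if_neg hτμ]
    · have hτμ : τ ≠ μ := fun h => hvτ (h ▸ hvμ)
      rw [if_neg hτμ]
      apply Finset.sum_eq_zero; intro σ _
      rw [cone_eq_zero_of_not_mem G hvτ, zero_mul]
  · have hμcard : (insert v μ.1).card = n+1+1 := by
      rw [Finset.card_insert_of_notMem hvμ, μ.2.1]
    set ρs : G.indepFace (n+1+1) := ⟨insert v μ.1, hμcard, indep_insert G μ.2.2 hμ⟩ with hρs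
    have hvρs : v ∈ ρs.1 := Finset.mem_insert_self v μ.1
    have hμer : μ.1 = ρs.1.erase v := (Finset.erase_insert hvμ).symm
    have hckey : ∀ ρ : G.indepFace (n+1+1), ρ ≠ ρs → cone G v (n+1) ρ μ = 0 := by
      intro ρ hρ
      apply cone_eq_zero_of_ne
      intro h
      apply hρ
      have hvρ : v ∈ ρ.1 := by
        by_contra hv
        have h2 := congrArg Finset.card h
        rw [Finset.erase_eq_of_notMem hv, μ.2.1, ρ.2.1] at h2
        omega
      exact Subtype.ext (by rw [← Finset.insert_erase hvρ, ← h])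
    have hT1 : (∑ ρ : G.indepFace (n+1+1), G.indepBoundary (n+1) τ ρ * cone G v (n+1) ρ μ)
        = G.indepBoundary (n+1) τ ρs * sg ρs.1 v := by
      rw [Finset.sum_eq_single ρs (fun ρ _ hρ => by rw [hckey ρ hρ, mul_zero])
        (fun h => absurd (Finset.mem_univ _) h), cone_apply_erase G hvρs hμer]
    rw [hT1]
    by_cases hvτ : v ∈ τ.1
    · have hτμ : τ ≠ μ := fun h => hvμ (h ▸ hvτ)
      rw [if_neg hτμ]
      have hcard₀ : (τ.1.erase v).card = n := by
        rw [Finset.card_erase_of_mem hvτ, τ.2.1]; omega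
      set σ₀ : G.indepFace n :=
        ⟨τ.1.erase v, hcard₀, indep_mono G (Finset.erase_subset _ _) τ.2.2⟩ with hσ₀
      rw [Finset.sum_eq_single σ₀
        (fun σ _ hσ => by rw [cone_eq_zero_of_ne G (fun h => hσ (Subtype.ext h)), zero_mul])
        (fun h => absurd (Finset.mem_univ _) h)]
      rw [cone_apply_erase G hvτ rfl]
      by_cases hsub : σ₀.1 ⊆ μ.1
      · obtain ⟨w, hwσ₀, hweq⟩ := eq_insert_of_subset hsub (by rw [μ.2.1, hcard₀])
        have hwμ : w ∈ μ.1 := hweq ▸ Finset.mem_insert_self w _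
        have hwv : w ≠ v := fun h => hvμ (h ▸ hwμ)
        have hτ1 : τ.1 = insert v (τ.1.erase v) := (Finset.insert_erase hvτ).symm
        have hwτ : w ∉ τ.1 := by
          rw [hτ1]
          simp only [Finset.mem_insert]
          rintro (h | h)
          · exact hwv h
          · exact hwσ₀ h
        have hρs1 : ρs.1 = insert w τ.1 :=
          calc (insert v μ.1 : Finset V)
              = insert v (insert w (τ.1.erase v)) := by rw [hweq]
            _ = insert w (insert v (τ.1.erase v)) := Finset.insert_comm _ _ _
            _ = insert w τ.1 := by rw [← hτ1]
        rw [boundary_insert G τ ρs hwτ hρs1, boundary_insert G σ₀ μ hwσ₀ hweq]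
        exact sg_core2' (Finset.notMem_erase v τ.1) hwσ₀ (Ne.symm hwv)
          (by exact congrArg (insert v) hweq) hτ1 hweq
      · have e1 : G.indepBoundary (n+1) τ ρs = 0 := by
          apply boundary_of_not_subset
          intro hτsub
          apply hsub
          intro x hx
          have hxτ : x ∈ τ.1 := Finset.mem_of_mem_erase hx
          have hxv : x ≠ v := Finset.ne_of_mem_erase hx
          rcases Finset.mem_insert.mp (hτsub hxτ) with h | h
          · exact absurd h hxv
          · exact h
        rw [e1, boundary_of_not_subset G hsub, zero_mul, mul_zero, add_zero]
    · have hT2 : (∑ σ : G.indepFace n, cone G v n τ σ * G.indepBoundary n σ μ) = 0 :=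
        Finset.sum_eq_zero fun σ _ => by rw [cone_eq_zero_of_not_mem G hvτ, zero_mul]
      rw [hT2, add_zero]
      by_cases hτμ : τ = μ
      · subst hτμ
        rw [if_pos rfl, boundary_insert G τ ρs hvτ rfl]
        exact sg_mul_self ρs.1 v
      · have e1 : G.indepBoundary (n+1) τ ρs = 0 := by
          apply boundary_of_not_subset
          intro hτsub
          apply hτμ
          apply Subtype.ext
          apply Finset.eq_of_subset_of_card_le _ (by rw [τ.2.1, μ.2.1])
          intro x hx
          rcases Finset.mem_insert.mp (hτsub hx) with h | h
          · exact absurd (h ▸ hx) hvτ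
          · exact h
        rw [e1, zero_mul, if_neg hτμ]

end IndepPacking
end

section
variable {V : Type*} [Fintype V] [DecidableEq V] [LinearOrder V]
namespace IndepPacking
variable (G : SimpleGraph V) [DecidableRel G.Adj]

lemma cone_homotopy (v : V) (n : ℕ) (x : G.indepFace (n+1) → ℝ)
    (hx : ∀ σ : G.indepFace (n+1), σ.1 ∩ G.neighborFinset v ≠ ∅ → x σ = 0) :
    (G.indepBoundary (n+1)).mulVec ((cone G v (n+1)).mulVec x)
      + (cone G v n).mulVec ((G.indepBoundary n).mulVec x) = x := by
  funext τ
  simp only [Pi.add_apply, Matrix.mulVec, dotProduct]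
  have h1 : (∑ ρ : G.indepFace (n+1+1), G.indepBoundary (n+1) τ ρ
        * (∑ μ : G.indepFace (n+1), cone G v (n+1) ρ μ * x μ))
      = ∑ μ : G.indepFace (n+1),
          (∑ ρ : G.indepFace (n+1+1), G.indepBoundary (n+1) τ ρ * cone G v (n+1) ρ μ) * x μ := by
    simp_rw [Finset.mul_sum, Finset.sum_mul, ← mul_assoc]
    exact Finset.sum_comm
  have h2 : (∑ σ : G.indepFace n, cone G v n τ σ
        * (∑ μ : G.indepFace (n+1), G.indepBoundary n σ μ * x μ))
      = ∑ μ : G.indepFace (n+1),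
          (∑ σ : G.indepFace n, cone G v n τ σ * G.indepBoundary n σ μ) * x μ := by
    simp_rw [Finset.mul_sum, Finset.sum_mul, ← mul_assoc]
    exact Finset.sum_comm
  rw [h1, h2, ← Finset.sum_add_distrib]
  have h3 : ∀ μ : G.indepFace (n+1),
      (∑ ρ : G.indepFace (n+1+1), G.indepBoundary (n+1) τ ρ * cone G v (n+1) ρ μ) * x μ
        + (∑ σ : G.indepFace n, cone G v n τ σ * G.indepBoundary n σ μ) * x μ
      = (if τ = μ then (1:ℝ) else 0) * x μ := by
    intro μ
    by_cases hμ : μ.1 ∩ G.neighborFinset v = ∅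
    · rw [← add_mul, cone_ptwise G v n τ μ hμ]
    · rw [hx μ hμ, mul_zero, mul_zero, mul_zero, add_zero]
  rw [Finset.sum_congr rfl (fun μ _ => h3 μ)]
  simp

lemma acyclic (S : Finset V)
    (hS : ∀ u ∈ S, ∀ v ∈ S, u ≠ v →
      Disjoint (insert u (G.neighborFinset u)) (insert v (G.neighborFinset v)))
    (k : ℕ) (T : Finset V) :
    T ⊆ S → ∀ z : G.indepFace (k+1) → ℝ,
      (G.indepBoundary k).mulVec z = 0 →
      (∀ σ : G.indepFace (k+1), (∀ v ∈ T, (σ.1 ∩ G.neighborFinset v).Nonempty) → z σ = 0) →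
      ∃ c, (G.indepBoundary (k+1)).mulVec c = z := by
  classical
  induction T using Finset.induction_on with
  | empty =>
    intro _ z hz hsupp
    refine ⟨0, ?_⟩
    rw [Matrix.mulVec_zero]
    funext σ
    exact (hsupp σ (fun v hv => absurd hv (Finset.notMem_empty v))).symm
  | @insert a T' ha ih =>
    intro hTS z hz hsupp
    have haS : a ∈ S := hTS (Finset.mem_insert_self a T')
    have hT'S : T' ⊆ S := fun x hx => hTS (Finset.mem_insert_of_mem hx)
    set s : G.indepFace (k+1) → ℝ :=
      fun σ => if (∀ v ∈ T', (σ.1 ∩ G.neighborFinset v).Nonempty) then z σ else 0 with hs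
    set y : G.indepFace (k+1) → ℝ := z - s with hy
    have hs_star : ∀ σ : G.indepFace (k+1), σ.1 ∩ G.neighborFinset a ≠ ∅ → s σ = 0 := by
      intro σ hne
      simp only [hs]
      split
      case isTrue h =>
        apply hsupp σ
        intro v hv
        rcases Finset.mem_insert.mp hv with rfl | hv
        · exact Finset.nonempty_iff_ne_empty.mpr hne
        · exact h v hv
      case isFalse => rfl
    have hy_supp : ∀ σ : G.indepFace (k+1),
        (∀ v ∈ T', (σ.1 ∩ G.neighborFinset v).Nonempty) → y σ = 0 := by
      intro σ h
      simp only [hy, Pi.sub_apply, hs]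
      rw [if_pos h, sub_self]
    have hcone := cone_homotopy G a k s hs_star
    set c₁ : G.indepFace (k+1+1) → ℝ := (cone G a (k+1)).mulVec s with hc₁
    set z' : G.indepFace (k+1) → ℝ := z - (G.indepBoundary (k+1)).mulVec c₁ with hz'
    have hszy : s = z - y := by rw [hy]; abel
    have hbs : (G.indepBoundary k).mulVec s = -((G.indepBoundary k).mulVec y) := by
      rw [hszy, Matrix.mulVec_sub, hz]
      exact zero_sub _
    have hz'2 : z' = y - (cone G a k).mulVec ((G.indepBoundary k).mulVec y) := by
      have hdc : (G.indepBoundary (k+1)).mulVec c₁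
          = s - (cone G a k).mulVec ((G.indepBoundary k).mulVec s) :=
        eq_sub_of_add_eq hcone
      rw [hz', hdc, hbs, Matrix.mulVec_neg, hszy]
      abel
    have hz'zero : (G.indepBoundary k).mulVec z' = 0 := by
      rw [hz', Matrix.mulVec_sub, hz, boundary_sq G k c₁, sub_self]
    have hz'supp : ∀ σ : G.indepFace (k+1),
        (∀ v ∈ T', (σ.1 ∩ G.neighborFinset v).Nonempty) → z' σ = 0 := by
      intro σ hmeet
      rw [hz'2, Pi.sub_apply, hy_supp σ hmeet, zero_sub, neg_eq_zero]
      simp only [Matrix.mulVec, dotProduct]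
      apply Finset.sum_eq_zero
      intro σ'' _
      by_cases hc : cone G a k σ σ'' = 0
      · rw [hc, zero_mul]
      · have hcond : σ.1 = insert a σ''.1 ∧ a ∉ σ''.1 ∧ σ''.1 ∩ G.neighborFinset a = ∅ := by
          by_contra hcc
          exact hc (by simp only [cone, Matrix.of_apply, if_neg hcc])
        have hinner : (∑ τ' : G.indepFace (k+1), G.indepBoundary k σ'' τ' * y τ') = 0 := by
          apply Finset.sum_eq_zero
          intro τ' _
          by_cases hb : G.indepBoundary k σ'' τ' = 0
          · rw [hb, zero_mul]
          · have hsubστ : σ''.1 ⊆ τ'.1 := by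
              by_contra hns
              exact hb (boundary_of_not_subset G hns)
            have hyτ : y τ' = 0 := by
              by_contra hyne
              have hex : ∃ v ∈ T', ¬ (τ'.1 ∩ G.neighborFinset v).Nonempty := by
                by_contra hall
                push_neg at hall
                exact hyne (hy_supp τ' hall)
              obtain ⟨v, hvT', hvne⟩ := hex
              have hvempty : τ'.1 ∩ G.neighborFinset v = ∅ :=
                Finset.not_nonempty_iff_eq_empty.mp hvne
              have havNv : a ∉ G.neighborFinset v := by
                intro hmem
                have hdisj := hS a haS v (hT'S hvT') (fun h => ha (h ▸ hvT'))
                exact (Finset.disjoint_left.mp hdisj (Finset.mem_insert_self a _))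
                  (Finset.mem_insert_of_mem hmem)
              obtain ⟨x, hx⟩ := hmeet v hvT'
              rw [Finset.mem_inter] at hx
              have hxσ : x ∈ insert a σ''.1 := hcond.1 ▸ hx.1
              rcases Finset.mem_insert.mp hxσ with rfl | hxσ''
              · exact havNv hx.2
              · have : x ∈ τ'.1 ∩ G.neighborFinset v :=
                  Finset.mem_inter.mpr ⟨hsubστ hxσ'', hx.2⟩
                rw [hvempty] at this
                exact absurd this (Finset.notMem_empty x)
            rw [hyτ, mul_zero]
        rw [hinner, mul_zero]
    obtain ⟨c', hc'⟩ := ih hT'S z' hz'zero hz'supp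
    refine ⟨c' + c₁, ?_⟩
    rw [Matrix.mulVec_add, hc', hz']
    abel

end IndepPacking
end

section
variable {V : Type*} [Fintype V] [DecidableEq V] [LinearOrder V]
namespace IndepPacking
variable (G : SimpleGraph V) [DecidableRel G.Adj]

def suppSubmodule (ι : Type*) (p : ι → Prop) : Submodule ℝ (ι → ℝ) where
  carrier := {x | ∀ i, ¬ p i → x i = 0}
  add_mem' := by
    intro a b ha hb i hi
    simp only [Pi.add_apply, ha i hi, hb i hi, add_zero]
  zero_mem' := fun i _ => rfl
  smul_mem' := by
    intro c x hx i hi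
    simp only [Pi.smul_apply, hx i hi, smul_zero]

lemma mem_suppSubmodule {ι : Type*} {p : ι → Prop} {x : ι → ℝ} :
    x ∈ suppSubmodule ι p ↔ ∀ i, ¬ p i → x i = 0 := Iff.rfl

lemma suppSubmodule_sup (ι : Type*) (p : ι → Prop) [DecidablePred p] :
    suppSubmodule ι p ⊔ suppSubmodule ι (fun i => ¬ p i) = ⊤ := by
  rw [eq_top_iff]
  intro x _
  rw [Submodule.mem_sup]
  refine ⟨fun i => if p i then x i else 0, fun i hi => by simp [hi],
    fun i => if p i then 0 else x i, fun i hi => by simp [not_not.mp hi], ?_⟩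
  funext i
  by_cases h : p i <;> simp [h]

lemma suppSubmodule_finrank_le (ι : Type*) [Fintype ι] (p : ι → Prop) [DecidablePred p] :
    Module.finrank ℝ (suppSubmodule ι p) ≤ Fintype.card {i // p i} := by
  have hcard : Module.finrank ℝ ({i // p i} → ℝ) = Fintype.card {i // p i} :=
    Module.finrank_fintype_fun_eq_card ℝ
  rw [← hcard]
  refine LinearMap.finrank_le_finrank_of_injective
    (f := { toFun := fun x (i : {i // p i}) => x.1 i.1,
            map_add' := fun x y => rfl,
            map_smul' := fun c x => rfl }) ?_
  intro x y hxy
  apply Subtype.ext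
  funext i
  by_cases h : p i
  · exact congrFun hxy ⟨i, h⟩
  · rw [x.2 i h, y.2 i h]

lemma good_witness (S : Finset V)
    (hS : ∀ u ∈ S, ∀ v ∈ S, u ≠ v →
      Disjoint (insert u (G.neighborFinset u)) (insert v (G.neighborFinset v)))
    {k : ℕ} (σ : G.indepFace (k+1))
    (hgood : ∀ v ∈ S, (σ.1 ∩ G.neighborFinset v).Nonempty) :
    S.card ≤ (σ.1 ∩ S.biUnion (fun v => G.neighborFinset v)).card := by
  classical
  apply Finset.card_le_card_of_injOn
    (fun v => if h : (σ.1 ∩ G.neighborFinset v).Nonempty then h.choose else v)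
  · intro v hv
    have h := hgood v hv
    dsimp only
    rw [dif_pos h]
    have hc := h.choose_spec
    rw [Finset.mem_inter] at hc
    exact Finset.mem_inter.mpr ⟨hc.1,
      Finset.mem_biUnion.mpr ⟨v, hv, hc.2⟩⟩
  · intro u hu v hv huv
    replace hu : u ∈ S := hu
    replace hv : v ∈ S := hv
    by_contra hne
    have hu' := (hgood u hu).choose_spec
    have hv' := (hgood v hv).choose_spec
    rw [Finset.mem_inter] at hu' hv'
    simp only [] at huv
    rw [dif_pos (hgood u hu), dif_pos (hgood v hv)] at huv
    have hdisj := hS u hu v hv hne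
    exact (Finset.disjoint_left.mp hdisj
        (Finset.mem_insert_of_mem hu'.2))
      (Finset.mem_insert_of_mem (huv ▸ hv'.2))

lemma card_good_le (S : Finset V)
    (hS : ∀ u ∈ S, ∀ v ∈ S, u ≠ v →
      Disjoint (insert u (G.neighborFinset u)) (insert v (G.neighborFinset v)))
    (k : ℕ) :
    Fintype.card {σ : G.indepFace (k+1) // ∀ v ∈ S, (σ.1 ∩ G.neighborFinset v).Nonempty}
      ≤ ∑ m ∈ Finset.Icc S.card (k + 1),
          Nat.choose (∑ v ∈ S, G.degree v) m *
            Nat.choose (Fintype.card V - ∑ v ∈ S, G.degree v) (k + 1 - m) := by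
  classical
  set A : Finset V := S.biUnion (fun v => G.neighborFinset v) with hA
  have hAcard : A.card = ∑ v ∈ S, G.degree v := by
    rw [hA, Finset.card_biUnion]
    · exact Finset.sum_congr rfl fun v _ => G.card_neighborFinset_eq_degree v
    · intro u hu v hv huv
      exact Finset.disjoint_of_subset_left (Finset.subset_insert _ _)
        (Finset.disjoint_of_subset_right (Finset.subset_insert _ _) (hS u hu v hv huv))
  set Bset : Finset (Finset V × Finset V) := (Finset.Icc S.card (k+1)).biUnion
    (fun m => (A.powersetCard m) ×ˢ ((Aᶜ).powersetCard (k+1-m))) with hB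
  have hstep : Fintype.card
      {σ : G.indepFace (k+1) // ∀ v ∈ S, (σ.1 ∩ G.neighborFinset v).Nonempty}
      ≤ Bset.card := by
    have hinj := Fintype.card_le_of_injective
      (f := fun σp : {σ : G.indepFace (k+1) // ∀ v ∈ S, (σ.1 ∩ G.neighborFinset v).Nonempty} =>
        (⟨(σp.1.1 ∩ A, σp.1.1 \ A), by
          apply Finset.mem_biUnion.mpr
          refine ⟨(σp.1.1 ∩ A).card, ?_, ?_⟩
          · rw [Finset.mem_Icc]
            constructor
            · exact good_witness G S hS σp.1 σp.2
            · calc (σp.1.1 ∩ A).card ≤ σp.1.1.card := Finset.card_le_card Finset.inter_subset_left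
                _ = k+1 := σp.1.2.1
          · rw [Finset.mem_product]
            constructor
            · exact Finset.mem_powersetCard.mpr ⟨Finset.inter_subset_right, rfl⟩
            · refine Finset.mem_powersetCard.mpr ⟨?_, ?_⟩
              · intro x hx
                exact Finset.mem_compl.mpr (Finset.mem_sdiff.mp hx).2
              · show (σp.1.1 \ A).card = k + 1 - (σp.1.1 ∩ A).card
                have h1 := Finset.card_inter_add_card_sdiff σp.1.1 A
                have h2 := σp.1.2.1
                omega⟩ : {p : Finset V × Finset V // p ∈ Bset})) ?_
    · rwa [Fintype.card_coe] at hinj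
    · intro σp τp h
      have hpair := Subtype.ext_iff.mp h
      have h1 : σp.1.1 ∩ A = τp.1.1 ∩ A := congrArg Prod.fst hpair
      have h2 : σp.1.1 \ A = τp.1.1 \ A := congrArg Prod.snd hpair
      apply Subtype.ext; apply Subtype.ext
      ext x
      constructor
      · intro hx
        by_cases hxA : x ∈ A
        · have : x ∈ τp.1.1 ∩ A := h1 ▸ Finset.mem_inter.mpr ⟨hx, hxA⟩
          exact (Finset.mem_inter.mp this).1
        · have : x ∈ τp.1.1 \ A := h2 ▸ Finset.mem_sdiff.mpr ⟨hx, hxA⟩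
          exact (Finset.mem_sdiff.mp this).1
      · intro hx
        by_cases hxA : x ∈ A
        · have : x ∈ σp.1.1 ∩ A := h1 ▸ Finset.mem_inter.mpr ⟨hx, hxA⟩
          exact (Finset.mem_inter.mp this).1
        · have : x ∈ σp.1.1 \ A := h2 ▸ Finset.mem_sdiff.mpr ⟨hx, hxA⟩
          exact (Finset.mem_sdiff.mp this).1
  refine le_trans hstep (le_trans (Finset.card_biUnion_le) ?_)
  apply Finset.sum_le_sum
  intro m _
  rw [Finset.card_product, Finset.card_powersetCard, Finset.card_powersetCard,
    hAcard, Finset.card_compl, hAcard]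

end IndepPacking
end

/-- Let `S ⊆ V` be a neighborhood packing of `G` (the closed neighborhoods
of the vertices of `S` are pairwise disjoint), and `deg S = ∑_{v ∈ S} deg v`. Then for all
`k ≥ 0`,
`dim H̃_k(I(G); ℝ) ≤ ∑_{m = |S|}^{k+1} C(deg S, m) · C(|V| - deg S, k + 1 - m)`.
In particular, `H̃_k(I(G); ℝ) = 0` for all `k ≤ |S| - 2`. -/
theorem betti_indep_le_of_packing (G : SimpleGraph V) [DecidableRel G.Adj] (S : Finset V)
    (hS : ∀ u ∈ S, ∀ v ∈ S, u ≠ v →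
      Disjoint (insert u (G.neighborFinset u)) (insert v (G.neighborFinset v))) :
    (∀ k : ℕ, G.indepHomologyDim k ≤
      ∑ m ∈ Finset.Icc S.card (k + 1),
        Nat.choose (∑ v ∈ S, G.degree v) m *
          Nat.choose (Fintype.card V - ∑ v ∈ S, G.degree v) (k + 1 - m)) ∧
    (∀ k : ℕ, k + 2 ≤ S.card → G.indepHomologyDim k = 0) := by
  classical
  have main : ∀ k : ℕ,
      Module.finrank ℝ (LinearMap.ker (G.indepBoundary k).mulVecLin)
        ≤ Fintype.card {σ : G.indepFace (k+1) // ∀ v ∈ S, (σ.1 ∩ G.neighborFinset v).Nonempty}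
          + Module.finrank ℝ (LinearMap.range (G.indepBoundary (k+1)).mulVecLin) := by
    intro k
    set K := LinearMap.ker (G.indepBoundary k).mulVecLin with hK
    set R := LinearMap.range (G.indepBoundary (k+1)).mulVecLin with hR
    set W := IndepPacking.suppSubmodule (G.indepFace (k+1))
      (fun σ => ∀ v ∈ S, (σ.1 ∩ G.neighborFinset v).Nonempty) with hW
    set C := IndepPacking.suppSubmodule (G.indepFace (k+1))
      (fun σ => ¬ ∀ v ∈ S, (σ.1 ∩ G.neighborFinset v).Nonempty) with hC
    have hRK : R ≤ K := by
      rintro x ⟨c, rfl⟩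
      rw [LinearMap.mem_ker, Matrix.mulVecLin_apply, Matrix.mulVecLin_apply,
        IndepPacking.boundary_sq]
    have hKB : K ⊓ (C ⊔ R) = R := by
      apply le_antisymm
      · intro z hz
        obtain ⟨hzK, hzB⟩ := Submodule.mem_inf.mp hz
        obtain ⟨sv, hsv, r, hr, hzsum⟩ := Submodule.mem_sup.mp hzB
        obtain ⟨c, hc⟩ := hr
        rw [Matrix.mulVecLin_apply] at hc
        have hzK' : (G.indepBoundary k).mulVec z = 0 := by
          have h := hzK
          rw [hK, LinearMap.mem_ker, Matrix.mulVecLin_apply] at h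
          exact h
        have hsv0 : (G.indepBoundary k).mulVec sv = 0 := by
          have hsveq : sv = z - r := by rw [← hzsum]; abel
          rw [hsveq, Matrix.mulVec_sub, hzK', ← hc, IndepPacking.boundary_sq, sub_self]
        obtain ⟨c', hc'⟩ := IndepPacking.acyclic G S hS k S (subset_refl S) sv hsv0
          (fun σ hg => hsv σ (not_not_intro hg))
        rw [LinearMap.mem_range]
        refine ⟨c' + c, ?_⟩
        rw [Matrix.mulVecLin_apply, Matrix.mulVec_add, hc', hc, hzsum]
      · exact le_inf hRK le_sup_right
    have htop : W ⊔ (C ⊔ R) = ⊤ := by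
      rw [eq_top_iff, ← IndepPacking.suppSubmodule_sup (G.indepFace (k+1))
        (fun σ => ∀ v ∈ S, (σ.1 ∩ G.neighborFinset v).Nonempty)]
      exact sup_le_sup le_rfl le_sup_left
    have e1 := Submodule.finrank_sup_add_finrank_inf_eq K (C ⊔ R)
    have e2 := Submodule.finrank_sup_add_finrank_inf_eq W (C ⊔ R)
    have hWle : Module.finrank ℝ W
        ≤ Fintype.card {σ : G.indepFace (k+1) // ∀ v ∈ S, (σ.1 ∩ G.neighborFinset v).Nonempty} :=
      IndepPacking.suppSubmodule_finrank_le _ _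
    have hmono : Module.finrank ℝ ↥(K ⊔ (C ⊔ R)) ≤ Module.finrank ℝ ↥(W ⊔ (C ⊔ R)) := by
      rw [htop]
      exact Submodule.finrank_mono le_top
    rw [hKB] at e1
    omega
  constructor
  · intro k
    have h1 := main k
    have h2 := IndepPacking.card_good_le G S hS k
    unfold SimpleGraph.indepHomologyDim
    omega
  · intro k hk
    have h1 := main k
    have hcard : Fintype.card
        {σ : G.indepFace (k+1) // ∀ v ∈ S, (σ.1 ∩ G.neighborFinset v).Nonempty} = 0 := by
      rw [Fintype.card_eq_zero_iff]
      refine ⟨fun σp => ?_⟩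
      have hw := IndepPacking.good_witness G S hS σp.1 σp.2
      have h2 : (σp.1.1 ∩ S.biUnion (fun v => G.neighborFinset v)).card ≤ k+1 :=
        le_trans (Finset.card_le_card Finset.inter_subset_left) (le_of_eq σp.1.2.1)
      omega
    unfold SimpleGraph.indepHomologyDim
    omega
end

section
/- Let $M\in\mathbb{C}^{n\times n}$ be Hermitian and $1\le k\le n$. Then the sum of the $k$ largest eigenvalues of $M$ is at most $\max_{\sigma}\big(\sum_{i\in\sigma}M_{i,i}+\sum_{i\in\sigma, j\notin\sigma}|M_{i,j}|\big)$, where the maximum is over all $k$-element subsets $\sigma$ of $\{1,\ldots,n\}$. -/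
open Matrix Polynomial


lemma merris_bridge {k : ℕ} (A : Matrix (Fin k) (Fin k) ℂ) (w c : Fin k → ℂ) :
    ∑ m, w m * (A.updateCol m c).det = ∑ a, c a * (A.updateRow a w).det := by
  have h1 : ∀ m, (A.updateCol m c).det = (A.adjugate *ᵥ c) m := by
    intro m
    rw [← Matrix.cramer_eq_adjugate_mulVec]
    rfl
  have h2 : ∀ a, (A.updateRow a w).det = ((A.adjugate)ᵀ *ᵥ w) a := by
    intro a
    rw [Matrix.adjugate_transpose, ← Matrix.cramer_eq_adjugate_mulVec,
      Matrix.cramer_transpose_apply]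
  simp only [h1, h2, Matrix.mulVec, dotProduct, Matrix.transpose_apply,
    Finset.mul_sum]
  rw [Finset.sum_comm]
  apply Finset.sum_congr rfl
  intro a _
  apply Finset.sum_congr rfl
  intro m _
  ring

/-- Key identity: the "additive compound" eigen-relation for minors. -/
lemma merris_key {n k : ℕ} (M : Matrix (Fin n) (Fin n) ℂ) (W : Matrix (Fin n) (Fin k) ℂ)
    (ν : Fin k → ℂ) (hW : M * W = W * Matrix.diagonal ν) (r : Fin k → Fin n) :
    (∑ m, ν m) * (W.submatrix r id).det
      = ∑ a, ∑ l, M (r a) l * (W.submatrix (Function.update r a l) id).det := by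
  classical
  set A := W.submatrix r id with hA
  have col : ∀ m a, (M * W) (r a) m = ν m * A a m := by
    intro m a
    rw [hW, Matrix.mul_diagonal]
    simp [hA, mul_comm]
  have lhs : ∀ m, (A.updateCol m (fun a => (M * W) (r a) m)).det = ν m * A.det := by
    intro m
    have hcol : (fun a => (M * W) (r a) m) = ν m • (fun a => A a m) := by
      funext a; simp [col, smul_eq_mul]
    rw [hcol, Matrix.det_updateCol_smul, Matrix.updateCol_eq_self]
  have rhs : ∀ m, (A.updateCol m (fun a => (M * W) (r a) m)).det
      = ∑ l, W l m * (A.updateCol m (fun a => M (r a) l)).det := by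
    intro m
    have hv : (fun a => (M * W) (r a) m) = ∑ l, W l m • (fun a => M (r a) l) := by
      funext a
      simp [Matrix.mul_apply, Finset.sum_apply, mul_comm]
    have : (A.updateCol m (fun a => (M * W) (r a) m)).det
        = Matrix.cramer A (∑ l, W l m • fun a => M (r a) l) m := by
      rw [← hv]; rfl
    rw [this, map_sum]
    simp only [Finset.sum_apply]
    apply Finset.sum_congr rfl
    intro l _
    rw [LinearMap.map_smul]
    simp [Matrix.cramer_apply, smul_eq_mul]
  have upd : ∀ (a : Fin k) (l : Fin n),
      A.updateRow a (fun m => W l m) = W.submatrix (Function.update r a l) id := by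
    intro a l
    ext a' m
    rcases eq_or_ne a' a with h | h
    · subst h; simp
    · simp [Matrix.updateRow_ne h, Function.update_of_ne h, hA]
  calc (∑ m, ν m) * A.det = ∑ m, ν m * A.det := by rw [Finset.sum_mul]
    _ = ∑ m, (A.updateCol m (fun a => (M * W) (r a) m)).det := by
        simp only [lhs]
    _ = ∑ m, ∑ l, W l m * (A.updateCol m (fun a => M (r a) l)).det := by
        simp only [rhs]
    _ = ∑ l, ∑ m, W l m * (A.updateCol m (fun a => M (r a) l)).det := Finset.sum_comm
    _ = ∑ l, ∑ a, M (r a) l * (A.updateRow a (fun m => W l m)).det := by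
        apply Finset.sum_congr rfl
        intro l _
        exact merris_bridge A (fun m => W l m) (fun a => M (r a) l)
    _ = ∑ l, ∑ a, M (r a) l * (W.submatrix (Function.update r a l) id).det := by
        simp only [upd]
    _ = ∑ a, ∑ l, M (r a) l * (W.submatrix (Function.update r a l) id).det := Finset.sum_comm

lemma merris_core {n k : ℕ} (hk1 : 1 ≤ k) (hkn : k ≤ n) (M : Matrix (Fin n) (Fin n) ℂ)
    (W : Matrix (Fin n) (Fin k) ℂ) (ν : Fin k → ℝ)
    (hW : M * W = W * Matrix.diagonal (fun m => (ν m : ℂ)))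
    (hne : ∃ r : Fin k → Fin n, (W.submatrix r id).det ≠ 0) :
    ∑ m, ν m ≤ ((Finset.univ : Finset (Fin n)).powersetCard k).sup'
        (Finset.powersetCard_nonempty.mpr (by simpa using hkn))
        (fun σ => (∑ i ∈ σ, (M i i).re) +
          ∑ i ∈ σ, ∑ j ∈ σᶜ, ‖M i j‖) := by
  classical
  have hn : 0 < n := hk1.trans hkn
  haveI : Nonempty (Fin n) := Fin.pos_iff_nonempty.mp hn
  set d : (Fin k → Fin n) → ℂ := fun r => (W.submatrix r id).det with hd
  obtain ⟨r0, hr0max⟩ := Finite.exists_max (fun r : Fin k → Fin n => ‖d r‖)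
  obtain ⟨r1, hr1⟩ := hne
  have hd0 : d r0 ≠ 0 := by
    intro h
    apply hr1
    have := hr0max r1
    rw [h, norm_zero] at this
    exact norm_eq_zero.mp (le_antisymm this (norm_nonneg _))
  have hinj : Function.Injective r0 := by
    intro a a' h
    by_contra hne'
    apply hd0
    refine Matrix.det_zero_of_row_eq hne' ?_
    funext m
    simp [Matrix.submatrix_apply, h]
  set σ : Finset (Fin n) := Finset.image r0 Finset.univ with hσ
  have hσcard : σ.card = k := by
    rw [hσ, Finset.card_image_of_injective _ hinj, Finset.card_univ, Fintype.card_fin]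
  have hσmem : σ ∈ (Finset.univ : Finset (Fin n)).powersetCard k :=
    Finset.mem_powersetCard.mpr ⟨Finset.subset_univ _, hσcard⟩
  have key := merris_key M W (fun m => (ν m : ℂ)) hW r0
  -- split the inner sum over σ and σᶜ
  have split : ∀ a : Fin k,
      ∑ l, M (r0 a) l * d (Function.update r0 a l)
        = M (r0 a) (r0 a) * d r0 + ∑ l ∈ σᶜ, M (r0 a) l * d (Function.update r0 a l) := by
    intro a
    have hsplit : ∑ l, M (r0 a) l * d (Function.update r0 a l)
        = (∑ l ∈ σ, M (r0 a) l * d (Function.update r0 a l))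
          + ∑ l ∈ σᶜ, M (r0 a) l * d (Function.update r0 a l) :=
      (Finset.sum_add_sum_compl σ _).symm
    rw [hsplit]
    congr 1
    rw [hσ, Finset.sum_image (fun x _ y _ h => hinj h)]
    rw [Finset.sum_eq_single a]
    · rw [Function.update_eq_self]
    · intro a' _ ha'
      have : d (Function.update r0 a (r0 a')) = 0 := by
        refine Matrix.det_zero_of_row_eq (show a ≠ a' from fun h => ha' h.symm) ?_
        funext m
        simp [Matrix.submatrix_apply, Function.update_self,
          Function.update_of_ne (show a' ≠ a from ha')]
      rw [this, mul_zero]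
    · intro h
      exact absurd (Finset.mem_univ a) h
  set E : ℂ := ∑ a, ∑ l ∈ σᶜ, M (r0 a) l * d (Function.update r0 a l) with hE
  have key2 : ((∑ m, ν m : ℝ) : ℂ) * d r0 = (∑ a, M (r0 a) (r0 a)) * d r0 + E := by
    push_cast
    rw [key]
    simp only [hd] at split ⊢
    simp only [split]
    rw [Finset.sum_add_distrib, Finset.sum_mul]
  set R : ℝ := ∑ a, ∑ l ∈ σᶜ, ‖M (r0 a) l‖ with hR
  have hEbound : ‖E‖ ≤ R * ‖d r0‖ := by
    calc ‖E‖ ≤ ∑ a, ‖∑ l ∈ σᶜ, M (r0 a) l * d (Function.update r0 a l)‖ :=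
          norm_sum_le _ _
      _ ≤ ∑ a, ∑ l ∈ σᶜ, ‖M (r0 a) l * d (Function.update r0 a l)‖ :=
          Finset.sum_le_sum (fun a _ => norm_sum_le _ _)
      _ ≤ ∑ a, ∑ l ∈ σᶜ, ‖M (r0 a) l‖ * ‖d r0‖ := by
          apply Finset.sum_le_sum
          intro a _
          apply Finset.sum_le_sum
          intro l _
          rw [norm_mul]
          exact mul_le_mul_of_nonneg_left (hr0max _) (norm_nonneg _)
      _ = R * ‖d r0‖ := by rw [hR, Finset.sum_mul]; simp [Finset.sum_mul]
  have hdiff : ‖((∑ m, ν m : ℝ) : ℂ) - ∑ a, M (r0 a) (r0 a)‖ ≤ R := by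
    have heq : (((∑ m, ν m : ℝ) : ℂ) - ∑ a, M (r0 a) (r0 a)) * d r0 = E := by
      rw [sub_mul, key2]; ring
    have habs : ‖((∑ m, ν m : ℝ) : ℂ) - ∑ a, M (r0 a) (r0 a)‖ * ‖d r0‖
        ≤ R * ‖d r0‖ := by
      rw [← norm_mul, heq]; exact hEbound
    have hpos : 0 < ‖d r0‖ := (norm_pos_iff.mpr hd0)
    exact le_of_mul_le_mul_right habs hpos
  have hre : ∑ m, ν m - ∑ a, (M (r0 a) (r0 a)).re ≤ R := by
    have : (((∑ m, ν m : ℝ) : ℂ) - ∑ a, M (r0 a) (r0 a)).re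
        = ∑ m, ν m - ∑ a, (M (r0 a) (r0 a)).re := by
      simp [Complex.sub_re, Complex.re_sum]
    calc ∑ m, ν m - ∑ a, (M (r0 a) (r0 a)).re
        = (((∑ m, ν m : ℝ) : ℂ) - ∑ a, M (r0 a) (r0 a)).re := this.symm
      _ ≤ ‖((∑ m, ν m : ℝ) : ℂ) - ∑ a, M (r0 a) (r0 a)‖ := Complex.re_le_norm _
      _ ≤ R := hdiff
  have hfinal : ∑ m, ν m ≤ (∑ i ∈ σ, (M i i).re) + ∑ i ∈ σ, ∑ j ∈ σᶜ, ‖M i j‖ := by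
    have h1 : ∑ i ∈ σ, (M i i).re = ∑ a, (M (r0 a) (r0 a)).re := by
      rw [hσ, Finset.sum_image (fun x _ y _ h => hinj h)]
    have h2 : ∑ i ∈ σ, ∑ j ∈ σᶜ, ‖M i j‖ = R := by
      rw [hσ, hR, Finset.sum_image (fun x _ y _ h => hinj h)]
    rw [h1, h2]
    linarith
  exact hfinal.trans (Finset.le_sup'
    (f := fun σ => (∑ i ∈ σ, (M i i).re) + ∑ i ∈ σ, ∑ j ∈ σᶜ, ‖M i j‖) hσmem)


lemma merris_univ_val_succ {n : ℕ} {α : Type*} (f : Fin (n+1) → α) (p : Fin (n+1)) :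
    Multiset.map f Finset.univ.val
      = f p ::ₘ Multiset.map (fun i => f (p.succAbove i)) Finset.univ.val := by
  rw [Fin.univ_succAbove n p, Finset.cons_val, Multiset.map_cons, Finset.map_val,
    Multiset.map_map]
  rfl

lemma merris_exists_perm {α : Type*} : ∀ {n : ℕ} (f g : Fin n → α),
    Multiset.map f Finset.univ.val = Multiset.map g Finset.univ.val →
    ∃ e : Equiv.Perm (Fin n), ∀ i, f i = g (e i) := by
  intro n
  induction n with
  | zero => exact fun f g _ => ⟨Equiv.refl _, fun i => i.elim0⟩
  | succ n ih =>
    intro f g h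
    have h0 : f 0 ∈ Multiset.map g Finset.univ.val := by
      rw [← h]
      exact Multiset.mem_map_of_mem f (Finset.mem_univ (0 : Fin (n+1)))
    obtain ⟨j, _, hj⟩ := Multiset.mem_map.mp h0
    have hsplit : f 0 ::ₘ Multiset.map (fun i => f ((0 : Fin (n+1)).succAbove i)) Finset.univ.val
        = f 0 ::ₘ Multiset.map (fun i => g (j.succAbove i)) Finset.univ.val := by
      rw [← merris_univ_val_succ f 0, h, merris_univ_val_succ g j, hj]
    have htail := (Multiset.cons_inj_right _).mp hsplit
    obtain ⟨e', he'⟩ := ih _ _ htail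
    refine ⟨(finSuccEquiv' 0).trans ((e'.optionCongr).trans (finSuccEquiv' j).symm), ?_⟩
    intro i
    induction i using Fin.cases with
    | zero =>
      simp [finSuccEquiv'_symm_none, hj.symm]
    | succ i' =>
      have h1 : finSuccEquiv' (0 : Fin (n+1)) i'.succ = some i' := by
        rw [← Fin.zero_succAbove i', finSuccEquiv'_succAbove]
      simp only [Equiv.trans_apply, h1, Equiv.optionCongr_apply, Option.map_some,
        finSuccEquiv'_symm_some]
      have := he' i'
      simpa [Fin.zero_succAbove] using this


lemma merris_charpoly_conj {n : ℕ} (U D : Matrix (Fin n) (Fin n) ℂ)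
    (h1 : U * star U = 1) : (U * D * star U).charpoly = D.charpoly := by
  classical
  set mp : Matrix (Fin n) (Fin n) ℂ →+* Matrix (Fin n) (Fin n) ℂ[X] :=
    (C : ℂ →+* ℂ[X]).mapMatrix with hmp
  have key : charmatrix (U * D * star U) = mp U * charmatrix D * mp (star U) := by
    show Matrix.scalar (Fin n) (X : ℂ[X]) - mp (U * D * star U)
        = mp U * (Matrix.scalar (Fin n) (X : ℂ[X]) - mp D) * mp (star U)
    have hc : mp U * Matrix.scalar (Fin n) (X : ℂ[X]) = Matrix.scalar (Fin n) (X : ℂ[X]) * mp U :=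
      (Matrix.scalar_commute (X : ℂ[X]) (fun r' => Commute.all _ _) (mp U)).symm
    have e1 : Matrix.scalar (Fin n) (X : ℂ[X]) * mp U * mp (star U)
        = Matrix.scalar (Fin n) (X : ℂ[X]) := by
      rw [mul_assoc, ← _root_.map_mul, h1, _root_.map_one, mul_one]
    have e2 : mp U * mp D * mp (star U) = mp (U * D * star U) := by
      rw [← _root_.map_mul, ← _root_.map_mul]
    rw [mul_sub, sub_mul, hc, e1, e2]
  rw [Matrix.charpoly, key, det_mul, det_mul, Matrix.charpoly]
  have hd : (mp U).det * (mp (star U)).det = 1 := by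
    rw [← det_mul, ← _root_.map_mul, h1, _root_.map_one, det_one]
  calc (mp U).det * (charmatrix D).det * (mp (star U)).det
      = (charmatrix D).det * ((mp U).det * (mp (star U)).det) := by ring
    _ = (charmatrix D).det := by rw [hd, mul_one]

lemma merris_charpoly_diagonal {n : ℕ} (d : Fin n → ℂ) :
    (Matrix.diagonal d).charpoly = ∏ i, (X - C (d i)) := by
  rw [Matrix.charpoly_of_upperTriangular _ (Matrix.blockTriangular_diagonal d)]
  simp

/-- **Merris.** Let `M` be an `n × n` Hermitian complex matrix with (real)
eigenvalues `μ 0 ≥ μ 1 ≥ ⋯ ≥ μ (n-1)` (with multiplicity). Then for `1 ≤ k ≤ n`, the sum of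
the `k` largest eigenvalues of `M` satisfies
`∑_{i < k} μ i ≤ max_{σ, |σ| = k} (∑_{i ∈ σ} M i i + ∑_{i ∈ σ, j ∉ σ} |M i j|)`. -/
theorem merris_gersgorin {n : ℕ} (M : Matrix (Fin n) (Fin n) ℂ) (hM : M.IsHermitian)
    (k : ℕ) (hk1 : 1 ≤ k) (hkn : k ≤ n)
    (μ : Fin n → ℝ) (hμ : Antitone μ)
    (hc : M.charpoly = ∏ i, (X - C (μ i : ℂ))) :
    ∑ i ∈ Finset.univ.filter (fun i : Fin n => (i : ℕ) < k), μ i ≤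
      ((Finset.univ : Finset (Fin n)).powersetCard k).sup'
        (Finset.powersetCard_nonempty.mpr (by simpa using hkn))
        (fun σ => (∑ i ∈ σ, (M i i).re) +
          ∑ i ∈ σ, ∑ j ∈ σᶜ, ‖M i j‖) := by
  classical
  set eig : Fin n → ℝ := hM.eigenvalues with heig
  set U : Matrix (Fin n) (Fin n) ℂ := (hM.eigenvectorUnitary : Matrix (Fin n) (Fin n) ℂ)
    with hUdef
  have hU1 : U * star U = 1 := Matrix.mem_unitaryGroup_iff.mp hM.eigenvectorUnitary.2
  have hU2 : star U * U = 1 := Matrix.mem_unitaryGroup_iff'.mp hM.eigenvectorUnitary.2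
  have hspec : M = U * Matrix.diagonal (fun i => (eig i : ℂ)) * star U := by
    have := hM.spectral_theorem
    rw [Unitary.conjStarAlgAut_apply] at this
    exact this
  -- equality of charpolys, hence of eigenvalue multisets
  have hcp : (∏ i, (X - C ((μ i : ℝ) : ℂ))) = ∏ i, (X - C ((eig i : ℝ) : ℂ)) := by
    rw [← hc]
    conv_lhs => rw [hspec]
    rw [merris_charpoly_conj _ _ hU1, merris_charpoly_diagonal]
  have hroots : Multiset.map μ Finset.univ.val = Multiset.map eig Finset.univ.val := by
    have conv1 : ∀ h : Fin n → ℝ, (∏ i, (X - C ((h i : ℝ) : ℂ)))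
        = ((Multiset.map (fun i => ((h i : ℝ) : ℂ)) Finset.univ.val).map
            (fun a => X - C a)).prod := by
      intro h
      rw [Multiset.map_map]
      rfl
    have h2 := congrArg Polynomial.roots hcp
    rw [conv1 μ, conv1 eig, Polynomial.roots_multiset_prod_X_sub_C,
      Polynomial.roots_multiset_prod_X_sub_C] at h2
    have h3 : Multiset.map (Complex.ofReal) (Multiset.map μ Finset.univ.val)
        = Multiset.map (Complex.ofReal) (Multiset.map eig Finset.univ.val) := by
      rw [Multiset.map_map, Multiset.map_map]
      exact h2
    exact (Multiset.map_eq_map Complex.ofReal_injective).mp h3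
  obtain ⟨e, he⟩ := merris_exists_perm μ eig hroots
  -- the eigenvector submatrix
  set ι : Fin k → Fin n := fun m => e (Fin.castLE hkn m) with hι
  have hιinj : Function.Injective ι := fun a b h =>
    Fin.castLE_injective hkn (e.injective h)
  set W : Matrix (Fin n) (Fin k) ℂ := U.submatrix id ι with hWdef
  set ν : Fin k → ℝ := fun m => μ (Fin.castLE hkn m) with hν
  have hνeig : ∀ m, ν m = eig (ι m) := fun m => he _
  have hMU : M * U = U * Matrix.diagonal (fun i => (eig i : ℂ)) := by
    conv_lhs => rw [hspec]
    rw [mul_assoc, mul_assoc]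
    rw [hU2, mul_one]
  have hW : M * W = W * Matrix.diagonal (fun m => (ν m : ℂ)) := by
    ext i m
    have hent := congrFun (congrFun hMU i) (ι m)
    have lhs : (M * W) i m = (M * U) i (ι m) := by
      simp [Matrix.mul_apply, hWdef, Matrix.submatrix_apply]
    have rhs : (W * Matrix.diagonal (fun m => (ν m : ℂ))) i m
        = U i (ι m) * (ν m : ℂ) := by
      rw [Matrix.mul_diagonal]
      simp [hWdef]
    rw [lhs, rhs, hent, Matrix.mul_diagonal, hνeig]
  -- existence of a nonzero minor
  have hne : ∃ r : Fin k → Fin n, (W.submatrix r id).det ≠ 0 := by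
    have hleft : Wᴴ * W = 1 := by
      ext m m'
      have hent : (Wᴴ * W) m m' = (star U * U) (ι m) (ι m') := by
        rw [Matrix.star_eq_conjTranspose]
        simp [Matrix.mul_apply, Matrix.conjTranspose_apply, hWdef, Matrix.submatrix_apply]
      rw [hent, hU2]
      by_cases h : m = m'
      · subst h; simp
      · rw [Matrix.one_apply_ne (fun hh => h (hιinj hh)), Matrix.one_apply_ne h]
    have hright : Wᵀ * Wᴴᵀ = 1 := by
      rw [← Matrix.transpose_mul, hleft, Matrix.transpose_one]
    have hsurj : Function.Surjective (Wᵀ.mulVecLin) := by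
      intro x
      refine ⟨Wᴴᵀ *ᵥ x, ?_⟩
      rw [Matrix.mulVecLin_apply, Matrix.mulVec_mulVec, hright, Matrix.one_mulVec]
    have hspan : Submodule.span ℂ (Set.range (fun i => W i)) = ⊤ := by
      have hr := Matrix.range_mulVecLin Wᵀ
      rw [Matrix.col, Matrix.transpose_transpose] at hr
      rw [show Set.range (fun i => W i) = Set.range W from rfl, ← hr]
      exact LinearMap.range_eq_top.mpr hsurj
    obtain ⟨b, hbsub, hbspan, hbli⟩ := exists_linearIndependent ℂ (Set.range (fun i => W i))
    rw [hspan] at hbspan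
    haveI : Fintype b := (hbli.setFinite).fintype
    let B : Module.Basis b ℂ (Fin k → ℂ) := Module.Basis.mk hbli
      (by rw [Subtype.range_coe]; rw [hbspan])
    have hcard : Fintype.card b = k := by
      have h1 := Module.finrank_eq_card_basis B
      rw [Module.finrank_fin_fun] at h1
      exact h1.symm
    let eqv : Fin k ≃ b := (Fintype.equivFinOfCardEq hcard).symm
    have hch : ∀ v : b, ∃ i : Fin n, W i = (v : Fin k → ℂ) := fun v => hbsub v.2
    choose idx hidx using hch
    set r : Fin k → Fin n := fun a => idx (eqv a) with hr
    have hrow : ∀ a, (W.submatrix r id) a = ((eqv a : b) : Fin k → ℂ) := by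
      intro a
      funext m
      rw [← hidx (eqv a)]
      rfl
    have hli2 : LinearIndependent ℂ (fun a => (W.submatrix r id) a) := by
      rw [show (fun a => (W.submatrix r id) a)
          = (fun v : b => (v : Fin k → ℂ)) ∘ eqv from funext hrow]
      exact hbli.comp eqv eqv.injective
    refine ⟨r, ?_⟩
    have hunit := Matrix.linearIndependent_rows_iff_isUnit.mp hli2
    exact ((Matrix.isUnit_iff_isUnit_det _).mp hunit).ne_zero
  have hcore := merris_core hk1 hkn M W ν hW hne
  have hLHS : ∑ i ∈ Finset.univ.filter (fun i : Fin n => (i : ℕ) < k), μ i = ∑ m, ν m := by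
    have hset : Finset.univ.filter (fun i : Fin n => (i : ℕ) < k)
        = Finset.univ.map (Fin.castLEEmb hkn) := by
      ext i
      simp only [Finset.mem_filter, Finset.mem_univ, true_and, Finset.mem_map]
      constructor
      · intro h
        exact ⟨⟨(i : ℕ), h⟩, rfl⟩
      · rintro ⟨m, rfl⟩
        exact m.2
    rw [hset, Finset.sum_map]
    rfl
  rw [hLHS]
  exact hcore
end
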